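/- arXiv:1606.07799 — 5 statements merged into one kernel-verified Lean document; each statement's English description precedes it below -/
import Mathlib

section
/- Two finitely generated graded right A(f)-submodules of the graded quotient ring Q_gr(A(f)) are isomorphic as graded right A(f)-modules if and only if they have the same sequence of structure constants. -/
open Polynomial

noncomputable section

/-- `shiftp k d g = σ^d(g)`, i.e. `g(z + d)`, where `σ(z) = z + 1`. -/
def shiftp (k : Type) [Field k] (d : ℤ) (g : Polynomial k) : Polynomial k :=
  g.comp (X + C (d : k))

/-- The canonical `k[z]`-module generator of the degree-`d` component of `A(f)` inside
`Q_gr(A(f)) = k(z)[x,x⁻¹;σ]`:  `1` for `d ≥ 0` and `σ⁻¹(f)⋯σ^{d}(f)` for `d < 0`. -/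
def acoef (k : Type) [Field k] (f : Polynomial k) (d : ℤ) : Polynomial k :=
  if 0 ≤ d then 1 else ∏ i ∈ Finset.range (-d).toNat, shiftp k (-(i + 1)) f

/-- A finitely generated graded right `A(f)`-submodule `I = ⊕ᵢ (aᵢ)xⁱ` of the graded
quotient ring `Q_gr(A(f)) = k(z)[x,x⁻¹;σ]`, recorded by its coefficient sequence
`a : ℤ → k(z)` together with its sequence of structure constants
`c i = ` the monic generator of `(aᵢ aᵢ₊₁⁻¹) ⊆ k[z]`.
* `closed_x` expresses `(aᵢ)xⁱ · x ⊆ (aᵢ₊₁)xⁱ⁺¹`, i.e. `(aᵢ) ⊆ (aᵢ₊₁)`;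
* `closed_y` expresses `(aᵢ₊₁)xⁱ⁺¹ · y ⊆ (aᵢ)xⁱ`, i.e. `(aᵢ₊₁ σⁱ(f)) ⊆ (aᵢ)`;
* `fg` expresses that `I` is generated as a right `A(f)`-module by finitely many
  homogeneous elements `m x^d` (recorded as pairs `(d, m)`), using that the degree-`n`
  coefficient of `m x^d · A(f)` is the `k[z]`-ideal generated by `m·σ^d(acoef f (n-d))`. -/
structure GrSubmod (k : Type) [Field k] (f : Polynomial k) where
  a : ℤ → RatFunc k
  c : ℤ → Polynomial k
  nonzero : ∀ i, a i ≠ 0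
  closed_x : ∀ i, ∃ p : Polynomial k,
    a i = algebraMap (Polynomial k) (RatFunc k) p * a (i + 1)
  closed_y : ∀ i, ∃ p : Polynomial k,
    a (i + 1) * algebraMap (Polynomial k) (RatFunc k) (shiftp k i f) =
      algebraMap (Polynomial k) (RatFunc k) p * a i
  fg : ∃ s : Finset (ℤ × RatFunc k),
    (∀ q ∈ s, ∃ p : Polynomial k,
      q.2 = algebraMap (Polynomial k) (RatFunc k) p * a q.1) ∧
    ∀ (n : ℤ) (r : RatFunc k),
      (∃ p : Polynomial k, r = algebraMap (Polynomial k) (RatFunc k) p * a n) →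
      r ∈ Submodule.span (Polynomial k)
        ((fun q : ℤ × RatFunc k =>
          q.2 * algebraMap (Polynomial k) (RatFunc k) (shiftp k q.1 (acoef k f (n - q.1)))) '' s)
  monic : ∀ i, (c i).Monic
  gen : ∀ i, ∃ u : k, u ≠ 0 ∧
    a i = algebraMap (Polynomial k) (RatFunc k) (Polynomial.C u * c i) * a (i + 1)

/-- The degree-`n` component of `I = ⊕ᵢ(aᵢ)xⁱ`, as a set of coefficients: the `k[z]`-ideal
of `k(z)` generated by `aₙ`. -/
def comp (k : Type) [Field k] (a : ℤ → RatFunc k) (n : ℤ) : Set (RatFunc k) :=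
  {r | ∃ p : Polynomial k, r = algebraMap (Polynomial k) (RatFunc k) p * a n}

/-- `φ` is a graded right `A(f)`-module homomorphism of degree `0` from `I = ⊕(aᵢ)xⁱ` to
`J = ⊕(bᵢ)xⁱ`, recorded on coefficients: `φ n` maps the degree-`n` coefficient ideal of
`I` to that of `J`, is `k`-linear, and commutes with the right actions of `z`, `x`, and
`y` (on the degree-`n` component these are, respectively, coefficient multiplication by
`σⁿ(z) = z+n`, the identity inclusion `(aₙ) ⊆ (aₙ₊₁)`, and multiplication by
`σ^{n-1}(f)` landing in degree `n-1`). -/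
def IsGrHom (k : Type) [Field k] (f : Polynomial k)
    (I J : GrSubmod k f) (φ : ℤ → RatFunc k → RatFunc k) : Prop :=
  (∀ n, Set.MapsTo (φ n) (comp k I.a n) (comp k J.a n)) ∧
  (∀ n, ∀ r ∈ comp k I.a n, ∀ r' ∈ comp k I.a n, φ n (r + r') = φ n r + φ n r') ∧
  (∀ n, ∀ r ∈ comp k I.a n, ∀ t : k, φ n (t • r) = t • φ n r) ∧
  (∀ n, ∀ r ∈ comp k I.a n,
    φ n (algebraMap (Polynomial k) (RatFunc k) (X + C (n : k)) * r) =
      algebraMap (Polynomial k) (RatFunc k) (X + C (n : k)) * φ n r) ∧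
  (∀ n, ∀ r ∈ comp k I.a n, φ (n + 1) r = φ n r) ∧
  (∀ n, ∀ r ∈ comp k I.a n,
    φ (n - 1) (r * algebraMap (Polynomial k) (RatFunc k) (shiftp k (n - 1) f)) =
      φ n r * algebraMap (Polynomial k) (RatFunc k) (shiftp k (n - 1) f))

section Aux

variable {k : Type} [Field k]

lemma aC (t : k) (r : RatFunc k) :
    algebraMap (Polynomial k) (RatFunc k) (C t) * r = t • r := by
  rw [RatFunc.smul_eq_C_mul, ← RatFunc.algebraMap_C]

lemma comp_mul {a : ℤ → RatFunc k} {n : ℤ} (p : Polynomial k) {r : RatFunc k}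
    (hr : r ∈ comp k a n) :
    algebraMap (Polynomial k) (RatFunc k) p * r ∈ comp k a n := by
  obtain ⟨q, rfl⟩ := hr
  exact ⟨p * q, by rw [map_mul, mul_assoc]⟩

lemma phi_poly_mul {a : ℤ → RatFunc k} {φ : ℤ → RatFunc k → RatFunc k} {n : ℤ}
    (hadd : ∀ r ∈ comp k a n, ∀ r' ∈ comp k a n, φ n (r + r') = φ n r + φ n r')
    (hsmul : ∀ r ∈ comp k a n, ∀ t : k, φ n (t • r) = t • φ n r)
    (hz : ∀ r ∈ comp k a n,
      φ n (algebraMap (Polynomial k) (RatFunc k) (X + C (n : k)) * r) =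
        algebraMap (Polynomial k) (RatFunc k) (X + C (n : k)) * φ n r)
    (p : Polynomial k) {r : RatFunc k} (hr : r ∈ comp k a n) :
    φ n (algebraMap (Polynomial k) (RatFunc k) p * r) =
      algebraMap (Polynomial k) (RatFunc k) p * φ n r := by
  induction p using Polynomial.induction_on with
  | C t => rw [aC, aC, hsmul r hr]
  | add p q hp hq =>
      rw [map_add, add_mul, add_mul,
        hadd _ (comp_mul p hr) _ (comp_mul q hr), hp, hq]
  | monomial m t IH =>
      set s := algebraMap (Polynomial k) (RatFunc k) (C t * X ^ m) * r with hs
      have hsmem : s ∈ comp k a n := comp_mul _ hr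
      have hXs : algebraMap (Polynomial k) (RatFunc k) X * s ∈ comp k a n :=
        comp_mul _ hsmem
      have hCs : ((n : k)) • s ∈ comp k a n := by
        rw [← aC]; exact comp_mul _ hsmem
      have h1 := hz s hsmem
      have h2 : algebraMap (Polynomial k) (RatFunc k) (X + C (n : k)) * s =
          algebraMap (Polynomial k) (RatFunc k) X * s + ((n : k)) • s := by
        rw [map_add, add_mul, aC]
      have h3 : φ n (algebraMap (Polynomial k) (RatFunc k) X * s + ((n : k)) • s) =
          φ n (algebraMap (Polynomial k) (RatFunc k) X * s) + ((n : k)) • φ n s := by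
        rw [hadd _ hXs _ hCs, hsmul s hsmem]
      rw [h2, h3] at h1
      have h5 : algebraMap (Polynomial k) (RatFunc k) (X + C (n : k)) * φ n s =
          algebraMap (Polynomial k) (RatFunc k) X * φ n s + ((n : k)) • φ n s := by
        rw [map_add, add_mul, aC]
      rw [h5] at h1
      have h4 := add_right_cancel h1
      have h6 : algebraMap (Polynomial k) (RatFunc k) (C t * X ^ (m + 1)) * r =
          algebraMap (Polynomial k) (RatFunc k) X * s := by
        rw [hs]; simp only [map_mul, map_pow]; ring
      rw [h6, h4, IH]
      simp only [map_mul, map_pow]; ring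

/-- main generic version -/
lemma iso_iff_gen (f : Polynomial k) (I J : GrSubmod k f) :
    (∃ φ : ℤ → RatFunc k → RatFunc k,
      IsGrHom k f I J φ ∧
      ∀ n, Set.BijOn (φ n) (comp k I.a n) (comp k J.a n)) ↔
    ∀ i, I.c i = J.c i := by
  constructor
  · rintro ⟨φ, hhom, hbij⟩ i
    obtain ⟨hmaps, hadd, hsmul, hz, hincl, hy⟩ := hhom
    have hmem : ∀ n, I.a n ∈ comp k I.a n := fun n => ⟨1, by simp⟩
    have key : ∀ n, ∃ t : k, t ≠ 0 ∧
        φ n (I.a n) = algebraMap (Polynomial k) (RatFunc k) (C t) * J.a n := by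
      intro n
      obtain ⟨q, hq⟩ := hmaps n (hmem n)
      obtain ⟨r, hrmem, hr⟩ := (hbij n).2.2 (⟨1, by simp⟩ : J.a n ∈ comp k J.a n)
      obtain ⟨p, rfl⟩ := hrmem
      rw [phi_poly_mul (hadd n) (hsmul n) (hz n) p (hmem n), hq, ← mul_assoc,
        ← map_mul] at hr
      have h1 : algebraMap (Polynomial k) (RatFunc k) (p * q) = 1 :=
        mul_right_cancel₀ (J.nonzero n) (hr.trans (one_mul _).symm)
      have h2 : p * q = 1 := by
        apply IsFractionRing.injective (Polynomial k) (RatFunc k)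
        rw [map_one]; exact h1
      obtain ⟨t, htu, htq⟩ := Polynomial.isUnit_iff.mp
        (IsUnit.of_mul_eq_one (a := q) p (by rw [mul_comm]; exact h2))
      exact ⟨t, htu.ne_zero, by rw [htq]; exact hq⟩
    obtain ⟨u, hu, hIa⟩ := I.gen i
    obtain ⟨v, hv, hJa⟩ := J.gen i
    obtain ⟨t, ht, hφt⟩ := key i
    obtain ⟨t', ht', hφt'⟩ := key (i + 1)
    have e1 : φ i (I.a i) = φ (i + 1) (I.a i) := (hincl i _ (hmem i)).symm
    have e3 : φ (i + 1) (I.a i) =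
        algebraMap (Polynomial k) (RatFunc k) (C u * I.c i) * φ (i + 1) (I.a (i + 1)) := by
      calc φ (i + 1) (I.a i)
          = φ (i + 1) (algebraMap (Polynomial k) (RatFunc k) (C u * I.c i) * I.a (i + 1)) := by
            rw [← hIa]
        _ = _ := phi_poly_mul (hadd (i + 1)) (hsmul (i + 1)) (hz (i + 1)) _ (hmem (i + 1))
    have main : algebraMap (Polynomial k) (RatFunc k) (C u * I.c i * C t') * J.a (i + 1) =
        algebraMap (Polynomial k) (RatFunc k) (C t * (C v * J.c i)) * J.a (i + 1) := by
      have l1 : algebraMap (Polynomial k) (RatFunc k) (C u * I.c i * C t') * J.a (i + 1) =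
          φ i (I.a i) := by
        rw [e1, e3, hφt', map_mul]; ring
      have l2 : algebraMap (Polynomial k) (RatFunc k) (C t * (C v * J.c i)) * J.a (i + 1) =
          φ i (I.a i) := by
        rw [hφt, hJa, map_mul]; ring
      rw [l1, l2]
    have hpoly : C u * I.c i * C t' = C t * (C v * J.c i) :=
      IsFractionRing.injective (Polynomial k) (RatFunc k)
        (mul_right_cancel₀ (J.nonzero (i + 1)) main)
    have hpoly2 : C (u * t') * I.c i = C (t * v) * J.c i := by
      rw [C_mul, C_mul]; linear_combination hpoly
    have hl : u * t' = t * v := by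
      have h1 := congrArg leadingCoeff hpoly2
      rwa [leadingCoeff_mul, leadingCoeff_mul, leadingCoeff_C, leadingCoeff_C,
        (I.monic i).leadingCoeff, (J.monic i).leadingCoeff, mul_one, mul_one] at h1
    have hCne : (C (u * t') : Polynomial k) ≠ 0 := by
      simp [hu, ht']
    exact mul_left_cancel₀ hCne (by rw [hpoly2, hl])
  · intro hc
    have key : ∀ n : ℤ, ∃ t t' : k, t ≠ 0 ∧ t' ≠ 0 ∧
        algebraMap (Polynomial k) (RatFunc k) (C t) * (J.a 0 * I.a n) =
          algebraMap (Polynomial k) (RatFunc k) (C t') * (I.a 0 * J.a n) := by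
      intro n
      induction n using Int.induction_on with
      | zero => exact ⟨1, 1, one_ne_zero, one_ne_zero, by ring⟩
      | succ m ih =>
          obtain ⟨t, t', ht, ht', h⟩ := ih
          obtain ⟨u, hu, hIa⟩ := I.gen m
          obtain ⟨v, hv, hJa⟩ := J.gen m
          refine ⟨t * u, t' * v, mul_ne_zero ht hu, mul_ne_zero ht' hv, ?_⟩
          have hcne : algebraMap (Polynomial k) (RatFunc k) (I.c m) ≠ 0 :=
            RatFunc.algebraMap_ne_zero (I.monic m).ne_zero
          apply mul_left_cancel₀ hcne
          rw [hIa, hJa, ← hc m] at h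
          simp only [C_mul, map_mul] at h ⊢
          linear_combination h
      | pred m ih =>
          obtain ⟨t, t', ht, ht', h⟩ := ih
          obtain ⟨u, hu, hIa⟩ := I.gen (-(m : ℤ) - 1)
          obtain ⟨v, hv, hJa⟩ := J.gen (-(m : ℤ) - 1)
          have e : (-(m : ℤ) - 1) + 1 = -m := by ring
          rw [e] at hIa hJa
          refine ⟨t * v, t' * u, mul_ne_zero ht hv, mul_ne_zero ht' hu, ?_⟩
          rw [hIa, hJa]
          simp only [← hc, C_mul, map_mul]
          linear_combination (algebraMap (Polynomial k) (RatFunc k) (C u) *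
            algebraMap (Polynomial k) (RatFunc k) (C v) *
            algebraMap (Polynomial k) (RatFunc k) (I.c (-(m : ℤ) - 1))) * h
    have hmul : ∀ n : ℤ, ∃ s : k, s ≠ 0 ∧
        I.a n * (J.a 0 * (I.a 0)⁻¹) =
          algebraMap (Polynomial k) (RatFunc k) (C s) * J.a n := by
      intro n
      obtain ⟨t, t', ht, ht', h⟩ := key n
      refine ⟨t⁻¹ * t', by simp [ht, ht'], ?_⟩
      have hI0 := I.nonzero 0
      have hinv : algebraMap (Polynomial k) (RatFunc k) (C t⁻¹) *
          algebraMap (Polynomial k) (RatFunc k) (C t) = 1 := by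
        rw [← map_mul, ← C_mul, inv_mul_cancel₀ ht, C_1, map_one]
      have hi0 : (I.a 0)⁻¹ * I.a 0 = 1 := inv_mul_cancel₀ hI0
      apply mul_right_cancel₀ hI0
      rw [C_mul, map_mul]
      linear_combination (algebraMap (Polynomial k) (RatFunc k) (C t⁻¹)) * h -
        (J.a 0 * I.a n) * hinv + (I.a n * J.a 0) * hi0
    have hh0 : J.a 0 * (I.a 0)⁻¹ ≠ 0 :=
      mul_ne_zero (J.nonzero 0) (inv_ne_zero (I.nonzero 0))
    have hmapsTo : ∀ n, Set.MapsTo (fun r => r * (J.a 0 * (I.a 0)⁻¹))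
        (comp k I.a n) (comp k J.a n) := by
      rintro n r ⟨p, rfl⟩
      obtain ⟨s, hs, hmuln⟩ := hmul n
      exact ⟨p * C s, by rw [map_mul]; dsimp only; rw [mul_assoc, hmuln]; ring⟩
    refine ⟨fun _ r => r * (J.a 0 * (I.a 0)⁻¹), ⟨hmapsTo, ?_, ?_, ?_, ?_, ?_⟩, ?_⟩
    · intro n r _ r' _; dsimp only; ring
    · intro n r _ t; dsimp only; rw [smul_mul_assoc]
    · intro n r _; dsimp only; ring
    · intro n r _; rfl
    · intro n r _; dsimp only; ring
    · intro n
      refine ⟨hmapsTo n, ?_, ?_⟩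
      · intro r _ r' _ h
        exact mul_right_cancel₀ hh0 h
      · rintro r' ⟨q, rfl⟩
        obtain ⟨s, hs, hmuln⟩ := hmul n
        refine ⟨algebraMap (Polynomial k) (RatFunc k) (C s⁻¹ * q) * I.a n,
          ⟨C s⁻¹ * q, rfl⟩, ?_⟩
        have hinv : algebraMap (Polynomial k) (RatFunc k) (C s⁻¹) *
            algebraMap (Polynomial k) (RatFunc k) (C s) = 1 := by
          rw [← map_mul, ← C_mul, inv_mul_cancel₀ hs, C_1, map_one]
        dsimp only
        rw [map_mul]
        linear_combination (algebraMap (Polynomial k) (RatFunc k) (C s⁻¹) *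
          algebraMap (Polynomial k) (RatFunc k) q) * hmuln +
          (algebraMap (Polynomial k) (RatFunc k) q * J.a n) * hinv

end Aux

/-- Two finitely generated graded right `A(f)`-submodules of
`Q_gr(A(f))` are isomorphic as graded right `A(f)`-modules if and only if they have the
same sequence of structure constants.  Here `f = z(z+α)`. -/

theorem iso_iff_same_structure_constants (k : Type) [Field k] (α : k)
    (I J : GrSubmod k (X * (X + C α))) :
    (∃ φ : ℤ → RatFunc k → RatFunc k,
      IsGrHom k (X * (X + C α)) I J φ ∧
      ∀ n, Set.BijOn (φ n) (comp k I.a n) (comp k J.a n)) ↔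
    ∀ i, I.c i = J.c i := by
  exact iso_iff_gen (X * (X + C α)) I J

end
end

section
/- Let I be a finitely generated graded right A(f)-submodule of Q_gr(A(f)) with structure constants {c_i}. Then for all sufficiently large n, c_n = 1 and c_{−n} = σ^{−n}(f). -/
open Polynomial

noncomputable section

namespace SCAux

variable {k : Type} [Field k]

local notation "M" => algebraMap (Polynomial k) (RatFunc k)

lemma shiftp_one (d : ℤ) : shiftp k d (1 : Polynomial k) = 1 := one_comp

lemma shiftp_shiftp (d e : ℤ) (g : Polynomial k) :
    shiftp k d (shiftp k e g) = shiftp k (d + e) g := by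
  unfold shiftp
  rw [comp_assoc]
  congr 1
  simp only [add_comp, X_comp, C_comp]
  push_cast [add_assoc, ← C_add]
  rfl

lemma shiftp_prod (d : ℤ) (t : Finset ℕ) (w : ℕ → Polynomial k) :
    shiftp k d (∏ i ∈ t, w i) = ∏ i ∈ t, shiftp k d (w i) := by
  simp only [shiftp, comp_eq_aeval, map_prod]

lemma cancel_map {x : RatFunc k} (hx : x ≠ 0) {A B : Polynomial k}
    (h : M A * x = M B * x) : A = B :=
  RatFunc.algebraMap_injective k (mul_right_cancel₀ hx h)

lemma monic_eq_of_unit {m c e : Polynomial k} (hm : m.Monic) (hc : c.Monic)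
    (he : IsUnit e) (h : m = c * e) : m = c := by
  have hd : e.degree = 0 := Polynomial.isUnit_iff_degree_eq_zero.mp he
  have he' : e = C (e.coeff 0) := Polynomial.eq_C_of_degree_le_zero hd.le
  have hl : (1 : k) = e.coeff 0 := by
    have := congrArg Polynomial.leadingCoeff h
    rwa [hm.leadingCoeff, Polynomial.leadingCoeff_mul, hc.leadingCoeff, one_mul,
      he', leadingCoeff_C] at this
  rw [h, he', ← hl, map_one, mul_one]

variable {f : Polynomial k} (I : GrSubmod k f)

lemma tele (n : ℤ) (t : ℕ) : ∃ R : Polynomial k, I.a n = M R * I.a (n + t) := by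
  induction t with
  | zero => exact ⟨1, by simp⟩
  | succ t ih =>
    obtain ⟨R, hR⟩ := ih
    obtain ⟨p, hp⟩ := I.closed_x (n + t)
    refine ⟨R * p, ?_⟩
    have e : n + ((t + 1 : ℕ) : ℤ) = (n + (t : ℤ)) + 1 := by push_cast; ring
    rw [e, hR, hp, map_mul, mul_assoc]

lemma tele_up (n j : ℤ) (h : n ≤ j) :
    ∃ R, I.c j ∣ R ∧ I.a n = M R * I.a (j + 1) := by
  obtain ⟨t, rfl⟩ := Int.le.dest h
  obtain ⟨R, hR⟩ := tele I n t
  obtain ⟨u, _, hgen⟩ := I.gen (n + t)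
  exact ⟨R * (C u * I.c (n + (t : ℤ))), ⟨R * C u, by ring⟩,
    by rw [hR, hgen]; simp only [map_mul]; ring⟩

lemma teleB (t : ℕ) : ∀ (m : ℤ) (Pm : Polynomial k),
    I.a (m + 1) * M (shiftp k m f) = M Pm * I.a m →
    ∃ S, Pm ∣ S ∧
      M (∏ i ∈ Finset.range (t + 1), shiftp k (m + t - i) f) * I.a (m + 1 + t)
        = M S * I.a m := by
  induction t with
  | zero =>
    intro m Pm hPm
    refine ⟨Pm, dvd_rfl, ?_⟩
    have h' : M (shiftp k m f) * I.a (m + 1) = M Pm * I.a m := by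
      rw [mul_comm]; exact hPm
    simpa using h'
  | succ t ih =>
    intro m Pm hPm
    obtain ⟨p1, hp1⟩ := I.closed_y (m + 1)
    obtain ⟨S', _, hS'⟩ := ih (m + 1) p1 hp1
    refine ⟨S' * Pm, dvd_mul_left Pm S', ?_⟩
    have e2 : ∀ i ∈ Finset.range (t + 1),
        shiftp k (m + ((t + 1 : ℕ) : ℤ) - i) f = shiftp k ((m + 1) + (t : ℤ) - i) f := by
      intro i _; congr 1; push_cast; ring
    have e3 : m + 1 + ((t + 1 : ℕ) : ℤ) = (m + 1) + 1 + (t : ℤ) := by push_cast; ring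
    have e1 : m + ((t + 1 : ℕ) : ℤ) - ((t + 1 : ℕ) : ℤ) = m := by push_cast; ring
    rw [Finset.prod_range_succ, Finset.prod_congr rfl e2, e3, e1, map_mul]
    calc M (∏ i ∈ Finset.range (t + 1), shiftp k ((m + 1) + (t : ℤ) - i) f)
          * M (shiftp k m f) * I.a ((m + 1) + 1 + (t : ℤ))
        = (M (∏ i ∈ Finset.range (t + 1), shiftp k ((m + 1) + (t : ℤ) - i) f)
            * I.a ((m + 1) + 1 + (t : ℤ))) * M (shiftp k m f) := by ring
      _ = (M S' * I.a (m + 1)) * M (shiftp k m f) := by rw [hS']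
      _ = M S' * (I.a (m + 1) * M (shiftp k m f)) := by ring
      _ = M S' * (M Pm * I.a m) := by rw [hPm]
      _ = M (S' * Pm) * I.a m := by rw [map_mul]; ring

end SCAux


open SCAux in
/-- If `I` is a finitely generated graded right `A(f)`-submodule of
`Q_gr(A(f))` with structure constants `{cᵢ}` (here `f = z(z+α)` is quadratic), then for
all sufficiently large `n` one has `cₙ = 1` and `c₋ₙ = σ⁻ⁿ(f)`. -/
theorem structure_constants_eventually (k : Type) [Field k] (α : k)
    (I : GrSubmod k (X * (X + C α))) :
    ∃ N : ℕ, ∀ n : ℕ, N ≤ n →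
      I.c (n : ℤ) = 1 ∧ I.c (-(n : ℤ)) = shiftp k (-(n : ℤ)) (X * (X + C α)) := by
  classical
  have hfmonic : (X * (X + C α) : Polynomial k).Monic := monic_X.mul (monic_X_add_C α)
  obtain ⟨s, hs1, hs2⟩ := I.fg
  choose u hu hgen using I.gen
  choose P hP using I.closed_y
  set Mk := algebraMap (Polynomial k) (RatFunc k) with hMk
  -- the key relation σ^i(f) = cᵢ · (C uᵢ · Pᵢ)
  have hrel : ∀ i : ℤ, shiftp k i (X * (X + C α)) = I.c i * (C (u i) * P i) := by
    intro i
    have h1 := hP i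
    rw [hgen i] at h1
    have h2 : Mk (shiftp k i (X * (X + C α))) * I.a (i + 1)
        = Mk (I.c i * (C (u i) * P i)) * I.a (i + 1) := by
      rw [mul_comm, h1, map_mul, map_mul, map_mul]
      ring
    exact cancel_map (I.nonzero _) h2
  refine ⟨s.sup (fun q => q.1.natAbs) + 1, fun n hn => ?_⟩
  have hbound : ∀ q ∈ s, q.1.natAbs < n := by
    intro q hq
    have h' := Finset.le_sup (f := fun q : ℤ × RatFunc k => q.1.natAbs) hq
    omega
  constructor
  · -- positive part : c n = 1
    have hmem := hs2 ((n : ℤ) + 1) (I.a ((n : ℤ) + 1)) ⟨1, by simp⟩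
    rw [← Finset.coe_image] at hmem
    obtain ⟨φ, -, hφ⟩ := Submodule.mem_span_finset.mp hmem
    set g : ℤ × RatFunc k → RatFunc k := fun q =>
      q.2 * Mk (shiftp k q.1 (acoef k (X * (X + C α)) ((n : ℤ) + 1 - q.1))) with hg
    have key : ∀ y ∈ s.image g, ∃ T : Polynomial k,
        I.c (n : ℤ) ∣ T ∧ y = Mk T * I.a ((n : ℤ) + 1) := by
      intro y hy
      obtain ⟨q, hqs, rfl⟩ := Finset.mem_image.mp hy
      obtain ⟨p, hp⟩ := hs1 q hqs
      have hq1 : q.1 ≤ (n : ℤ) := by have := hbound q hqs; omega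
      have hac : acoef k (X * (X + C α)) ((n : ℤ) + 1 - q.1) = 1 := by
        unfold acoef; rw [if_pos (by omega)]
      obtain ⟨R, hdvd, hR⟩ := tele_up I q.1 (n : ℤ) hq1
      refine ⟨p * R, Dvd.dvd.mul_left hdvd p, ?_⟩
      rw [hg]
      simp only [hac, shiftp_one, map_one, mul_one]
      rw [hp, hR, map_mul, mul_assoc]
    have key' : ∀ y : RatFunc k, ∃ T : Polynomial k,
        y ∈ s.image g → I.c (n : ℤ) ∣ T ∧ y = Mk T * I.a ((n : ℤ) + 1) := by
      intro y
      by_cases hy : y ∈ s.image g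
      · obtain ⟨T, h1, h2⟩ := key y hy; exact ⟨T, fun _ => ⟨h1, h2⟩⟩
      · exact ⟨0, fun h => absurd h hy⟩
    choose T hT using key'
    have h1 : ∑ y ∈ s.image g, φ y • y
        = Mk (∑ y ∈ s.image g, φ y * T y) * I.a ((n : ℤ) + 1) := by
      rw [map_sum, Finset.sum_mul]
      refine Finset.sum_congr rfl fun y hy => ?_
      rw [Algebra.smul_def]
      nth_rewrite 2 [(hT y hy).2]
      rw [map_mul, mul_assoc]
    have h2 : (∑ y ∈ s.image g, φ y * T y) = 1 :=
      cancel_map (I.nonzero _) (by rw [map_one, one_mul, ← h1, hφ])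
    have hdvd : I.c (n : ℤ) ∣ 1 := h2 ▸ Finset.dvd_sum fun y hy =>
      Dvd.dvd.mul_left (hT y hy).1 (φ y)
    exact (I.monic _).eq_one_of_isUnit (isUnit_of_dvd_one hdvd)
  · -- negative part : c (-n) = σ^{-n}(f)
    set m : ℤ := -(n : ℤ) with hm
    have hmem := hs2 m (I.a m) ⟨1, by simp⟩
    rw [← Finset.coe_image] at hmem
    obtain ⟨φ, -, hφ⟩ := Submodule.mem_span_finset.mp hmem
    set g : ℤ × RatFunc k → RatFunc k := fun q =>
      q.2 * Mk (shiftp k q.1 (acoef k (X * (X + C α)) (m - q.1))) with hg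
    have key : ∀ y ∈ s.image g, ∃ T : Polynomial k,
        P m ∣ T ∧ y = Mk T * I.a m := by
      intro y hy
      obtain ⟨q, hqs, rfl⟩ := Finset.mem_image.mp hy
      obtain ⟨p, hp⟩ := hs1 q hqs
      have hq1 : m < q.1 := by have := hbound q hqs; omega
      obtain ⟨t, ht⟩ := Int.le.dest hq1  -- m + 1 + t = q.1
      have hq2 : q.1 = m + 1 + (t : ℤ) := by omega
      -- rewrite the shifted acoef as a product of shifted f's
      have hac : shiftp k q.1 (acoef k (X * (X + C α)) (m - q.1))
          = ∏ i ∈ Finset.range (t + 1), shiftp k (m + (t : ℤ) - i) (X * (X + C α)) := by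
        rw [hq2]
        have e : m - (m + 1 + (t : ℤ)) = -(((t : ℤ)) + 1) := by ring
        rw [e]
        unfold acoef
        rw [if_neg (by omega)]
        have e2 : (-(-(((t : ℤ)) + 1))).toNat = t + 1 := by omega
        rw [e2, shiftp_prod]
        refine Finset.prod_congr rfl fun i _ => ?_
        rw [shiftp_shiftp]
        congr 1
        omega
      obtain ⟨S, hdvd, hS⟩ := teleB I t m (P m) (hP m)
      refine ⟨p * S, Dvd.dvd.mul_left hdvd p, ?_⟩
      rw [hg]
      simp only []
      rw [hp, hac, hq2]
      calc Mk p * I.a (m + 1 + (t : ℤ))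
            * Mk (∏ i ∈ Finset.range (t + 1), shiftp k (m + (t : ℤ) - i) (X * (X + C α)))
          = Mk p * (Mk (∏ i ∈ Finset.range (t + 1), shiftp k (m + (t : ℤ) - i) (X * (X + C α)))
              * I.a (m + 1 + (t : ℤ))) := by ring
        _ = Mk p * (Mk S * I.a m) := by rw [hS]
        _ = Mk (p * S) * I.a m := by rw [map_mul]; ring
    have key' : ∀ y : RatFunc k, ∃ T : Polynomial k,
        y ∈ s.image g → P m ∣ T ∧ y = Mk T * I.a m := by
      intro y
      by_cases hy : y ∈ s.image g
      · obtain ⟨T, h1, h2⟩ := key y hy; exact ⟨T, fun _ => ⟨h1, h2⟩⟩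
      · exact ⟨0, fun h => absurd h hy⟩
    choose T hT using key'
    have h1 : ∑ y ∈ s.image g, φ y • y
        = Mk (∑ y ∈ s.image g, φ y * T y) * I.a m := by
      rw [map_sum, Finset.sum_mul]
      refine Finset.sum_congr rfl fun y hy => ?_
      rw [Algebra.smul_def]
      nth_rewrite 2 [(hT y hy).2]
      rw [map_mul, mul_assoc]
    have h2 : (∑ y ∈ s.image g, φ y * T y) = 1 :=
      cancel_map (I.nonzero _) (by rw [map_one, one_mul, ← h1, hφ])
    have hdvd : P m ∣ 1 := h2 ▸ Finset.dvd_sum fun y hy =>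
      Dvd.dvd.mul_left (hT y hy).1 (φ y)
    have hunit : IsUnit (C (u m) * P m) :=
      (Polynomial.isUnit_C.mpr (hu m).isUnit).mul (isUnit_of_dvd_one hdvd)
    exact (monic_eq_of_unit (hfmonic.comp_X_add_C _) (I.monic m) hunit (hrel m)).symm
end
end

section
/- Let α = 0, f = z². In gr A(f), the module A/zA is a nonsplit extension of X = A/(x,z)A by Y = (A/(y,z−1)A)⟨1⟩: there is a short exact sequence 0 → Y → A/zA → X → 0 given by left multiplication by x, and this sequence does not split. -/
open Polynomial

noncomputable section

/-- The defining relations of the generalized Weyl algebra `A(f)` over `k[z]` with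
`σ(z) = z + 1`: `xz = σ(z)x`, `yz = σ⁻¹(z)y`, `xy = f`, `yx = σ⁻¹(f)`.
Generators: `0 ↦ x`, `1 ↦ y`, `2 ↦ z`. -/
inductive gwaRel (k : Type) [Field k] (f : Polynomial k) :
    FreeAlgebra k (Fin 3) → FreeAlgebra k (Fin 3) → Prop
  | xz : gwaRel k f (FreeAlgebra.ι k 0 * FreeAlgebra.ι k 2)
      ((FreeAlgebra.ι k 2 + 1) * FreeAlgebra.ι k 0)
  | yz : gwaRel k f (FreeAlgebra.ι k 1 * FreeAlgebra.ι k 2)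
      ((FreeAlgebra.ι k 2 - 1) * FreeAlgebra.ι k 1)
  | xy : gwaRel k f (FreeAlgebra.ι k 0 * FreeAlgebra.ι k 1)
      (aeval (FreeAlgebra.ι k 2) f)
  | yx : gwaRel k f (FreeAlgebra.ι k 1 * FreeAlgebra.ι k 0)
      (aeval (FreeAlgebra.ι k 2) (f.comp (X - 1)))

/-- The generalized Weyl algebra `A(f) = k[z]⟨x,y⟩ / (xz-σ(z)x, yz-σ⁻¹(z)y, xy-f, yx-σ⁻¹(f))`. -/
abbrev GWA (k : Type) [Field k] (f : Polynomial k) := RingQuot (gwaRel k f)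

def gwaX (k : Type) [Field k] (f : Polynomial k) : GWA k f :=
  RingQuot.mkAlgHom k (gwaRel k f) (FreeAlgebra.ι k 0)

def gwaY (k : Type) [Field k] (f : Polynomial k) : GWA k f :=
  RingQuot.mkAlgHom k (gwaRel k f) (FreeAlgebra.ι k 1)

def gwaZ (k : Type) [Field k] (f : Polynomial k) : GWA k f :=
  RingQuot.mkAlgHom k (gwaRel k f) (FreeAlgebra.ι k 2)

/-- The canonical `k[z]`-module generator of the degree-`n` component of `A(f)`:
`xⁿ` for `n ≥ 0` and `y⁻ⁿ` for `n < 0`. -/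
def gwaMon (k : Type) [Field k] (f : Polynomial k) (n : ℤ) : GWA k f :=
  if 0 ≤ n then gwaX k f ^ n.toNat else gwaY k f ^ (-n).toNat

/-- `A(z²)`, the multiple root case. -/
abbrev Amul (k : Type) [Field k] : Type := GWA k (X ^ 2)

namespace GWArep

set_option maxRecDepth 4000

variable (k : Type) [Field k] [CharZero k]

/-- The representation space: `V = ⊕_{n ∈ ℤ} k eₙ`. -/
abbrev V := ℤ →₀ k

def cx (n : ℤ) : k := if 0 ≤ n then 1 else (n : k) ^ 2
def cy (n : ℤ) : k := if 1 ≤ n then ((n : k) - 1) ^ 2 else 1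

def Xhat : V k →ₗ[k] V k := Finsupp.lsum k fun n => cx k n • Finsupp.lsingle (n + 1)
def Yhat : V k →ₗ[k] V k := Finsupp.lsum k fun n => cy k n • Finsupp.lsingle (n - 1)
def Zhat : V k →ₗ[k] V k := Finsupp.lsum k fun n => (n : k) • Finsupp.lsingle n

@[simp] lemma Xhat_single (n : ℤ) (c : k) :
    Xhat k (Finsupp.single n c) = Finsupp.single (n + 1) (cx k n * c) := by
  rw [Xhat, Finsupp.lsum_single, LinearMap.smul_apply, Finsupp.lsingle_apply,
    Finsupp.smul_single, smul_eq_mul]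

@[simp] lemma Yhat_single (n : ℤ) (c : k) :
    Yhat k (Finsupp.single n c) = Finsupp.single (n - 1) (cy k n * c) := by
  rw [Yhat, Finsupp.lsum_single, LinearMap.smul_apply, Finsupp.lsingle_apply,
    Finsupp.smul_single, smul_eq_mul]

@[simp] lemma Zhat_single (n : ℤ) (c : k) :
    Zhat k (Finsupp.single n c) = Finsupp.single n ((n : k) * c) := by
  rw [Zhat, Finsupp.lsum_single, LinearMap.smul_apply, Finsupp.lsingle_apply,
    Finsupp.smul_single, smul_eq_mul]

lemma relXZ : Zhat k * Xhat k = Xhat k * (Zhat k + 1) := by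
  apply Finsupp.lhom_ext
  intro n b
  simp only [Module.End.mul_apply, LinearMap.add_apply, Module.End.one_apply, Xhat_single,
    Zhat_single, map_add, Finsupp.single_add]
  push_cast
  rw [← Finsupp.single_add]
  congr 1
  ring

lemma relYZ : Zhat k * Yhat k = Yhat k * (Zhat k - 1) := by
  apply Finsupp.lhom_ext
  intro n b
  simp only [Module.End.mul_apply, LinearMap.sub_apply, Module.End.one_apply, Yhat_single,
    Zhat_single, map_sub, Finsupp.single_sub]
  push_cast
  rw [← Finsupp.single_sub]
  congr 1
  ring

lemma relXY : Yhat k * Xhat k = Zhat k ^ 2 := by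
  apply Finsupp.lhom_ext
  intro n b
  simp only [Module.End.mul_apply, pow_two, Xhat_single, Yhat_single, Zhat_single,
    add_sub_cancel_right]
  congr 1
  rcases le_or_gt 0 n with h | h
  · rw [cx, if_pos h, cy, if_pos (by omega)]
    push_cast; ring
  · rw [cx, if_neg (by omega), cy, if_neg (by omega)]
    push_cast; ring

lemma Zhat_sub_one_single (n : ℤ) (c : k) :
    (Zhat k - 1) (Finsupp.single n c) = Finsupp.single n (((n : k) - 1) * c) := by
  rw [LinearMap.sub_apply, Module.End.one_apply, Zhat_single, ← Finsupp.single_sub, sub_mul,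
    one_mul]

lemma relYX : Xhat k * Yhat k = (Zhat k - 1) ^ 2 := by
  apply Finsupp.lhom_ext
  intro n b
  rw [pow_two, Module.End.mul_apply, Module.End.mul_apply, Yhat_single, Xhat_single,
    Zhat_sub_one_single, Zhat_sub_one_single, sub_add_cancel]
  congr 1
  rcases le_or_gt 1 n with h | h
  · rw [cy, if_pos h, cx, if_pos (by omega)]
    push_cast; ring
  · rw [cy, if_neg (by omega), cx, if_neg (by omega)]
    push_cast; ring


----------------------------------------------------------------
-- The representation ρ : A(z²) → (End V)ᵐᵒᵖ
----------------------------------------------------------------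

open MulOpposite

def F : FreeAlgebra k (Fin 3) →ₐ[k] (Module.End k (V k))ᵐᵒᵖ :=
  FreeAlgebra.lift k (![op (Xhat k), op (Yhat k), op (Zhat k)])

lemma F_ι0 : F k (FreeAlgebra.ι k 0) = op (Xhat k) := by simp [F]
lemma F_ι1 : F k (FreeAlgebra.ι k 1) = op (Yhat k) := by simp [F]
lemma F_ι2 : F k (FreeAlgebra.ι k 2) = op (Zhat k) := by simp [F]

lemma F_rel : ∀ ⦃a b : FreeAlgebra k (Fin 3)⦄, gwaRel k (X ^ 2) a b → F k a = F k b := by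
  intro a b h
  induction h with
  | xz =>
    rw [map_mul, map_mul, map_add, map_one, F_ι0, F_ι2, ← op_one, ← op_add, ← op_mul, ← op_mul,
      relXZ]
  | yz =>
    rw [map_mul, map_mul, map_sub, map_one, F_ι1, F_ι2, ← op_one, ← op_sub, ← op_mul, ← op_mul,
      relYZ]
  | xy =>
    rw [map_mul, ← Polynomial.aeval_algHom_apply, map_pow, Polynomial.aeval_X, F_ι0, F_ι1,
      F_ι2, ← op_mul, ← op_pow, relXY]
  | yx =>
    rw [map_mul, ← Polynomial.aeval_algHom_apply, Polynomial.aeval_comp, map_pow, map_sub,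
      map_one, Polynomial.aeval_X, Polynomial.aeval_X, F_ι1, F_ι0, F_ι2, ← op_mul, ← op_one,
      ← op_sub, ← op_pow, relYX]

def ρ : Amul k →ₐ[k] (Module.End k (V k))ᵐᵒᵖ :=
  RingQuot.liftAlgHom k ⟨F k, F_rel k⟩

/-- The right action of `a ∈ A` on `V`. -/
def act (a : Amul k) : V k →ₗ[k] V k := (ρ k a).unop

lemma act_x : act k (gwaX k (X ^ 2)) = Xhat k := by
  rw [act, gwaX, ρ, RingQuot.liftAlgHom_mkAlgHom_apply, F_ι0, unop_op]

lemma act_y : act k (gwaY k (X ^ 2)) = Yhat k := by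
  rw [act, gwaY, ρ, RingQuot.liftAlgHom_mkAlgHom_apply, F_ι1, unop_op]

lemma act_z : act k (gwaZ k (X ^ 2)) = Zhat k := by
  rw [act, gwaZ, ρ, RingQuot.liftAlgHom_mkAlgHom_apply, F_ι2, unop_op]

lemma act_mul (a b : Amul k) (v : V k) : act k (a * b) v = act k b (act k a v) := by
  rw [act, act, act, map_mul, unop_mul, Module.End.mul_apply]

lemma act_one (v : V k) : act k 1 v = v := by
  rw [act, map_one, unop_one, Module.End.one_apply]

lemma act_algebraMap (r : k) (v : V k) : act k (algebraMap k (Amul k) r) v = r • v := by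
  rw [act, AlgHom.commutes, MulOpposite.algebraMap_apply, unop_op, Module.algebraMap_end_apply]




----------------------------------------------------------------
-- Relations in A
----------------------------------------------------------------

def Xg : Amul k := gwaX k (X ^ 2)
def Yg : Amul k := gwaY k (X ^ 2)
def Zg : Amul k := gwaZ k (X ^ 2)

local notation "A" => Amul k

lemma rel_xz : Xg k * Zg k = (Zg k + 1) * Xg k := by
  have h := RingQuot.mkAlgHom_rel k (gwaRel.xz (k := k) (f := X ^ 2))
  simpa only [map_mul, map_add, map_one, Xg, Zg, gwaX, gwaZ] using h

lemma rel_xy : Xg k * Yg k = Zg k ^ 2 := by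
  have h := RingQuot.mkAlgHom_rel k (gwaRel.xy (k := k) (f := X ^ 2))
  simpa only [map_mul, ← Polynomial.aeval_algHom_apply, map_pow, Polynomial.aeval_X, Xg, Yg, Zg,
      gwaX, gwaY, gwaZ] using h

lemma x_mul_zpow (n : ℕ) : Xg k * Zg k ^ n = (Zg k + 1) ^ n * Xg k := by
  induction n with
  | zero => simp
  | succ n ih =>
    rw [pow_succ (Zg k) n, ← mul_assoc, ih, mul_assoc, rel_xz, ← mul_assoc,
      ← pow_succ (Zg k + 1) n]

lemma x_mul_aeval (p : Polynomial k) :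
    Xg k * aeval (Zg k) p = aeval (Zg k) (p.comp (X + 1)) * Xg k := by
  induction p using Polynomial.induction_on' with
  | add p q hp hq => rw [add_comp, map_add, map_add, mul_add, hp, hq, add_mul]
  | monomial n a =>
    simp only [monomial_comp, map_mul, map_pow, map_add, map_one, aeval_C, aeval_X,
      aeval_monomial]
    rw [← mul_assoc, ← Algebra.commutes a (Xg k), mul_assoc, x_mul_zpow, ← mul_assoc]

lemma xpow_mul_aeval (m : ℕ) (p : Polynomial k) :
    Xg k ^ m * aeval (Zg k) p = aeval (Zg k) (p.comp (X + C (m : k))) * Xg k ^ m := by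
  induction m generalizing p with
  | zero => simp
  | succ m ih =>
    rw [pow_succ' (Xg k) m, mul_assoc, ih, ← mul_assoc, x_mul_aeval, mul_assoc,
      ← pow_succ' (Xg k) m]
    congr 2
    rw [comp_assoc, add_comp, X_comp, C_comp]
    congr 1
    push_cast
    rw [map_add, map_one]
    ring

lemma xpow_mul_z (m : ℕ) : Xg k ^ m * Zg k = Zg k * Xg k ^ m + (m : k) • Xg k ^ m := by
  have h := xpow_mul_aeval k m X
  rw [aeval_X, X_comp, map_add, aeval_X, aeval_C, add_mul, ← Algebra.smul_def] at h
  exact h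

lemma xpow_mul_y (m : ℕ) :
    Xg k ^ (m + 1) * Yg k =
      (Zg k - 1) * ((Zg k + algebraMap k A (2 * (m : k) + 1)) * Xg k ^ m)
        + (((m : k) + 1) ^ 2) • Xg k ^ m := by
  have key : ((X : Polynomial k) ^ 2).comp (X + C (m : k)) =
      (X - 1) * (X + C (2 * (m : k) + 1)) + C (((m : k) + 1) ^ 2) := by
    simp only [pow_comp, X_comp, add_comp, C_comp, map_add, map_mul, map_one, map_pow,
      map_ofNat, map_sub]
    ring
  have h := xpow_mul_aeval k m (X ^ 2)
  rw [key, map_pow, aeval_X, map_add, map_mul, map_add, map_sub, map_one, aeval_X, aeval_C,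
    aeval_C, add_mul, mul_assoc] at h
  rw [pow_succ (Xg k) m, mul_assoc, rel_xy, h, ← Algebra.smul_def]


----------------------------------------------------------------
-- The evaluation map E : A → V, a ↦ e₀ · a
----------------------------------------------------------------

lemma act_add (a b : A) (v : V k) : act k (a + b) v = act k a v + act k b v := by
  rw [act, act, act, map_add, unop_add, LinearMap.add_apply]

def Elin : A →ₗ[k] V k where
  toFun a := act k a (Finsupp.single 0 1)
  map_add' a b := act_add k a b _
  map_smul' c a := by
    show (ρ k (c • a)).unop _ = c • (ρ k a).unop _
    rw [map_smul, unop_smul, LinearMap.smul_apply]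

lemma Elin_mul (a b : A) : Elin k (a * b) = act k b (Elin k a) := act_mul k a b _

lemma Elin_one : Elin k 1 = Finsupp.single 0 1 := act_one k _

lemma Elin_Xg : Elin k (Xg k) = Finsupp.single 1 1 := by
  have : Elin k (Xg k) = act k (gwaX k (X ^ 2)) (Finsupp.single 0 1) := rfl
  rw [this, act_x, Xhat_single, cx, if_pos le_rfl, one_mul, zero_add]

lemma Elin_Zg : Elin k (Zg k) = 0 := by
  have : Elin k (Zg k) = act k (gwaZ k (X ^ 2)) (Finsupp.single 0 1) := rfl
  rw [this, act_z, Zhat_single]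
  simp

lemma Elin_xpow (m : ℕ) : Elin k (Xg k ^ m) = Finsupp.single (m : ℤ) 1 := by
  induction m with
  | zero => rw [pow_zero, Elin_one]; norm_num
  | succ m ih =>
    rw [pow_succ (Xg k) m, Elin_mul, ih]
    have : act k (Xg k) = Xhat k := act_x k
    rw [this, Xhat_single, cx, if_pos (Int.natCast_nonneg m), one_mul]
    push_cast
    ring_nf

----------------------------------------------------------------
-- The right ideals
----------------------------------------------------------------

def Ix : Submodule Aᵐᵒᵖ A := Submodule.span Aᵐᵒᵖ {Xg k, Zg k}
def Iy : Submodule Aᵐᵒᵖ A := Submodule.span Aᵐᵒᵖ {Yg k, Zg k - 1}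
def Iz : Submodule Aᵐᵒᵖ A := Submodule.span Aᵐᵒᵖ {Zg k}

lemma Elin_Iz (a : A) (ha : a ∈ Iz k) : Elin k a = 0 := by
  rw [Iz, Submodule.mem_span_singleton] at ha
  obtain ⟨r, rfl⟩ := ha
  rw [MulOpposite.smul_eq_mul_unop, Elin_mul, Elin_Zg, map_zero]

lemma x_mul_Iy (u : A) (hu : u ∈ Iy k) : Xg k * u ∈ Iz k := by
  induction hu using Submodule.span_induction with
  | mem v hv =>
    rcases hv with h | h
    · subst h
      rw [rel_xy, Iz, Submodule.mem_span_singleton]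
      exact ⟨MulOpposite.op (Zg k), by rw [op_smul_eq_mul, ← pow_two]⟩
    · simp only [Set.mem_singleton_iff] at h
      subst h
      have hx : Xg k * (Zg k - 1) = Zg k * Xg k := by
        rw [mul_sub, rel_xz]; noncomm_ring
      rw [hx, Iz, Submodule.mem_span_singleton]
      exact ⟨MulOpposite.op (Xg k), by rw [op_smul_eq_mul]⟩
  | zero => rw [mul_zero]; exact zero_mem _
  | add a b _ _ ha hb => rw [mul_add]; exact add_mem ha hb
  | smul r a _ ha =>
    rw [MulOpposite.smul_eq_mul_unop, ← mul_assoc]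
    exact Submodule.smul_mem _ r ha

----------------------------------------------------------------
-- Totality: A = Iy + span_k {xᵐ}
----------------------------------------------------------------

def T : Submodule k A :=
  Submodule.restrictScalars k (Iy k) ⊔ Submodule.span k (Set.range fun m : ℕ => Xg k ^ m)

lemma Iy_le_T (u : A) (hu : u ∈ Iy k) : u ∈ T k :=
  Submodule.mem_sup_left (by exact hu)

lemma xpow_mem_T (m : ℕ) : Xg k ^ m ∈ T k :=
  Submodule.mem_sup_right (Submodule.subset_span ⟨m, rfl⟩)

lemma zsub_mul_mem_Iy (c : A) : (Zg k - 1) * c ∈ Iy k := by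
  have : (Zg k - 1) * c = MulOpposite.op c • (Zg k - 1) := rfl
  rw [this, Iy]
  exact Submodule.smul_mem _ _ (Submodule.subset_span (Or.inr rfl))

lemma y_mul_mem_Iy (c : A) : Yg k * c ∈ Iy k := by
  have : Yg k * c = MulOpposite.op c • Yg k := rfl
  rw [this, Iy]
  exact Submodule.smul_mem _ _ (Submodule.subset_span (Or.inl rfl))

lemma xpow_mul_gen_mem_T (m : ℕ) (g : A) (hg : g = Xg k ∨ g = Yg k ∨ g = Zg k) :
    Xg k ^ m * g ∈ T k := by
  rcases hg with rfl | rfl | rfl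
  · rw [← pow_succ]
    exact xpow_mem_T k (m + 1)
  · rcases m with - | m
    · rw [pow_zero, one_mul]
      exact Iy_le_T k _ (Submodule.subset_span (Or.inl rfl))
    · rw [xpow_mul_y]
      refine add_mem (Iy_le_T k _ (zsub_mul_mem_Iy k _)) (Submodule.smul_mem _ _ ?_)
      exact Submodule.mem_sup_right (Submodule.subset_span ⟨m, rfl⟩)
  · rw [xpow_mul_z]
    have h1 : Zg k * Xg k ^ m = (Zg k - 1) * Xg k ^ m + Xg k ^ m := by
      rw [sub_mul, one_mul, sub_add_cancel]
    rw [h1, add_assoc]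
    refine add_mem (Iy_le_T k _ (zsub_mul_mem_Iy k _)) (add_mem (xpow_mem_T k m) ?_)
    exact Submodule.smul_mem _ _ (xpow_mem_T k m)

lemma T_mul_gen (t : A) (ht : t ∈ T k) (g : A) (hg : g = Xg k ∨ g = Yg k ∨ g = Zg k) :
    t * g ∈ T k := by
  obtain ⟨t1, h1, t2, h2, rfl⟩ := Submodule.mem_sup.mp ht
  rw [add_mul]
  refine add_mem (Iy_le_T k _ ?_) ?_
  · have : t1 * g = MulOpposite.op g • t1 := rfl
    rw [this]
    exact Submodule.smul_mem _ _ h1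
  · clear ht h1
    induction h2 using Submodule.span_induction with
    | mem v hv =>
      obtain ⟨m, rfl⟩ := hv
      exact xpow_mul_gen_mem_T k m g hg
    | zero => rw [zero_mul]; exact zero_mem _
    | add a b _ _ ha hb => rw [add_mul]; exact add_mem ha hb
    | smul c a _ ha => rw [smul_mul_assoc]; exact Submodule.smul_mem _ c ha

lemma T_mul (b : FreeAlgebra k (Fin 3)) :
    ∀ t ∈ T k, t * RingQuot.mkAlgHom k (gwaRel k (X ^ 2)) b ∈ T k := by
  induction b using FreeAlgebra.induction with
  | grade0 r =>
    intro t ht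
    rw [AlgHom.commutes, ← Algebra.commutes r t, ← Algebra.smul_def]
    exact Submodule.smul_mem _ r ht
  | grade1 i =>
    intro t ht
    fin_cases i
    · exact T_mul_gen k t ht _ (Or.inl rfl)
    · exact T_mul_gen k t ht _ (Or.inr (Or.inl rfl))
    · exact T_mul_gen k t ht _ (Or.inr (Or.inr rfl))
  | mul a b ha hb =>
    intro t ht
    rw [map_mul, ← mul_assoc]
    exact hb _ (ha t ht)
  | add a b ha hb =>
    intro t ht
    rw [map_add, mul_add]
    exact add_mem (ha t ht) (hb t ht)

lemma mem_T (a : A) : a ∈ T k := by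
  obtain ⟨b, rfl⟩ := RingQuot.mkAlgHom_surjective k (gwaRel k (X ^ 2)) a
  have := T_mul k b 1 (by simpa using xpow_mem_T k 0)
  rwa [one_mul] at this


----------------------------------------------------------------
-- The submodule W = span{eₙ : n ≥ 1} of V
----------------------------------------------------------------

def W : Submodule k (V k) :=
  Submodule.span k (Set.range fun m : ℕ => (Finsupp.single ((m : ℤ) + 1) 1 : V k))

lemma W_apply (v : V k) (hv : v ∈ W k) (n : ℤ) (hn : n ≤ 0) : v n = 0 := by
  induction hv using Submodule.span_induction with
  | mem w hw =>
    obtain ⟨m, rfl⟩ := hw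
    rw [Finsupp.single_apply, if_neg (by omega)]
  | zero => rfl
  | add a b _ _ ha hb => rw [Finsupp.add_apply, ha, hb, add_zero]
  | smul c a _ ha => rw [Finsupp.smul_apply, ha, smul_zero]

lemma single_mem_W (n : ℤ) (hn : 1 ≤ n) (c : k) : Finsupp.single n c ∈ W k := by
  obtain ⟨m, rfl⟩ : ∃ m : ℕ, n = (m : ℤ) + 1 := ⟨(n - 1).toNat, by omega⟩
  have : (Finsupp.single ((m : ℤ) + 1) c : V k) = c • Finsupp.single ((m : ℤ) + 1) 1 := by
    rw [Finsupp.smul_single, smul_eq_mul, mul_one]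
  rw [this]
  exact Submodule.smul_mem _ c (Submodule.subset_span ⟨m, rfl⟩)

lemma Xhat_W (v : V k) (hv : v ∈ W k) : Xhat k v ∈ W k := by
  induction hv using Submodule.span_induction with
  | mem w hw =>
    obtain ⟨m, rfl⟩ := hw
    rw [Xhat_single]
    exact single_mem_W k _ (by omega) _
  | zero => rw [map_zero]; exact zero_mem _
  | add a b _ _ ha hb => rw [map_add]; exact add_mem ha hb
  | smul c a _ ha => rw [map_smul]; exact Submodule.smul_mem _ c ha

lemma Yhat_W (v : V k) (hv : v ∈ W k) : Yhat k v ∈ W k := by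
  induction hv using Submodule.span_induction with
  | mem w hw =>
    obtain ⟨m, rfl⟩ := hw
    rw [Yhat_single, add_sub_cancel_right]
    rcases m with - | m
    · have : cy k ((0 : ℕ) + 1) * 1 = 0 := by
        rw [cy, if_pos (by omega)]
        push_cast
        ring
      rw [this, Finsupp.single_zero]
      exact zero_mem _
    · exact single_mem_W k _ (by push_cast; omega) _
  | zero => rw [map_zero]; exact zero_mem _
  | add a b _ _ ha hb => rw [map_add]; exact add_mem ha hb
  | smul c a _ ha => rw [map_smul]; exact Submodule.smul_mem _ c ha

lemma Zhat_W (v : V k) (hv : v ∈ W k) : Zhat k v ∈ W k := by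
  induction hv using Submodule.span_induction with
  | mem w hw =>
    obtain ⟨m, rfl⟩ := hw
    rw [Zhat_single]
    exact single_mem_W k _ (by omega) _
  | zero => rw [map_zero]; exact zero_mem _
  | add a b _ _ ha hb => rw [map_add]; exact add_mem ha hb
  | smul c a _ ha => rw [map_smul]; exact Submodule.smul_mem _ c ha

lemma act_W (a : A) (v : V k) (hv : v ∈ W k) : act k a v ∈ W k := by
  obtain ⟨b, rfl⟩ := RingQuot.mkAlgHom_surjective k (gwaRel k (X ^ 2)) a
  induction b using FreeAlgebra.induction generalizing v with
  | grade0 r =>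
    rw [AlgHom.commutes, act_algebraMap]
    exact Submodule.smul_mem _ r hv
  | grade1 i =>
    fin_cases i
    · show act k (gwaX k (X ^ 2)) v ∈ W k
      rw [act_x]; exact Xhat_W k v hv
    · show act k (gwaY k (X ^ 2)) v ∈ W k
      rw [act_y]; exact Yhat_W k v hv
    · show act k (gwaZ k (X ^ 2)) v ∈ W k
      rw [act_z]; exact Zhat_W k v hv
  | mul a b ha hb =>
    rw [map_mul, act_mul]
    exact hb _ (ha v hv)
  | add a b ha hb =>
    rw [map_add, act_add]
    exact add_mem (ha v hv) (hb v hv)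

----------------------------------------------------------------
-- The kernel of Zhat
----------------------------------------------------------------

lemma Zhat_apply (v : V k) (n : ℤ) : Zhat k v n = (n : k) * v n := by
  classical
  rw [Zhat, Finsupp.lsum_apply, Finsupp.sum_apply]
  rw [Finsupp.sum_congr (g2 := fun i d => if i = n then (i : k) * d else 0) ?_]
  · rw [Finsupp.sum_ite_eq' v n (fun i d => (i : k) * d)]
    split_ifs with h
    · rfl
    · rw [Finsupp.notMem_support_iff.mp h, mul_zero]
  · intro i _
    rw [LinearMap.smul_apply, Finsupp.lsingle_apply, Finsupp.smul_apply,
      Finsupp.single_apply]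
    split_ifs with h <;> simp [h]

lemma Zhat_ker (v : V k) (hv : Zhat k v = 0) : v = Finsupp.single 0 (v 0) := by
  ext n
  rcases eq_or_ne n 0 with rfl | hn
  · rw [Finsupp.single_eq_same]
  · have h := congrArg (fun w => w n) hv
    simp only [Finsupp.coe_zero, Pi.zero_apply] at h
    rw [Zhat_apply] at h
    have : (n : k) ≠ 0 := Int.cast_ne_zero.mpr hn
    rw [Finsupp.single_apply, if_neg (Ne.symm hn)]
    exact (mul_eq_zero.mp h).resolve_left this

----------------------------------------------------------------
-- Key lemmas
----------------------------------------------------------------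

lemma inj_key (a : A) (h : Xg k * a ∈ Iz k) : a ∈ Iy k := by
  obtain ⟨t1, h1, t2, h2, rfl⟩ := Submodule.mem_sup.mp (mem_T k a)
  obtain ⟨c, hc⟩ := Finsupp.mem_span_range_iff_exists_finsupp.mp h2
  have h2' : Xg k * t2 ∈ Iz k := by
    have : Xg k * t2 = Xg k * (t1 + t2) - Xg k * t1 := by
      rw [mul_add, add_sub_cancel_left]
    rw [this]
    exact sub_mem h (x_mul_Iy k t1 h1)
  have hE : Elin k (Xg k * t2) = 0 := Elin_Iz k _ h2'
  have hxt2 : Xg k * t2 = c.sum fun m t => t • Xg k ^ (m + 1) := by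
    rw [← hc, Finsupp.mul_sum]
    apply Finsupp.sum_congr
    intro m _
    rw [mul_smul_comm, ← pow_succ']
  have hsum : (c.sum fun m t => Finsupp.single ((m : ℤ) + 1) t) = 0 := by
    rw [← hE, hxt2, map_finsuppSum]
    apply Finsupp.sum_congr
    intro m _
    rw [map_smul, Elin_xpow, Finsupp.smul_single, smul_eq_mul, mul_one]
    push_cast
    rfl
  have hc0 : c = 0 := by
    ext m0
    have h := congrArg (fun w => w ((m0 : ℤ) + 1)) hsum
    simp only [Finsupp.coe_zero, Pi.zero_apply] at h
    rw [Finsupp.sum_apply] at h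
    have heq : (c.sum fun m t => (Finsupp.single ((m : ℤ) + 1) t) ((m0 : ℤ) + 1))
        = c.sum fun m t => if m = m0 then t else 0 := by
      apply Finsupp.sum_congr
      intro m _
      rw [Finsupp.single_apply]
      congr 1
      simp only [eq_iff_iff]
      constructor <;> intro hh
      · exact_mod_cast by omega
      · omega
    rw [heq, Finsupp.sum_ite_eq' c m0 (fun _ t => t)] at h
    split_ifs at h with hs
    · exact h
    · exact Finsupp.notMem_support_iff.mp hs
  have ht2 : t2 = 0 := by
    rw [← hc, hc0, Finsupp.sum_zero_index]
  rw [ht2, add_zero]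
  exact h1

lemma nosplit_key (a : A) (h1 : a - 1 ∈ Ix k) (hx : a * Xg k ∈ Iz k)
    (hz : a * Zg k ∈ Iz k) : False := by
  set u := Elin k a with hu
  have hXu : Xhat k u = 0 := by
    have : Elin k (a * Xg k) = Xhat k u := by
      rw [Elin_mul, hu, show act k (Xg k) = Xhat k from act_x k]
    rw [← this]
    exact Elin_Iz k _ hx
  have hZu : Zhat k u = 0 := by
    have : Elin k (a * Zg k) = Zhat k u := by
      rw [Elin_mul, hu, show act k (Zg k) = Zhat k from act_z k]
    rw [← this]
    exact Elin_Iz k _ hz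
  -- decompose a = 1 + Xg * r + Zg * s
  rw [Ix, Submodule.mem_span_pair] at h1
  obtain ⟨r, s, hrs⟩ := h1
  have ha : a = 1 + (Xg k * r.unop + Zg k * s.unop) := by
    have h0 : r • Xg k + s • Zg k = Xg k * r.unop + Zg k * s.unop := rfl
    rw [h0] at hrs
    rw [hrs]
    abel
  have hu2 : u = Finsupp.single 0 1 + act k r.unop (Finsupp.single 1 1) := by
    rw [hu, ha, map_add, map_add, Elin_one, Elin_mul, Elin_mul, Elin_Xg, Elin_Zg,
      map_zero, add_zero]
  have hw : act k r.unop (Finsupp.single 1 1) ∈ W k := by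
    apply act_W
    exact single_mem_W k 1 le_rfl 1
  have hu0 : u 0 = 1 := by
    rw [hu2, Finsupp.add_apply, Finsupp.single_eq_same, W_apply k _ hw 0 le_rfl, add_zero]
  have husingle : u = Finsupp.single 0 (u 0) := Zhat_ker k u hZu
  rw [husingle, Xhat_single] at hXu
  have : cx k 0 * u 0 = 0 := by
    by_contra hne
    exact hne (by simpa using (Finsupp.single_eq_zero.mp hXu))
  rw [cx, if_pos le_rfl, one_mul, hu0] at this
  exact one_ne_zero this


----------------------------------------------------------------
-- The maps of the short exact sequence
----------------------------------------------------------------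

def lmulX : A →ₗ[Aᵐᵒᵖ] A where
  toFun a := Xg k * a
  map_add' a b := mul_add _ a b
  map_smul' r a := by
    show Xg k * (a * r.unop) = (Xg k * a) * r.unop
    rw [mul_assoc]

def iotaMap : (A ⧸ Iy k) →ₗ[Aᵐᵒᵖ] (A ⧸ Iz k) :=
  Submodule.liftQ (Iy k) ((Iz k).mkQ.comp (lmulX k)) (by
    intro u hu
    simp only [LinearMap.mem_ker, LinearMap.comp_apply, Submodule.mkQ_apply]
    rw [Submodule.Quotient.mk_eq_zero]
    exact x_mul_Iy k u hu)

def piMap : (A ⧸ Iz k) →ₗ[Aᵐᵒᵖ] (A ⧸ Ix k) :=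
  Submodule.liftQ (Iz k) (Ix k).mkQ (by
    rw [Submodule.ker_mkQ, Iz, Submodule.span_le, Set.singleton_subset_iff]
    exact Submodule.subset_span (Or.inr rfl))

lemma iotaMap_apply (a : A) :
    iotaMap k (Submodule.Quotient.mk a) = Submodule.Quotient.mk (Xg k * a) := rfl

lemma piMap_apply (a : A) :
    piMap k (Submodule.Quotient.mk a) = Submodule.Quotient.mk a := rfl

lemma iotaMap_injective : Function.Injective (iotaMap k) := by
  rw [← LinearMap.ker_eq_bot, eq_bot_iff]
  rintro m hm
  obtain ⟨a, rfl⟩ := Submodule.Quotient.mk_surjective _ m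
  rw [LinearMap.mem_ker, iotaMap_apply, Submodule.Quotient.mk_eq_zero] at hm
  rw [Submodule.mem_bot, Submodule.Quotient.mk_eq_zero]
  exact inj_key k a hm

lemma piMap_surjective : Function.Surjective (piMap k) := by
  intro q
  obtain ⟨a, rfl⟩ := Submodule.Quotient.mk_surjective _ q
  exact ⟨Submodule.Quotient.mk a, rfl⟩

lemma range_eq_ker : LinearMap.range (iotaMap k) = LinearMap.ker (piMap k) := by
  apply le_antisymm
  · rintro m ⟨n, rfl⟩
    obtain ⟨a, rfl⟩ := Submodule.Quotient.mk_surjective _ n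
    rw [LinearMap.mem_ker, iotaMap_apply, piMap_apply, Submodule.Quotient.mk_eq_zero]
    have : Xg k * a = MulOpposite.op a • Xg k := rfl
    rw [this, Ix]
    exact Submodule.smul_mem _ _ (Submodule.subset_span (Or.inl rfl))
  · intro m hm
    obtain ⟨a, rfl⟩ := Submodule.Quotient.mk_surjective _ m
    rw [LinearMap.mem_ker, piMap_apply, Submodule.Quotient.mk_eq_zero, Ix,
      Submodule.mem_span_pair] at hm
    obtain ⟨r, s, hrs⟩ := hm
    refine ⟨Submodule.Quotient.mk r.unop, ?_⟩
    rw [iotaMap_apply, Submodule.Quotient.eq]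
    have h0 : r • Xg k + s • Zg k = Xg k * r.unop + Zg k * s.unop := rfl
    rw [h0] at hrs
    have : Xg k * r.unop - a = -(Zg k * s.unop) := by
      rw [← hrs]; abel
    rw [this]
    refine neg_mem ?_
    have h1 : Zg k * s.unop = MulOpposite.op s.unop • Zg k := rfl
    rw [h1, Iz]
    exact Submodule.smul_mem _ _ (Submodule.subset_span rfl)

lemma not_split :
    ¬∃ sp : (A ⧸ Ix k) →ₗ[Aᵐᵒᵖ] (A ⧸ Iz k), (piMap k).comp sp = LinearMap.id := by
  rintro ⟨sp, hsp⟩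
  obtain ⟨a, ha⟩ := Submodule.Quotient.mk_surjective _ (sp (Submodule.Quotient.mk 1))
  -- a - 1 ∈ Ix
  have hπ : piMap k (sp (Submodule.Quotient.mk 1)) = Submodule.Quotient.mk 1 := by
    rw [← LinearMap.comp_apply, hsp, LinearMap.id_apply]
  rw [← ha, piMap_apply, Submodule.Quotient.eq] at hπ
  -- a * Xg ∈ Iz
  have hgen : ∀ g : A, g ∈ Ix k → a * g ∈ Iz k := by
    intro g hg
    have h1 : sp (Submodule.Quotient.mk (1 * g)) = 0 := by
      rw [one_mul,
        show (Submodule.Quotient.mk g : A ⧸ Ix k) = 0 from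
          (Submodule.Quotient.mk_eq_zero _).mpr hg, map_zero]
    have h2 : (Submodule.Quotient.mk (1 * g) : A ⧸ Ix k)
        = MulOpposite.op g • Submodule.Quotient.mk 1 := by
      rw [← Submodule.Quotient.mk_smul]
      rfl
    rw [h2, map_smul, ← ha, ← Submodule.Quotient.mk_smul] at h1
    have h3 : MulOpposite.op g • a = a * g := rfl
    rw [h3, Submodule.Quotient.mk_eq_zero] at h1
    exact h1
  have hx : a * Xg k ∈ Iz k :=
    hgen _ (Submodule.subset_span (Or.inl rfl))
  have hz : a * Zg k ∈ Iz k :=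
    hgen _ (Submodule.subset_span (Or.inr rfl))
  exact nosplit_key k a hπ hx hz

end GWArep

set_option maxHeartbeats 1000000 in
/-- Let `α = 0`, `f = z²`.  In `gr A(f)`, the module `A/zA` is a nonsplit
extension of `X = A/(x,z)A` by `Y = (A/(y,z−1)A)⟨1⟩`: there is a short exact sequence
`0 → Y → A/zA → X → 0` whose first map is induced by left multiplication by `x` and
whose second map is the natural quotient map, and this sequence does not split.
(The grading shift `⟨1⟩` does not change the underlying module.) -/
theorem AmodZA_nonsplit_extension (k : Type) [Field k] [IsAlgClosed k] [CharZero k] :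
    letI A := Amul k
    letI IX : Submodule Aᵐᵒᵖ A :=
      Submodule.span Aᵐᵒᵖ {gwaX k (X ^ 2), gwaZ k (X ^ 2)}
    letI IY : Submodule Aᵐᵒᵖ A :=
      Submodule.span Aᵐᵒᵖ {gwaY k (X ^ 2), gwaZ k (X ^ 2) - 1}
    letI Iz : Submodule Aᵐᵒᵖ A := Submodule.span Aᵐᵒᵖ {gwaZ k (X ^ 2)}
    ∃ (ι : (A ⧸ IY) →ₗ[Aᵐᵒᵖ] (A ⧸ Iz)) (π : (A ⧸ Iz) →ₗ[Aᵐᵒᵖ] (A ⧸ IX)),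
      (∀ a : A, ι (Submodule.Quotient.mk a) =
        Submodule.Quotient.mk (gwaX k (X ^ 2) * a)) ∧
      (∀ a : A, π (Submodule.Quotient.mk a) = Submodule.Quotient.mk a) ∧
      Function.Injective ι ∧ Function.Surjective π ∧
      LinearMap.range ι = LinearMap.ker π ∧
      ¬∃ s : (A ⧸ IX) →ₗ[Aᵐᵒᵖ] (A ⧸ Iz), π.comp s = LinearMap.id := by
  exact ⟨GWArep.iotaMap k, GWArep.piMap k, fun a => rfl, fun a => rfl,
    GWArep.iotaMap_injective k, GWArep.piMap_surjective k, GWArep.range_eq_ker k,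
    GWArep.not_split k⟩

end
end

section
/- Let P and Q be finitely generated graded rank one projective modules over A(f) (f = z(z+α) quadratic), embedded in the graded quotient ring Q_gr(A(f)). Then every graded degree-zero A(f)-module homomorphism P → Q is given by left multiplication by an element of k(z), and Hom_{gr A}(P,Q) is a free left k[z]-module of rank one. -/
open Polynomial

noncomputable section

/-- The degree-`n` component of `A(f)` (as a `k`-subspace): the left `k[z]`-span of the
canonical monomial `mₙ`. -/
def gwaComp (k : Type) [Field k] (f : Polynomial k) (n : ℤ) : Submodule k (GWA k f) :=
  Submodule.span k {w | ∃ q : Polynomial k, w = aeval (gwaZ k f) q * gwaMon k f n}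

/-- A right `A(f)`-module homomorphism between right ideals is graded of degree `0` if it
maps the degree-`n` part of `P` into the degree-`n` part of `Q` for every `n`. -/
def IsGradedHom (k : Type) [Field k] (f : Polynomial k)
    (P Q : Submodule (GWA k f)ᵐᵒᵖ (GWA k f)) (φ : ↥P →ₗ[(GWA k f)ᵐᵒᵖ] ↥Q) : Prop :=
  ∀ (n : ℤ) (m : ↥P), (m : GWA k f) ∈ gwaComp k f n → (φ m : GWA k f) ∈ gwaComp k f n

namespace GwaAux

variable {k : Type} [Field k] {f : Polynomial k}

/-- shift by an integer: `sh j p = p(X + j)` -/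
def sh (j : ℤ) (p : Polynomial k) : Polynomial k := p.comp (X + C (j : k))

lemma sh_add (j : ℤ) (p q : Polynomial k) : sh j (p + q) = sh j p + sh j q := by
  simp [sh, add_comp]
lemma sh_mul (j : ℤ) (p q : Polynomial k) : sh j (p * q) = sh j p * sh j q := by
  simp [sh, mul_comp]
lemma sh_sh (i j : ℤ) (p : Polynomial k) : sh i (sh j p) = sh (i + j) p := by
  unfold sh
  rw [comp_assoc, add_comp, X_comp, C_comp]
  congr 1
  rw [Int.cast_add, map_add]
  ring

lemma sh_C (j : ℤ) (a : k) : sh j (C a) = C a := C_comp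
lemma sh_X (j : ℤ) : sh j (X : Polynomial k) = X + C (j : k) := X_comp
lemma sh_zero_eq (p : Polynomial k) : sh 0 p = p := by simp [sh]
lemma sh_ne_zero {j : ℤ} {p : Polynomial k} (hp : p ≠ 0) : sh j p ≠ 0 := by
  intro h
  apply hp
  have := congrArg (sh (-j)) h
  rwa [sh_sh, neg_add_cancel, sh_zero_eq, show sh (-j) (0:Polynomial k) = 0 from zero_comp] at this

/-- `az p` = image of `p(z)` in the GWA. -/
def az (k : Type) [Field k] (f : Polynomial k) (p : Polynomial k) : GWA k f :=
  aeval (gwaZ k f) p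

lemma az_add (p q : Polynomial k) : az k f (p + q) = az k f p + az k f q := map_add _ _ _
lemma az_mul (p q : Polynomial k) : az k f (p * q) = az k f p * az k f q := map_mul _ _ _
lemma az_one : az k f 1 = 1 := map_one _

lemma x_mul_z : gwaX k f * gwaZ k f = (gwaZ k f + 1) * gwaX k f := by
  have := RingQuot.mkAlgHom_rel k (gwaRel.xz (k := k) (f := f))
  simpa [gwaX, gwaZ, map_mul, map_add, map_one] using this

lemma y_mul_z : gwaY k f * gwaZ k f = (gwaZ k f - 1) * gwaY k f := by
  have := RingQuot.mkAlgHom_rel k (gwaRel.yz (k := k) (f := f))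
  simpa [gwaY, gwaZ, map_mul, map_sub, map_one] using this

lemma x_mul_y : gwaX k f * gwaY k f = az k f f := by
  have := RingQuot.mkAlgHom_rel k (gwaRel.xy (k := k) (f := f))
  rw [map_mul] at this
  rw [gwaX, gwaY, this, az, gwaZ, aeval_algHom_apply]

lemma y_mul_x : gwaY k f * gwaX k f = az k f (f.comp (X - 1)) := by
  have := RingQuot.mkAlgHom_rel k (gwaRel.yx (k := k) (f := f))
  rw [map_mul] at this
  rw [gwaY, gwaX, this, az, gwaZ, aeval_algHom_apply]

lemma comp_X_sub_one (p : Polynomial k) : p.comp (X - 1) = sh (-1) p := by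
  unfold sh
  congr 1
  rw [Int.cast_neg, Int.cast_one, map_neg, map_one]
  ring

lemma x_z_pow (n : ℕ) : gwaX k f * gwaZ k f ^ n = (gwaZ k f + 1) ^ n * gwaX k f := by
  induction n with
  | zero => simp
  | succ n ih =>
    rw [pow_succ, ← mul_assoc, ih, mul_assoc, x_mul_z, ← mul_assoc, ← pow_succ]

lemma y_z_pow (n : ℕ) : gwaY k f * gwaZ k f ^ n = (gwaZ k f - 1) ^ n * gwaY k f := by
  induction n with
  | zero => simp
  | succ n ih =>
    rw [pow_succ, ← mul_assoc, ih, mul_assoc, y_mul_z, ← mul_assoc, ← pow_succ]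

lemma x_mul_az (p : Polynomial k) : gwaX k f * az k f p = az k f (sh 1 p) * gwaX k f := by
  induction p using Polynomial.induction_on' with
  | add p q hp hq => rw [sh_add, az_add, az_add, mul_add, add_mul, hp, hq]
  | monomial n a =>
    rw [← C_mul_X_pow_eq_monomial]
    have hsh : sh 1 (C a * X ^ n) = C a * (X + 1) ^ n := by
      unfold sh; simp [mul_comp]
    rw [hsh, az_mul, az_mul]
    have hCa : az k f (C a) = algebraMap k (GWA k f) a := aeval_C _ _
    have hXn : az k f (X ^ n) = gwaZ k f ^ n := by simp [az]
    have hXn' : az k f ((X + 1) ^ n) = (gwaZ k f + 1) ^ n := by simp [az]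
    rw [hCa, hXn, hXn', ← mul_assoc, ← Algebra.commutes a (gwaX k f), mul_assoc, x_z_pow,
      ← mul_assoc]

lemma y_mul_az (p : Polynomial k) : gwaY k f * az k f p = az k f (sh (-1) p) * gwaY k f := by
  induction p using Polynomial.induction_on' with
  | add p q hp hq => rw [sh_add, az_add, az_add, mul_add, add_mul, hp, hq]
  | monomial n a =>
    rw [← C_mul_X_pow_eq_monomial]
    have hsh : sh (-1) (C a * X ^ n) = C a * (X - 1) ^ n := by
      unfold sh
      rw [mul_comp, C_comp, pow_comp, X_comp, Int.cast_neg, Int.cast_one, map_neg, map_one,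
        sub_eq_add_neg]
    rw [hsh, az_mul, az_mul]
    have hCa : az k f (C a) = algebraMap k (GWA k f) a := aeval_C _ _
    have hXn : az k f (X ^ n) = gwaZ k f ^ n := by simp [az]
    have hXn' : az k f ((X - 1) ^ n) = (gwaZ k f - 1) ^ n := by simp [az]
    rw [hCa, hXn, hXn', ← mul_assoc, ← Algebra.commutes a (gwaY k f), mul_assoc, y_z_pow,
      ← mul_assoc]

lemma xpow_mul_az (t : ℕ) (p : Polynomial k) :
    gwaX k f ^ t * az k f p = az k f (sh t p) * gwaX k f ^ t := by
  induction t generalizing p with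
  | zero => simp [sh_zero_eq]
  | succ t ih =>
    rw [pow_succ, mul_assoc, x_mul_az, ← mul_assoc, ih (sh 1 p), sh_sh, mul_assoc, ← pow_succ,
      show ((t : ℤ) + 1) = ((t + 1 : ℕ) : ℤ) by push_cast; ring]

lemma ypow_mul_az (t : ℕ) (p : Polynomial k) :
    gwaY k f ^ t * az k f p = az k f (sh (-t) p) * gwaY k f ^ t := by
  induction t generalizing p with
  | zero => simp [sh_zero_eq]
  | succ t ih =>
    rw [pow_succ, mul_assoc, y_mul_az, ← mul_assoc, ih (sh (-1) p), sh_sh, mul_assoc, ← pow_succ,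
      show (-(t : ℤ) + -1) = -((t + 1 : ℕ) : ℤ) by push_cast; ring]

lemma gwaMon_ofNat (t : ℕ) : gwaMon k f (t : ℤ) = gwaX k f ^ t := by
  rw [gwaMon, if_pos (by omega)]
  norm_num

lemma gwaMon_negNat (t : ℕ) (h : 0 < t) : gwaMon k f (-(t : ℤ)) = gwaY k f ^ t := by
  rw [gwaMon, if_neg (by omega)]
  norm_num

lemma int_cases (c : ℤ) : (∃ t : ℕ, c = t) ∨ (∃ t : ℕ, 0 < t ∧ c = -(t : ℤ)) := by
  by_cases h : 0 ≤ c
  · exact Or.inl ⟨c.toNat, by omega⟩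
  · exact Or.inr ⟨(-c).toNat, by omega, by omega⟩

lemma mon_mul_az (c : ℤ) (p : Polynomial k) :
    gwaMon k f c * az k f p = az k f (sh c p) * gwaMon k f c := by
  rcases int_cases c with ⟨t, rfl⟩ | ⟨t, ht, rfl⟩
  · rw [gwaMon_ofNat, xpow_mul_az]
  · rw [gwaMon_negNat t ht, ypow_mul_az]


/-- `F j = f(z + j)` -/
def F (f : Polynomial k) (j : ℤ) : Polynomial k := sh j f

lemma F_ne_zero (hf : f ≠ 0) (j : ℤ) : F f j ≠ 0 := sh_ne_zero hf

/-- structure constant: `mₙ * mₑ = Cmul n e (z) * m_{n+e}` -/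
def Cmul (f : Polynomial k) (n e : ℤ) : Polynomial k :=
  (∏ j ∈ Finset.Ico (max 0 (n + e)) n, F f j) * (∏ j ∈ Finset.Ico n (min 0 (n + e)), F f j)

lemma Cmul_ne_zero (hf : f ≠ 0) (n e : ℤ) : Cmul f n e ≠ 0 := by
  apply mul_ne_zero <;>
  · rw [Finset.prod_ne_zero_iff]
    intro j _
    exact F_ne_zero hf j

lemma Ico_singleton (b : ℤ) : Finset.Ico b (b + 1) = {b} := by
  ext x
  simp only [Finset.mem_Ico, Finset.mem_singleton]
  omega

lemma prodIco_succ (g : ℤ → Polynomial k) {a b : ℤ} (h : a ≤ b) :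
    (∏ j ∈ Finset.Ico a (b + 1), g j) = (∏ j ∈ Finset.Ico a b, g j) * g b := by
  rw [← Finset.Ico_union_Ico_eq_Ico h (by omega), Finset.prod_union
    (Finset.Ico_disjoint_Ico_consecutive a b (b + 1)), Ico_singleton, Finset.prod_singleton]

lemma prodIco_pred (g : ℤ → Polynomial k) {a b : ℤ} (h : a ≤ b) :
    (∏ j ∈ Finset.Ico (a - 1) b, g j) = (∏ j ∈ Finset.Ico a b, g j) * g (a - 1) := by
  have hsing : Finset.Ico (a - 1) a = {a - 1} := by
    ext x
    simp only [Finset.mem_Ico, Finset.mem_singleton]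
    omega
  rw [← Finset.Ico_union_Ico_eq_Ico (show a - 1 ≤ a by omega) h, Finset.prod_union
    (Finset.Ico_disjoint_Ico_consecutive (a - 1) a b), hsing, Finset.prod_singleton, mul_comm]

lemma Cmul_zero (n : ℤ) : Cmul f n 0 = 1 := by
  unfold Cmul
  rcases le_or_gt 0 n with h | h
  · rw [Finset.Ico_eq_empty (by omega), Finset.Ico_eq_empty (by omega)]
    simp
  · rw [Finset.Ico_eq_empty (by omega), Finset.Ico_eq_empty (by omega)]
    simp

lemma Cmul_succ (n e : ℤ) (he : 0 ≤ e) :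
    Cmul f n (e + 1) = Cmul f n e * (if 0 ≤ n + e then 1 else F f (n + e)) := by
  unfold Cmul
  rcases le_or_gt 0 n with h | h
  · rw [if_pos (by omega)]
    rw [Finset.Ico_eq_empty (a := n) (by omega), Finset.Ico_eq_empty (a := n) (by omega),
      Finset.Ico_eq_empty (by omega), Finset.Ico_eq_empty (by omega)]
    simp
  · rw [Finset.Ico_eq_empty (b := n) (by omega), Finset.Ico_eq_empty (b := n) (by omega)]
    rcases le_or_gt 0 (n + e) with h2 | h2
    · rw [if_pos (by omega)]
      rw [show (0 : ℤ) ⊓ (n + (e + 1)) = 0 by omega, show (0 : ℤ) ⊓ (n + e) = 0 by omega]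
      simp
    · rw [if_neg (by omega)]
      rw [show (0 : ℤ) ⊓ (n + (e + 1)) = n + e + 1 by omega,
        show (0 : ℤ) ⊓ (n + e) = n + e by omega]
      rw [prodIco_succ _ (by omega : n ≤ n + e)]
      ring

lemma Cmul_pred (n e : ℤ) (he : e ≤ 0) :
    Cmul f n (e - 1) = Cmul f n e * (if n + e ≤ 0 then 1 else F f (n + e - 1)) := by
  unfold Cmul
  rcases le_or_gt 0 n with h | h
  · rw [Finset.Ico_eq_empty (a := n) (by omega), Finset.Ico_eq_empty (a := n) (by omega)]
    rcases le_or_gt (n + e) 0 with h2 | h2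
    · rw [if_pos (by omega)]
      rw [show (0 : ℤ) ⊔ (n + (e - 1)) = 0 by omega, show (0 : ℤ) ⊔ (n + e) = 0 by omega]
      simp
    · rw [if_neg (by omega)]
      rw [show (0 : ℤ) ⊔ (n + (e - 1)) = n + e - 1 by omega,
        show (0 : ℤ) ⊔ (n + e) = n + e by omega]
      rw [prodIco_pred _ (by omega : n + e ≤ n)]
      ring
  · rw [if_pos (by omega)]
    rw [Finset.Ico_eq_empty (b := n) (by omega), Finset.Ico_eq_empty (b := n) (by omega),
      Finset.Ico_eq_empty (by omega), Finset.Ico_eq_empty (by omega)]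
    simp

lemma mon_succ {e : ℤ} (he : 0 ≤ e) : gwaMon k f (e + 1) = gwaMon k f e * gwaX k f := by
  obtain ⟨t, rfl⟩ : ∃ t : ℕ, e = t := ⟨e.toNat, by omega⟩
  rw [show (t : ℤ) + 1 = ((t + 1 : ℕ) : ℤ) by push_cast; ring, gwaMon_ofNat, gwaMon_ofNat,
    pow_succ]

lemma mon_pred {e : ℤ} (he : e ≤ 0) : gwaMon k f (e - 1) = gwaMon k f e * gwaY k f := by
  obtain ⟨t, rfl⟩ : ∃ t : ℕ, e = -(t : ℤ) := ⟨(-e).toNat, by omega⟩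
  rw [show -(t : ℤ) - 1 = -((t + 1 : ℕ) : ℤ) by push_cast; ring, gwaMon_negNat (t + 1) (by omega)]
  rcases Nat.eq_zero_or_pos t with rfl | ht
  · simp [gwaMon]
  · rw [gwaMon_negNat t ht, pow_succ]

lemma mon_mul_x (c : ℤ) :
    gwaMon k f c * gwaX k f = az k f (if 0 ≤ c then 1 else F f c) * gwaMon k f (c + 1) := by
  rcases le_or_gt 0 c with h | h
  · rw [if_pos h, az_one, one_mul, mon_succ h]
  · rw [if_neg (by omega)]
    obtain ⟨t, rfl⟩ : ∃ t : ℕ, c = -(t : ℤ) := ⟨(-c).toNat, by omega⟩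
    obtain ⟨s, rfl⟩ : ∃ s : ℕ, t = s + 1 := ⟨t - 1, by omega⟩
    rw [gwaMon_negNat _ (by omega), pow_succ, mul_assoc, y_mul_x, comp_X_sub_one,
      ypow_mul_az, sh_sh]
    congr 2
    · unfold F
      congr 1
      push_cast
      ring
    · rcases Nat.eq_zero_or_pos s with rfl | hs
      · simp [gwaMon]
      · rw [show -((s + 1 : ℕ) : ℤ) + 1 = -(s : ℤ) by push_cast; ring, gwaMon_negNat s hs]

lemma mon_mul_y (c : ℤ) :
    gwaMon k f c * gwaY k f = az k f (if c ≤ 0 then 1 else F f (c - 1)) * gwaMon k f (c - 1) := by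
  rcases le_or_gt c 0 with h | h
  · rw [if_pos h, az_one, one_mul, mon_pred h]
  · rw [if_neg (by omega)]
    obtain ⟨t, rfl⟩ : ∃ t : ℕ, c = t := ⟨c.toNat, by omega⟩
    obtain ⟨s, rfl⟩ : ∃ s : ℕ, t = s + 1 := ⟨t - 1, by omega⟩
    rw [gwaMon_ofNat, pow_succ, mul_assoc, x_mul_y, xpow_mul_az]
    congr 2
    · unfold F
      congr 1
      push_cast
      ring
    · rw [show ((s + 1 : ℕ) : ℤ) - 1 = (s : ℤ) by push_cast; ring, gwaMon_ofNat]

lemma mon_mul_mon (n e : ℤ) :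
    gwaMon k f n * gwaMon k f e = az k f (Cmul f n e) * gwaMon k f (n + e) := by
  rcases int_cases e with ⟨t, rfl⟩ | ⟨t, -, rfl⟩
  · induction t with
    | zero => norm_num [Cmul_zero, az_one, gwaMon]
    | succ t ih =>
      rw [show ((t + 1 : ℕ) : ℤ) = (t : ℤ) + 1 by push_cast; ring, mon_succ (by omega),
        ← mul_assoc, ih, mul_assoc, mon_mul_x, ← mul_assoc, ← az_mul,
        ← Cmul_succ n t (by omega), ← add_assoc]
  · induction t with
    | zero => norm_num [Cmul_zero, az_one, gwaMon]
    | succ t ih =>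
      rw [show -((t + 1 : ℕ) : ℤ) = -(t : ℤ) - 1 by push_cast; ring,
        mon_pred (by omega : -(t : ℤ) ≤ 0), ← mul_assoc, ih, mul_assoc, mon_mul_y,
        ← mul_assoc, ← az_mul, ← Cmul_pred n (-t) (by omega),
        show n + (-(t : ℤ) - 1) = n + -(t : ℤ) - 1 by ring]

/-- `Dpol n` : a fixed multiple of all `Cmul n e`. -/
def Dpol (f : Polynomial k) (n : ℤ) : Polynomial k :=
  ∏ j ∈ Finset.Ico (min 0 n) (max 0 n), F f j

lemma Dpol_ne_zero (hf : f ≠ 0) (n : ℤ) : Dpol f n ≠ 0 := by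
  rw [Dpol, Finset.prod_ne_zero_iff]
  intro j _
  exact F_ne_zero hf j

lemma Cmul_dvd_Dpol (n e : ℤ) : Cmul f n e ∣ Dpol f n := by
  unfold Cmul Dpol
  rcases le_or_gt 0 n with h | h
  · rw [Finset.Ico_eq_empty (a := n) (by omega), Finset.prod_empty, mul_one]
    apply Finset.prod_dvd_prod_of_subset
    apply Finset.Ico_subset_Ico (by omega) (by omega)
  · rw [Finset.Ico_eq_empty (b := n) (by omega), Finset.prod_empty, one_mul]
    apply Finset.prod_dvd_prod_of_subset
    apply Finset.Ico_subset_Ico (by omega) (by omega)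


/-! ### The faithful representation on `V = ℤ → RatFunc k` -/

section Rep

variable (k) (f)

/-- The shift `p(X) ↦ p(X+1)` as an algebra equivalence of `k[X]`. -/
def shEquiv : Polynomial k ≃ₐ[k] Polynomial k :=
  AlgEquiv.ofAlgHom (aeval (X + C (1 : k))) (aeval (X - C (1 : k)))
    (by ext : 1 <;> simp [aeval_comp])
    (by ext : 1 <;> simp [aeval_comp])

lemma shEquiv_apply (p : Polynomial k) : shEquiv k p = sh 1 p := by
  simp only [shEquiv, AlgEquiv.ofAlgHom, AlgEquiv.coe_mk, sh, comp_eq_aeval]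
  norm_num

lemma nzd_map_shEquiv :
    Submonoid.map (shEquiv k).toRingEquiv.toMonoidHom (nonZeroDivisors (Polynomial k)) =
      nonZeroDivisors (Polynomial k) := by
  set e := (shEquiv k).toRingEquiv
  ext w
  constructor
  · rintro ⟨v, hv, rfl⟩
    simpa [mem_nonZeroDivisors_iff_ne_zero, map_eq_zero_iff e e.injective] using
      (mem_nonZeroDivisors_iff_ne_zero.mp hv)
  · intro hw
    refine ⟨e.symm w, ?_, by simp⟩
    simpa [mem_nonZeroDivisors_iff_ne_zero, map_eq_zero_iff e.symm e.symm.injective] using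
      (mem_nonZeroDivisors_iff_ne_zero.mp hw)

/-- The shift automorphism `σ` of `k(z)`. -/
def sig : RatFunc k ≃+* RatFunc k :=
  IsLocalization.ringEquivOfRingEquiv (RatFunc k) (RatFunc k) (shEquiv k).toRingEquiv
    (nzd_map_shEquiv k)

lemma sig_algebraMap (p : Polynomial k) :
    sig k (algebraMap (Polynomial k) (RatFunc k) p) =
      algebraMap (Polynomial k) (RatFunc k) (sh 1 p) := by
  rw [sig, IsLocalization.ringEquivOfRingEquiv_eq]
  congr 1
  exact shEquiv_apply k p

lemma sig_symm_algebraMap (p : Polynomial k) :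
    (sig k).symm (algebraMap (Polynomial k) (RatFunc k) p) =
      algebraMap (Polynomial k) (RatFunc k) (sh (-1) p) := by
  apply (sig k).injective
  rw [RingEquiv.apply_symm_apply, sig_algebraMap, sh_sh]
  norm_num [sh_zero_eq]

/-- The representation space -/
abbrev V := ℤ → RatFunc k

/-- the image of a polynomial in `k(z)` -/
def pR (p : Polynomial k) : RatFunc k := algebraMap (Polynomial k) (RatFunc k) p

lemma sig_pR (p : Polynomial k) : sig k (pR k p) = pR k (sh 1 p) := sig_algebraMap k p
lemma sig_symm_pR (p : Polynomial k) : (sig k).symm (pR k p) = pR k (sh (-1) p) :=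
  sig_symm_algebraMap k p

lemma pR_ne_zero {p : Polynomial k} (hp : p ≠ 0) : pR k p ≠ 0 := by
  simpa [pR, map_eq_zero_iff _ (RatFunc.algebraMap_injective k)] using hp

lemma sig_algebraMap_k (a : k) :
    sig k (algebraMap k (RatFunc k) a) = algebraMap k (RatFunc k) a := by
  rw [IsScalarTower.algebraMap_apply k (Polynomial k) (RatFunc k), sig_algebraMap,
    Polynomial.algebraMap_eq, sh_C]

lemma sig_symm_algebraMap_k (a : k) :
    (sig k).symm (algebraMap k (RatFunc k) a) = algebraMap k (RatFunc k) a := by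
  apply (sig k).injective
  rw [RingEquiv.apply_symm_apply, sig_algebraMap_k]

lemma sig_smul (a : k) (g : RatFunc k) : sig k (a • g) = a • sig k g := by
  rw [Algebra.smul_def, map_mul, sig_algebraMap_k, ← Algebra.smul_def]

lemma sig_symm_smul (a : k) (g : RatFunc k) : (sig k).symm (a • g) = a • (sig k).symm g := by
  rw [Algebra.smul_def, map_mul, sig_symm_algebraMap_k, ← Algebra.smul_def]

/-- scalar multiplication as an algebra map `k(z) → End_k(V)` -/
def muV : RatFunc k →ₐ[k] Module.End k (V k) where
  toFun g :=
    { toFun := fun v => fun n => g * v n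
      map_add' := fun v w => by funext n; simp [mul_add]
      map_smul' := fun a v => by funext n; simp [mul_smul_comm] }
  map_one' := by ext v n; simp
  map_mul' g h := by ext v n; simp [Module.End.mul_apply, mul_assoc]
  map_zero' := by ext v n; simp
  map_add' g h := by ext v n; simp [add_mul]
  commutes' a := by ext v n; simp [Algebra.smul_def, Module.algebraMap_end_apply]

lemma muV_apply (g : RatFunc k) (v : V k) (n : ℤ) : muV k g v n = g * v n := rfl

/-- The operator `Xop` -/
def Xop : Module.End k (V k) where
  toFun v := fun n => sig k (v (n - 1))
  map_add' v w := by funext n; simp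
  map_smul' a v := by funext n; simp [sig_smul]

/-- The operator `Yop` -/
def Yop : Module.End k (V k) where
  toFun v := fun n => pR k (sh (-1) f) * (sig k).symm (v (n + 1))
  map_add' v w := by funext n; simp [mul_add]
  map_smul' a v := by funext n; simp [sig_symm_smul, mul_smul_comm]

lemma Xop_apply (v : V k) (n : ℤ) : Xop k v n = sig k (v (n - 1)) := rfl
lemma Yop_apply (v : V k) (n : ℤ) : Yop k f v n = pR k (sh (-1) f) * (sig k).symm (v (n + 1)) :=
  rfl

/-- `Zop` is multiplication by `X`. -/
def Zop : Module.End k (V k) := muV k (pR k X)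

lemma Zop_apply (v : V k) (n : ℤ) : Zop k v n = pR k X * v n := rfl

lemma aeval_Zop (p : Polynomial k) : aeval (Zop k) p = muV k (pR k p) := by
  have h1 : Zop k = muV k (pR k X) := rfl
  have h2 : pR k X = (IsScalarTower.toAlgHom k (Polynomial k) (RatFunc k)) X := rfl
  rw [h1, h2, ← AlgHom.comp_apply, aeval_algHom_apply, aeval_X_left, AlgHom.id_apply,
    AlgHom.comp_apply]
  rfl

lemma rel_xz : Xop k * Zop k = (Zop k + 1) * Xop k := by
  ext v n
  simp only [Module.End.mul_apply, Xop_apply, Zop_apply, LinearMap.add_apply, Module.End.one_apply,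
    Pi.add_apply]
  rw [map_mul, show sig k (pR k X) = pR k (sh 1 X) from sig_pR k X, sh_X]
  have : pR k (X + C ((1 : ℤ) : k)) = pR k X + 1 := by
    unfold pR
    rw [Int.cast_one, C_1, map_add, map_one]
  rw [this]
  ring

lemma rel_yz : Yop k f * Zop k = (Zop k - 1) * Yop k f := by
  ext v n
  simp only [Module.End.mul_apply, Yop_apply, Zop_apply, LinearMap.sub_apply, Module.End.one_apply,
    Pi.sub_apply]
  rw [map_mul, show (sig k).symm (pR k X) = pR k (sh (-1) X) from sig_symm_pR k X, sh_X]
  have : pR k (X + C ((-1 : ℤ) : k)) = pR k X - 1 := by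
    unfold pR
    rw [Int.cast_neg, Int.cast_one, C_neg, C_1, map_add, map_neg, map_one, ← sub_eq_add_neg]
  rw [this]
  ring

lemma rel_xy : Xop k * Yop k f = aeval (Zop k) f := by
  ext v n
  rw [aeval_Zop]
  simp only [Module.End.mul_apply, Xop_apply, Yop_apply, muV_apply]
  rw [map_mul, RingEquiv.apply_symm_apply, sig_pR, sh_sh]
  norm_num [sh_zero_eq]

lemma rel_yx : Yop k f * Xop k = aeval (Zop k) (f.comp (X - 1)) := by
  ext v n
  rw [aeval_Zop, comp_X_sub_one]
  simp only [Module.End.mul_apply, Xop_apply, Yop_apply, muV_apply]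
  rw [show n + 1 - 1 = n by ring, RingEquiv.symm_apply_apply]

set_option synthInstance.maxHeartbeats 1000000 in
set_option maxHeartbeats 1000000 in
/-- The representation `ρ : A(f) → End_k(V)`. -/
def rho : GWA k f →ₐ[k] Module.End k (V k) :=
  RingQuot.liftAlgHom k ⟨FreeAlgebra.lift k ![Xop k, Yop k f, Zop k], by
    intro a b h
    induction h with
    | xz =>
      simp only [map_mul, map_add, map_one, FreeAlgebra.lift_ι_apply,
        Matrix.cons_val_zero, Matrix.cons_val_one, Matrix.head_cons, Matrix.cons_val_two,
        Matrix.tail_cons]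
      exact rel_xz k
    | yz =>
      simp only [map_mul, map_sub, map_one, FreeAlgebra.lift_ι_apply,
        Matrix.cons_val_zero, Matrix.cons_val_one, Matrix.head_cons, Matrix.cons_val_two,
        Matrix.tail_cons]
      exact rel_yz k f
    | xy =>
      rw [map_mul, ← aeval_algHom_apply]
      simp only [FreeAlgebra.lift_ι_apply, Matrix.cons_val_zero, Matrix.cons_val_one,
        Matrix.head_cons, Matrix.cons_val_two, Matrix.tail_cons]
      exact rel_xy k f
    | yx =>
      rw [map_mul, ← aeval_algHom_apply]
      simp only [FreeAlgebra.lift_ι_apply, Matrix.cons_val_zero, Matrix.cons_val_one,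
        Matrix.head_cons, Matrix.cons_val_two, Matrix.tail_cons]
      exact rel_yx k f⟩

lemma rho_x : rho k f (gwaX k f) = Xop k := by
  rw [gwaX, rho, RingQuot.liftAlgHom_mkAlgHom_apply, FreeAlgebra.lift_ι_apply]
  rfl

lemma rho_y : rho k f (gwaY k f) = Yop k f := by
  rw [gwaY, rho, RingQuot.liftAlgHom_mkAlgHom_apply, FreeAlgebra.lift_ι_apply]
  rfl

lemma rho_z : rho k f (gwaZ k f) = Zop k := by
  rw [gwaZ, rho, RingQuot.liftAlgHom_mkAlgHom_apply, FreeAlgebra.lift_ι_apply]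
  rfl

lemma rho_az (p : Polynomial k) : rho k f (az k f p) = muV k (pR k p) := by
  rw [az, ← aeval_algHom_apply, rho_z, aeval_Zop]

/-- basis-type vectors in `V` -/
def dl (c : ℤ) (g : RatFunc k) : V k := fun n => if n = c then g else 0

lemma Xop_dl (c : ℤ) (g : RatFunc k) : Xop k (dl k c g) = dl k (c + 1) (sig k g) := by
  funext n
  rw [Xop_apply, dl, dl]
  by_cases h : n = c + 1
  · rw [if_pos (by omega : n - 1 = c), if_pos h]
  · rw [if_neg (by omega : ¬ n - 1 = c), if_neg h, map_zero]

lemma Yop_dl (c : ℤ) (g : RatFunc k) :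
    Yop k f (dl k c g) = dl k (c - 1) (pR k (sh (-1) f) * (sig k).symm g) := by
  funext n
  rw [Yop_apply, dl, dl]
  by_cases h : n = c - 1
  · rw [if_pos (by omega : n + 1 = c), if_pos h]
  · rw [if_neg (by omega : ¬ n + 1 = c), if_neg h, map_zero, mul_zero]

lemma muV_dl (g' : RatFunc k) (c : ℤ) (g : RatFunc k) :
    muV k g' (dl k c g) = dl k c (g' * g) := by
  funext n
  rw [muV_apply, dl, dl]
  by_cases h : n = c
  · rw [if_pos h, if_pos h]
  · rw [if_neg h, if_neg h, mul_zero]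

/-- the nonzero scalar `γ_c` with `ρ(m_c)δ₀ = γ_c δ_c` -/
def gam (c : ℤ) : RatFunc k :=
  if 0 ≤ c then 1 else pR k (∏ j ∈ Finset.Ico c 0, F f j)

lemma gam_ne_zero (hf : f ≠ 0) (c : ℤ) : gam k f c ≠ 0 := by
  rw [gam]
  split_ifs
  · exact one_ne_zero
  · apply pR_ne_zero
    rw [Finset.prod_ne_zero_iff]
    exact fun j _ => F_ne_zero hf j

lemma rho_xpow_dl0 (t : ℕ) : (Xop k ^ t) (dl k 0 1) = dl k t 1 := by
  induction t with
  | zero => norm_num [dl]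
  | succ t ih =>
    rw [pow_succ', Module.End.mul_apply, ih, Xop_dl, map_one,
      show ((t : ℤ) + 1) = ((t + 1 : ℕ) : ℤ) by push_cast; ring]

lemma prod_shift {M : Type} [CommMonoid M] (g : ℤ → M) (a b : ℤ) :
    ∏ j ∈ Finset.Ico a b, g (j - 1) = ∏ j ∈ Finset.Ico (a - 1) (b - 1), g j := by
  apply Finset.prod_nbij' (fun i => i - 1) (fun i => i + 1)
  · intro i hi
    simp only [Finset.mem_Ico] at *
    omega
  · intro i hi
    simp only [Finset.mem_Ico] at *
    omega
  · intro i _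
    omega
  · intro i _
    omega
  · intro i _
    rfl

lemma sh_prod {ι : Type} (s : Finset ι) (g : ι → Polynomial k) (j : ℤ) :
    sh j (∏ i ∈ s, g i) = ∏ i ∈ s, sh j (g i) := by
  simp [sh, comp_eq_aeval, map_prod]

lemma gam_neg_succ (t : ℕ) :
    gam k f (-((t + 1 : ℕ) : ℤ)) = pR k (sh (-1) f) * (sig k).symm (gam k f (-(t : ℤ))) := by
  have hneg : ∀ s : ℕ, gam k f (-(s : ℤ)) = pR k (∏ j ∈ Finset.Ico (-(s : ℤ)) 0, F f j) := by
    intro s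
    rcases Nat.eq_zero_or_pos s with rfl | hs
    · simp [gam, pR]
    · rw [gam, if_neg (by omega)]
  have pR_mul : ∀ p q : Polynomial k, pR k (p * q) = pR k p * pR k q := fun p q => map_mul _ _ _
  rw [hneg, hneg, sig_symm_pR, sh_prod, ← pR_mul]
  congr 1
  have hre : ∀ j : ℤ, sh (-1) (F f j) = F f (j - 1) := by
    intro j
    rw [F, F, sh_sh, show -1 + j = j - 1 by ring]
  rw [Finset.prod_congr rfl (fun j _ => hre j), prod_shift (F f) (-(t : ℤ)) 0,
    show ((0 : ℤ) - 1) = -1 by ring, show (-((t + 1 : ℕ) : ℤ)) = -(t : ℤ) - 1 by push_cast; ring,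
    show (0 : ℤ) = -1 + 1 by ring]
  rw [prodIco_succ (F f) (by omega : -(t : ℤ) - 1 ≤ -1)]
  rw [show sh (-1) f = F f (-1) from rfl]
  ring

lemma rho_ypow_dl0 (t : ℕ) :
    (Yop k f ^ t) (dl k 0 1) = dl k (-(t : ℤ)) (gam k f (-(t : ℤ))) := by
  induction t with
  | zero => norm_num [dl, gam]
  | succ t ih =>
    rw [pow_succ', Module.End.mul_apply, ih, Yop_dl, gam_neg_succ,
      show (-(t : ℤ) - 1) = -((t + 1 : ℕ) : ℤ) by push_cast; ring]

lemma rho_mon_dl0 (c : ℤ) : rho k f (gwaMon k f c) (dl k 0 1) = dl k c (gam k f c) := by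
  rcases int_cases c with ⟨t, rfl⟩ | ⟨t, ht, rfl⟩
  · rw [gwaMon_ofNat, map_pow, rho_x, rho_xpow_dl0, gam, if_pos (by omega)]
  · rw [gwaMon_negNat t ht, map_pow, rho_y, rho_ypow_dl0]

lemma rho_az_mon_dl0 (p : Polynomial k) (c : ℤ) :
    rho k f (az k f p * gwaMon k f c) (dl k 0 1) = dl k c (pR k p * gam k f c) := by
  rw [map_mul, Module.End.mul_apply, rho_mon_dl0, rho_az, muV_dl]

variable {k f}

lemma indep (hf : f ≠ 0) {s : Finset ℤ} {p : ℤ → Polynomial k}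
    (h : ∑ c ∈ s, az k f (p c) * gwaMon k f c = 0) : ∀ c ∈ s, p c = 0 := by
  intro c0 hc0
  have h2 := congrArg (fun w => (rho k f w) (dl k 0 1) c0) h
  simp only [map_sum, map_zero, LinearMap.sum_apply, LinearMap.zero_apply, Finset.sum_apply,
    Pi.zero_apply] at h2
  have h3 : ∀ c ∈ s, ((rho k f) (az k f (p c) * gwaMon k f c)) (dl k 0 1) c0 =
      (if c0 = c then pR k (p c) * gam k f c else 0) := fun c _ => by rw [rho_az_mon_dl0]; rfl
  rw [Finset.sum_congr rfl h3, Finset.sum_ite_eq s c0 (fun c => pR k (p c) * gam k f c),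
    if_pos hc0] at h2
  rcases mul_eq_zero.mp h2 with hz | hz
  · exact (map_eq_zero_iff _ (RatFunc.algebraMap_injective k)).mp hz
  · exact absurd hz (gam_ne_zero k f hf c0)

end Rep

section Span

variable {k : Type} [Field k] {f : Polynomial k}

lemma az_sub (p q : Polynomial k) : az k f (p - q) = az k f p - az k f q := map_sub _ _ _
lemma az_zero : az k f 0 = 0 := map_zero _
lemma gwaMon_zero : gwaMon k f 0 = 1 := by simp [gwaMon]
lemma az_smul (a : k) (p : Polynomial k) : az k f (a • p) = a • az k f p := map_smul _ _ _

lemma az_mon_cancel (hf : f ≠ 0) {p q : Polynomial k} {c : ℤ}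
    (h : az k f p * gwaMon k f c = az k f q * gwaMon k f c) : p = q := by
  have h0 : ∑ d ∈ ({c} : Finset ℤ), az k f ((fun _ => p - q) d) * gwaMon k f d = 0 := by
    rw [Finset.sum_singleton, az_sub, sub_mul, h, sub_self]
  have := indep hf h0 c (Finset.mem_singleton_self c)
  exact sub_eq_zero.mp this

lemma az_mon_eq_zero (hf : f ≠ 0) {p : Polynomial k} {c : ℤ}
    (h : az k f p * gwaMon k f c = 0) : p = 0 :=
  az_mon_cancel hf (h.trans (by rw [az_zero, zero_mul]))

lemma az_mon_ne_zero (hf : f ≠ 0) {p : Polynomial k} (hp : p ≠ 0) (c : ℤ) :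
    az k f p * gwaMon k f c ≠ 0 := fun h => hp (az_mon_eq_zero hf h)

lemma az_injective (hf : f ≠ 0) {p q : Polynomial k} (h : az k f p = az k f q) : p = q := by
  apply az_mon_cancel hf (c := 0)
  rw [h]

lemma mem_comp_iff {w : GWA k f} {c : ℤ} :
    w ∈ gwaComp k f c ↔ ∃ p, w = az k f p * gwaMon k f c := by
  constructor
  · intro hw
    refine Submodule.span_induction (fun x hx => hx) ⟨0, by rw [az_zero, zero_mul]⟩
      ?_ ?_ hw
    · rintro x y _ _ ⟨px, rfl⟩ ⟨py, rfl⟩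
      exact ⟨px + py, by rw [az_add, add_mul]⟩
    · rintro a x _ ⟨px, rfl⟩
      exact ⟨a • px, by rw [az_smul, smul_mul_assoc]⟩
  · rintro ⟨p, rfl⟩
    exact Submodule.subset_span ⟨p, rfl⟩

lemma comp_mem_iSup {c : ℤ} {w : GWA k f} (hw : w ∈ gwaComp k f c) :
    w ∈ ⨆ e : ℤ, gwaComp k f e :=
  (le_iSup (fun e => gwaComp k f e) c) hw

lemma x_mul_mon (c : ℤ) : gwaX k f * gwaMon k f c
    = az k f (if 0 ≤ c then 1 else f) * gwaMon k f (c + 1) := by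
  rcases le_or_gt 0 c with h | h
  · rw [if_pos h, az_one, one_mul]
    obtain ⟨t, rfl⟩ : ∃ t : ℕ, c = t := ⟨c.toNat, by omega⟩
    rw [gwaMon_ofNat, show (t : ℤ) + 1 = ((t + 1 : ℕ) : ℤ) by push_cast; ring, gwaMon_ofNat,
      pow_succ']
  · rw [if_neg (by omega)]
    obtain ⟨s, rfl⟩ : ∃ s : ℕ, c = -((s + 1 : ℕ) : ℤ) := ⟨(-c).toNat - 1, by omega⟩
    rw [gwaMon_negNat _ (by omega), pow_succ', ← mul_assoc, x_mul_y]
    congr 1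
    rcases Nat.eq_zero_or_pos s with rfl | hs
    · norm_num [gwaMon_zero]
    · rw [show -((s + 1 : ℕ) : ℤ) + 1 = -(s : ℤ) by push_cast; ring, gwaMon_negNat s hs]

lemma y_mul_mon (c : ℤ) : gwaY k f * gwaMon k f c
    = az k f (if c ≤ 0 then 1 else sh (-1) f) * gwaMon k f (c - 1) := by
  rcases le_or_gt c 0 with h | h
  · rw [if_pos h, az_one, one_mul]
    obtain ⟨t, rfl⟩ : ∃ t : ℕ, c = -(t : ℤ) := ⟨(-c).toNat, by omega⟩
    rw [show -(t : ℤ) - 1 = -((t + 1 : ℕ) : ℤ) by push_cast; ring,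
      gwaMon_negNat (t + 1) (by omega)]
    rcases Nat.eq_zero_or_pos t with rfl | ht
    · norm_num [gwaMon_zero, pow_one]
    · rw [gwaMon_negNat t ht, pow_succ']
  · rw [if_neg (by omega)]
    obtain ⟨s, rfl⟩ : ∃ s : ℕ, c = ((s + 1 : ℕ) : ℤ) := ⟨c.toNat - 1, by omega⟩
    rw [gwaMon_ofNat, pow_succ', ← mul_assoc, y_mul_x, comp_X_sub_one]
    congr 1
    rw [show ((s + 1 : ℕ) : ℤ) - 1 = (s : ℤ) by push_cast; ring, gwaMon_ofNat]

lemma gwaZ_eq_az : gwaZ k f = az k f X := by rw [az, aeval_X]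

lemma mem_iSup_comp (w : GWA k f) : w ∈ ⨆ c : ℤ, gwaComp k f c := by
  set S := ⨆ c : ℤ, gwaComp k f c with hS
  have hgen : ∀ g : GWA k f,
      (∀ (c : ℤ) (p : Polynomial k), ∃ (e : ℤ) (q : Polynomial k),
        g * (az k f p * gwaMon k f c) = az k f q * gwaMon k f e) →
      ∀ s ∈ S, g * s ∈ S := by
    intro g hg s hs
    refine Submodule.iSup_induction (motive := fun v => g * v ∈ S) _ hs (fun c v hv => ?_)
      (by show g * 0 ∈ S; rw [mul_zero]; exact S.zero_mem) (fun v w hv hw => by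
        show g * (v + w) ∈ S; rw [mul_add]; exact S.add_mem hv hw)
    obtain ⟨p, rfl⟩ := mem_comp_iff.mp hv
    obtain ⟨e, q, hq⟩ := hg c p
    rw [hq]
    exact comp_mem_iSup (mem_comp_iff.mpr ⟨q, rfl⟩)
  have hx : ∀ s ∈ S, gwaX k f * s ∈ S := by
    refine hgen _ (fun c p => ⟨c + 1, sh 1 p * (if 0 ≤ c then 1 else f), ?_⟩)
    rw [← mul_assoc, x_mul_az, mul_assoc, x_mul_mon, ← mul_assoc, ← az_mul]
  have hy : ∀ s ∈ S, gwaY k f * s ∈ S := by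
    refine hgen _ (fun c p => ⟨c - 1, sh (-1) p * (if c ≤ 0 then 1 else sh (-1) f), ?_⟩)
    rw [← mul_assoc, y_mul_az, mul_assoc, y_mul_mon, ← mul_assoc, ← az_mul]
  have hz : ∀ s ∈ S, gwaZ k f * s ∈ S := by
    refine hgen _ (fun c p => ⟨c, X * p, ?_⟩)
    rw [← mul_assoc, gwaZ_eq_az, ← az_mul]
  obtain ⟨w', rfl⟩ := RingQuot.mkAlgHom_surjective k (gwaRel k f) w
  have hT : ∀ a : FreeAlgebra k (Fin 3), ∀ s ∈ S, (RingQuot.mkAlgHom k (gwaRel k f) a) * s ∈ S := by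
    intro a
    refine FreeAlgebra.induction k (Fin 3) (fun r s hs => ?_) (fun i => ?_) ?_ ?_ a
    · rw [AlgHom.commutes, ← Algebra.smul_def]
      exact S.smul_mem r hs
    · fin_cases i
      · exact hx
      · exact hy
      · exact hz
    · intro a b ha hb s hs
      rw [map_mul, mul_assoc]
      exact ha _ (hb s hs)
    · intro a b ha hb s hs
      rw [map_add, add_mul]
      exact S.add_mem (ha s hs) (hb s hs)
  have h1 : (1 : GWA k f) ∈ S :=
    comp_mem_iSup (c := 0) (mem_comp_iff.mpr ⟨1, by rw [az_one, gwaMon_zero, one_mul]⟩)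
  simpa using hT w' 1 h1

lemma decomp (w : GWA k f) : ∃ (s : Finset ℤ) (p : ℤ → Polynomial k),
    w = ∑ c ∈ s, az k f (p c) * gwaMon k f c := by
  have h := mem_iSup_comp w
  rw [Submodule.mem_iSup_iff_exists_finsupp] at h
  obtain ⟨F0, hF, hsum⟩ := h
  choose pfn hp using fun c => mem_comp_iff.mp (hF c)
  exact ⟨F0.support, pfn, by rw [← hsum, Finsupp.sum]; exact Finset.sum_congr rfl fun c _ => hp c⟩

lemma az_left_cancel (hf : f ≠ 0) {p : Polynomial k} (hp : p ≠ 0) {w : GWA k f}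
    (h : az k f p * w = 0) : w = 0 := by
  obtain ⟨s, q, rfl⟩ := decomp w
  rw [Finset.mul_sum] at h
  have h2 : ∑ c ∈ s, az k f ((fun c => p * q c) c) * gwaMon k f c = 0 := by
    rw [← h]
    exact Finset.sum_congr rfl fun c _ => by rw [az_mul, mul_assoc]
  have h3 := indep hf h2
  apply Finset.sum_eq_zero
  intro c hc
  have : q c = 0 := by
    have := h3 c hc
    rcases mul_eq_zero.mp this with h' | h'
    · exact absurd h' hp
    · exact h'
  rw [this, az_zero, zero_mul]

end Span

section Graded

variable {k : Type} [Field k] {f : Polynomial k}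

lemma sh_cancel (n : ℤ) (r : Polynomial k) : sh n (sh (-n) r) = r := by
  rw [sh_sh, show n + -n = 0 by ring, sh_zero_eq]

/-- fundamental product formula for "homogeneous" elements -/
lemma homog_mul (r q : Polynomial k) (c e : ℤ) :
    (az k f r * gwaMon k f c) * (az k f q * gwaMon k f e)
      = az k f (r * sh c q * Cmul f c e) * gwaMon k f (c + e) := by
  rw [mul_assoc, ← mul_assoc (gwaMon k f c), mon_mul_az, mul_assoc (az k f (sh c q)),
    mon_mul_mon, ← mul_assoc, ← mul_assoc, ← az_mul, ← az_mul]

lemma op_smul_def (a : (GWA k f)ᵐᵒᵖ) (w : GWA k f) : a • w = w * a.unop :=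
  rfl

lemma comp_left_az (p : Polynomial k) {w : GWA k f} {c : ℤ} (hw : w ∈ gwaComp k f c) :
    az k f p * w ∈ gwaComp k f c := by
  obtain ⟨r, rfl⟩ := mem_comp_iff.mp hw
  exact mem_comp_iff.mpr ⟨p * r, by rw [az_mul, mul_assoc]⟩

variable {P Q : Submodule (GWA k f)ᵐᵒᵖ (GWA k f)}

/-- the set of homogeneous elements of `P` -/
def homogSet (P : Submodule (GWA k f)ᵐᵒᵖ (GWA k f)) : Set (GWA k f) :=
  {m | m ∈ P ∧ ∃ n : ℤ, m ∈ gwaComp k f n}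

lemma mul_right_mem {m : GWA k f} (hm : m ∈ P) (s : GWA k f) : m * s ∈ P := by
  have := P.smul_mem (MulOpposite.op s) hm
  rwa [op_smul_def, MulOpposite.unop_op] at this

lemma graded_left_az (hPgr : P = Submodule.span (GWA k f)ᵐᵒᵖ (homogSet P)) (p₀ : Polynomial k)
    {w : GWA k f} (hw : w ∈ P) : az k f p₀ * w ∈ P := by
  rw [hPgr] at hw
  refine Submodule.span_induction (p := fun w _ => az k f p₀ * w ∈ P) ?_ ?_ ?_ ?_ hw
  · rintro m ⟨hmP, nn, hmn⟩
    obtain ⟨r, rfl⟩ := mem_comp_iff.mp hmn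
    have key : az k f p₀ * (az k f r * gwaMon k f nn)
        = (az k f r * gwaMon k f nn) * (az k f (sh (-nn) p₀) * gwaMon k f 0) := by
      rw [homog_mul, sh_cancel, Cmul_zero, mul_one, add_zero, ← mul_assoc, ← az_mul,
        mul_comm p₀ r]
    rw [key]
    exact mul_right_mem hmP _
  · show az k f p₀ * (0 : GWA k f) ∈ P
    rw [mul_zero]
    exact P.zero_mem
  · intro x y _ _ hx hy
    show az k f p₀ * (x + y) ∈ P
    rw [mul_add]
    exact P.add_mem hx hy
  · intro a x _ hx
    show az k f p₀ * (a • x) ∈ P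
    rw [op_smul_def, ← mul_assoc, ← op_smul_def (w := az k f p₀ * x)]
    exact P.smul_mem a hx

lemma exists_homog_ne_zero (hPne : P ≠ ⊥)
    (hPgr : P = Submodule.span (GWA k f)ᵐᵒᵖ (homogSet P)) :
    ∃ (n : ℤ) (r : Polynomial k), r ≠ 0 ∧ az k f r * gwaMon k f n ∈ P := by
  by_contra hcon
  push_neg at hcon
  apply hPne
  rw [hPgr]
  apply le_bot_iff.mp
  rw [Submodule.span_le]
  rintro m ⟨hmP, nn, hmn⟩
  obtain ⟨r, rfl⟩ := mem_comp_iff.mp hmn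
  rcases eq_or_ne r 0 with rfl | hr
  · rw [az_zero, zero_mul]
    exact Submodule.zero_mem ⊥
  · exact absurd hmP (hcon nn r hr)

/-- left multiplication by a polynomial, as a module endomorphism of hom spaces -/
def lmul (p : Polynomial k) (hQc : ∀ w ∈ Q, az k f p * w ∈ Q)
    (φ : ↥P →ₗ[(GWA k f)ᵐᵒᵖ] ↥Q) : ↥P →ₗ[(GWA k f)ᵐᵒᵖ] ↥Q where
  toFun m := ⟨az k f p * ↑(φ m), hQc _ (φ m).2⟩
  map_add' m m' := by
    apply Subtype.ext
    simp only [map_add, Submodule.coe_add, mul_add]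
  map_smul' a m := by
    apply Subtype.ext
    simp only [map_smul, RingHom.id_apply, SetLike.val_smul, op_smul_def, ← mul_assoc]

lemma lmul_isGraded (p : Polynomial k) (hQc : ∀ w ∈ Q, az k f p * w ∈ Q)
    {φ : ↥P →ₗ[(GWA k f)ᵐᵒᵖ] ↥Q} (hφ : IsGradedHom k f P Q φ) :
    IsGradedHom k f P Q (lmul p hQc φ) := fun n m hm => comp_left_az p (hφ n m hm)

lemma lmul_coe (p : Polynomial k) (hQc : ∀ w ∈ Q, az k f p * w ∈ Q)
    (φ : ↥P →ₗ[(GWA k f)ᵐᵒᵖ] ↥Q) (m : ↥P) :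
    (lmul p hQc φ m : GWA k f) = az k f p * ↑(φ m) := rfl

/-- Part 1 workhorse: a graded hom `φ` satisfies `q·φ(m) = q'·m` where `q,q'` are the
coefficients of a homogeneous element `a = q·mₙ ∈ P` and of `φ(a) = q'·mₙ`. -/
lemma hom_identity (hf : f ≠ 0)
    (hPgr : P = Submodule.span (GWA k f)ᵐᵒᵖ (homogSet P))
    (φ : ↥P →ₗ[(GWA k f)ᵐᵒᵖ] ↥Q) (hφ : IsGradedHom k f P Q φ)
    {n : ℤ} {q : Polynomial k} (hq : q ≠ 0) (haP : az k f q * gwaMon k f n ∈ P)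
    {q' : Polynomial k}
    (hq' : (φ ⟨az k f q * gwaMon k f n, haP⟩ : GWA k f) = az k f q' * gwaMon k f n) :
    ∀ m : ↥P, az k f q * ↑(φ m) = az k f q' * ↑m := by
  intro m
  obtain ⟨w, hwP⟩ := m
  show az k f q * ↑(φ ⟨w, hwP⟩) = az k f q' * w
  have hw' : w ∈ Submodule.span (GWA k f)ᵐᵒᵖ (homogSet P) := hPgr ▸ hwP
  refine Submodule.span_induction
    (p := fun w _ => ∀ h : w ∈ P, az k f q * ↑(φ ⟨w, h⟩) = az k f q' * w)
    ?_ ?_ ?_ ?_ hw' hwP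
  · rintro v ⟨hvP, d, hvd⟩ h
    obtain ⟨r, rfl⟩ := mem_comp_iff.mp hvd
    -- φ of this homogeneous element is homogeneous of the same degree
    obtain ⟨r', hr'⟩ := mem_comp_iff.mp
      (hφ d ⟨az k f r * gwaMon k f d, h⟩ (mem_comp_iff.mpr ⟨r, rfl⟩))
    -- the two right multipliers
    set u : GWA k f := az k f (sh (-n) r) * gwaMon k f (d - n) with hu
    set v : GWA k f := az k f (sh (-d) (q * Cmul f n (d - n))) * gwaMon k f 0 with hv
    have key : ∀ Q₀ : Polynomial k,
        (az k f Q₀ * gwaMon k f n) * u = az k f (Q₀ * r * Cmul f n (d - n)) * gwaMon k f d := by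
      intro Q₀
      rw [hu, homog_mul, sh_cancel, show n + (d - n) = d by ring]
    have key2 : ∀ R₀ : Polynomial k,
        (az k f R₀ * gwaMon k f d) * v
          = az k f (R₀ * (q * Cmul f n (d - n))) * gwaMon k f d := by
      intro R₀
      rw [hv, homog_mul, sh_cancel, Cmul_zero, mul_one, add_zero]
    -- the elements a•u and w•v of P are equal
    have heq : (MulOpposite.op u) • (⟨az k f q * gwaMon k f n, haP⟩ : ↥P)
        = (MulOpposite.op v) • (⟨az k f r * gwaMon k f d, h⟩ : ↥P) := by
      apply Subtype.ext
      rw [SetLike.val_smul, SetLike.val_smul, op_smul_def, op_smul_def, MulOpposite.unop_op,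
        MulOpposite.unop_op, key q, key2 r,
        show q * r * Cmul f n (d - n) = r * (q * Cmul f n (d - n)) by ring]
    have heq2 := congrArg φ heq
    rw [map_smul, map_smul] at heq2
    have heq3 : (↑(φ ⟨az k f q * gwaMon k f n, haP⟩) : GWA k f) * u
        = (↑(φ ⟨az k f r * gwaMon k f d, h⟩) : GWA k f) * v := by
      have := congrArg (Subtype.val) heq2
      simpa only [SetLike.val_smul, op_smul_def, MulOpposite.unop_op] using this
    rw [hq', hr', key, key2] at heq3
    have hcoef : q' * r * Cmul f n (d - n) = r' * (q * Cmul f n (d - n)) :=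
      az_mon_cancel hf heq3
    have hqr : q' * r = r' * q := by
      apply mul_right_cancel₀ (Cmul_ne_zero hf n (d - n))
      calc q' * r * Cmul f n (d - n) = r' * (q * Cmul f n (d - n)) := hcoef
        _ = r' * q * Cmul f n (d - n) := by ring
    rw [hr', ← mul_assoc, ← az_mul,
      show q * r' = q' * r by rw [mul_comm]; exact hqr.symm, az_mul, mul_assoc]
  · intro h
    have h0 : (⟨(0 : GWA k f), h⟩ : ↥P) = 0 := rfl
    rw [h0, map_zero]
    simp
  · intro x y hx hy ihx ihy h
    have hxP : x ∈ P := hPgr ▸ hx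
    have hyP : y ∈ P := hPgr ▸ hy
    have hsplit : (⟨x + y, h⟩ : ↥P) = ⟨x, hxP⟩ + ⟨y, hyP⟩ := rfl
    rw [hsplit, map_add]
    show az k f q * ↑(φ ⟨x, hxP⟩ + φ ⟨y, hyP⟩) = az k f q' * (x + y)
    rw [Submodule.coe_add, mul_add, mul_add, ihx hxP, ihy hyP]
  · intro a x hx ihx h
    have hxP : x ∈ P := hPgr ▸ hx
    have hsplit : (⟨a • x, h⟩ : ↥P) = a • ⟨x, hxP⟩ := rfl
    rw [hsplit, map_smul]
    have := ihx hxP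
    show az k f q * ↑(a • φ ⟨x, hxP⟩) = az k f q' * (a • x)
    rw [SetLike.val_smul, op_smul_def, op_smul_def, ← mul_assoc, this, mul_assoc]

/-- the homomorphism `m ↦ W(z)·m : P → Q` -/
def wMap (W : Polynomial k) (hW : ∀ w ∈ P, az k f W * w ∈ Q) :
    ↥P →ₗ[(GWA k f)ᵐᵒᵖ] ↥Q where
  toFun m := ⟨az k f W * ↑m, hW _ m.2⟩
  map_add' m m' := by
    apply Subtype.ext
    simp only [Submodule.coe_add, mul_add]
  map_smul' a m := by
    apply Subtype.ext
    simp only [RingHom.id_apply, SetLike.val_smul, op_smul_def, ← mul_assoc]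

lemma wMap_coe (W : Polynomial k) (hW : ∀ w ∈ P, az k f W * w ∈ Q) (m : ↥P) :
    (wMap W hW m : GWA k f) = az k f W * ↑m := rfl

lemma wMap_isGraded (W : Polynomial k) (hW : ∀ w ∈ P, az k f W * w ∈ Q) :
    IsGradedHom k f P Q (wMap W hW) := fun n m hm => comp_left_az W hm

/-- key existence fact: `u·Dpol N` multiplies all of `P` into `Q`. -/
lemma wMul_mem (hf : f ≠ 0)
    (hPgr : P = Submodule.span (GWA k f)ᵐᵒᵖ (homogSet P))
    {N : ℤ} {u : Polynomial k} (hbQ : az k f u * gwaMon k f N ∈ Q) :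
    ∀ w ∈ P, az k f (u * Dpol f N) * w ∈ Q := by
  intro w hw
  rw [hPgr] at hw
  refine Submodule.span_induction (p := fun w _ => az k f (u * Dpol f N) * w ∈ Q)
    ?_ ?_ ?_ ?_ hw
  · rintro m ⟨hmP, d, hmd⟩
    obtain ⟨r, rfl⟩ := mem_comp_iff.mp hmd
    obtain ⟨e, he⟩ := Cmul_dvd_Dpol (f := f) N (d - N)
    have key : az k f (u * Dpol f N) * (az k f r * gwaMon k f d)
        = (az k f u * gwaMon k f N) * (az k f (sh (-N) (e * r)) * gwaMon k f (d - N)) := by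
      rw [homog_mul, sh_cancel, show N + (d - N) = d by ring, ← mul_assoc, ← az_mul]
      congr 2
      rw [he]
      ring
    rw [key]
    exact mul_right_mem hbQ _
  · show az k f (u * Dpol f N) * (0 : GWA k f) ∈ Q
    rw [mul_zero]
    exact Q.zero_mem
  · intro x y _ _ hx hy
    show az k f (u * Dpol f N) * (x + y) ∈ Q
    rw [mul_add]
    exact Q.add_mem hx hy
  · intro a x _ hx
    show az k f (u * Dpol f N) * (a • x) ∈ Q
    rw [op_smul_def, ← mul_assoc, ← op_smul_def (w := az k f (u * Dpol f N) * x)]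
    exact Q.smul_mem a hx

end Graded

end GwaAux

open GwaAux

set_option maxHeartbeats 1000000 in
/-- Let `P` and `Q` be finitely generated graded rank one projective right
`A(f)`-modules (`f = z(z+α)` quadratic), embedded in the graded quotient ring, i.e.
realized as nonzero graded right ideals of `A(f)`.  Then every graded degree-zero
`A(f)`-module homomorphism `P → Q` is given by left multiplication by an element
`p₁/p₂ ∈ k(z)`, and `Hom_{gr A}(P,Q)` is a free left `k[z]`-module of rank one: there is
a single generator `t₁/t₂ ∈ k(z)` such that the homomorphisms `P → Q` are exactly the
left multiplications by the `k[z]`-multiples `p·t₁/t₂`, each arising for a unique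
`p ∈ k[z]`. -/
theorem hom_between_rank_one_projectives
    (k : Type) [Field k] [IsAlgClosed k] [CharZero k] (α : k)
    (P Q : Submodule (GWA k (X * (X + C α)))ᵐᵒᵖ (GWA k (X * (X + C α))))
    (hPne : P ≠ ⊥) (hQne : Q ≠ ⊥) (hPfg : P.FG) (hQfg : Q.FG)
    (hPgr : P = Submodule.span (GWA k (X * (X + C α)))ᵐᵒᵖ
      {m | m ∈ P ∧ ∃ n : ℤ, m ∈ gwaComp k (X * (X + C α)) n})
    (hQgr : Q = Submodule.span (GWA k (X * (X + C α)))ᵐᵒᵖ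
      {m | m ∈ Q ∧ ∃ n : ℤ, m ∈ gwaComp k (X * (X + C α)) n})
    (hPproj : Module.Projective (GWA k (X * (X + C α)))ᵐᵒᵖ ↥P)
    (hQproj : Module.Projective (GWA k (X * (X + C α)))ᵐᵒᵖ ↥Q) :
    (∀ φ : ↥P →ₗ[(GWA k (X * (X + C α)))ᵐᵒᵖ] ↥Q,
      IsGradedHom k (X * (X + C α)) P Q φ →
      ∃ p₁ p₂ : Polynomial k, p₂ ≠ 0 ∧ ∀ m : ↥P,
        aeval (gwaZ k (X * (X + C α))) p₂ * (φ m : GWA k (X * (X + C α))) =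
          aeval (gwaZ k (X * (X + C α))) p₁ * (m : GWA k (X * (X + C α)))) ∧
    (∃ t₁ t₂ : Polynomial k, t₂ ≠ 0 ∧
      (∀ p : Polynomial k, ∃ φ : ↥P →ₗ[(GWA k (X * (X + C α)))ᵐᵒᵖ] ↥Q,
        IsGradedHom k (X * (X + C α)) P Q φ ∧
        ∀ m : ↥P,
          aeval (gwaZ k (X * (X + C α))) t₂ * (φ m : GWA k (X * (X + C α))) =
            aeval (gwaZ k (X * (X + C α))) (p * t₁) * (m : GWA k (X * (X + C α)))) ∧
      (∀ φ : ↥P →ₗ[(GWA k (X * (X + C α)))ᵐᵒᵖ] ↥Q,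
        IsGradedHom k (X * (X + C α)) P Q φ →
        ∃! p : Polynomial k, ∀ m : ↥P,
          aeval (gwaZ k (X * (X + C α))) t₂ * (φ m : GWA k (X * (X + C α))) =
            aeval (gwaZ k (X * (X + C α))) (p * t₁) * (m : GWA k (X * (X + C α))))) := by
  have hf : (X * (X + C α) : Polynomial k) ≠ 0 := (monic_X.mul (monic_X_add_C α)).ne_zero
  have hPgr' : P = Submodule.span (GWA k (X * (X + C α)))ᵐᵒᵖ (homogSet P) := hPgr
  have hQgr' : Q = Submodule.span (GWA k (X * (X + C α)))ᵐᵒᵖ (homogSet Q) := hQgr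
  obtain ⟨n, q, hq, haP⟩ := exists_homog_ne_zero hPne hPgr'
  obtain ⟨N, u, hu, hbQ⟩ := exists_homog_ne_zero hQne hQgr'
  set a' : ↥P := ⟨az k (X * (X + C α)) q * gwaMon k (X * (X + C α)) n, haP⟩ with ha'
  have haComp : (a' : GWA k (X * (X + C α))) ∈ gwaComp k (X * (X + C α)) n := mem_comp_iff.mpr ⟨q, rfl⟩
  -- the coefficient ideal
  set Iset : Ideal (Polynomial k) :=
    { carrier := {p' | ∃ φ : ↥P →ₗ[(GWA k (X * (X + C α)))ᵐᵒᵖ] ↥Q, IsGradedHom k (X * (X + C α)) P Q φ ∧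
        (φ a' : GWA k (X * (X + C α))) = az k (X * (X + C α)) p' * gwaMon k (X * (X + C α)) n}
      add_mem' := by
        rintro p' p'' ⟨φ, hφ, hc⟩ ⟨ψ, hψ, hc'⟩
        refine ⟨φ + ψ, fun nn m hm => ?_, ?_⟩
        · rw [LinearMap.add_apply, Submodule.coe_add]
          exact (gwaComp k (X * (X + C α)) nn).add_mem (hφ nn m hm) (hψ nn m hm)
        · rw [LinearMap.add_apply, Submodule.coe_add, hc, hc', az_add, add_mul]
      zero_mem' := by
        refine ⟨0, fun nn m hm => ?_, ?_⟩
        · rw [LinearMap.zero_apply]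
          exact (gwaComp k (X * (X + C α)) nn).zero_mem
        · rw [LinearMap.zero_apply, az_zero, zero_mul]
          rfl
      smul_mem' := by
        rintro g p' ⟨φ, hφ, hc⟩
        refine ⟨lmul g (fun w hw => graded_left_az hQgr' g hw) φ,
          lmul_isGraded g _ hφ, ?_⟩
        rw [lmul_coe, hc, ← mul_assoc, ← az_mul, smul_eq_mul] } with hIset
  obtain ⟨t₁, hIgen⟩ := (IsPrincipalIdealRing.principal Iset).principal
  -- the nonzero element u·Dpol·q of Iset
  have hWmem := wMul_mem hf hPgr' hbQ
  have hWq : (u * Dpol (X * (X + C α)) N) * q ∈ Iset := by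
    refine ⟨wMap (u * Dpol (X * (X + C α)) N) hWmem, wMap_isGraded _ _, ?_⟩
    rw [wMap_coe, ha', ← mul_assoc, ← az_mul]
  have ht₁ : t₁ ≠ 0 := by
    rintro rfl
    rw [hIgen] at hWq
    rw [Submodule.span_zero_singleton, Submodule.mem_bot] at hWq
    exact (mul_ne_zero (mul_ne_zero hu (Dpol_ne_zero hf N)) hq) hWq
  constructor
  · intro φ hφ
    obtain ⟨q', hq'⟩ := mem_comp_iff.mp (hφ n a' haComp)
    exact ⟨q', q, hq, fun m => hom_identity hf hPgr' φ hφ hq haP hq' m⟩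
  · refine ⟨t₁, q, hq, ?_, ?_⟩
    · intro p
      have ht₁mem : t₁ ∈ Iset := by
        rw [hIgen]
        exact Submodule.mem_span_singleton_self t₁
      obtain ⟨φ₁, hφ₁g, hφ₁c⟩ := ht₁mem
      set φ₂ := lmul p (fun w hw => graded_left_az hQgr' p hw) φ₁ with hφ₂
      have hφ₂g : IsGradedHom k (X * (X + C α)) P Q φ₂ := lmul_isGraded p _ hφ₁g
      have hc₂ : (φ₂ a' : GWA k (X * (X + C α))) = az k (X * (X + C α)) (p * t₁) * gwaMon k (X * (X + C α)) n := by
        rw [hφ₂, lmul_coe, hφ₁c, ← mul_assoc, ← az_mul]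
      exact ⟨φ₂, hφ₂g, fun m => hom_identity hf hPgr' φ₂ hφ₂g hq haP hc₂ m⟩
    · intro φ hφ
      obtain ⟨q', hq'⟩ := mem_comp_iff.mp (hφ n a' haComp)
      have hq'I : q' ∈ Iset := ⟨φ, hφ, hq'⟩
      rw [hIgen] at hq'I
      obtain ⟨p, hp⟩ := Submodule.mem_span_singleton.mp hq'I
      rw [smul_eq_mul] at hp
      refine ⟨p, fun m => ?_, fun p2 hp2 => ?_⟩
      · have hident := hom_identity hf hPgr' φ hφ hq haP hq' m
        show az k (X * (X + C α)) q * (↑(φ m) : GWA k (X * (X + C α))) = az k (X * (X + C α)) (p * t₁) * (↑m : GWA k (X * (X + C α)))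
        rw [hident, ← hp]
      · have h1 := hp2 a'
        have h2 : az k (X * (X + C α)) q * ((φ a' : GWA k (X * (X + C α))))
            = az k (X * (X + C α)) (p * t₁) * ((a' : GWA k (X * (X + C α)))) :=
          hom_identity hf hPgr' φ hφ hq haP hq' a' |>.trans (by rw [← hp])
        have h3 : az k (X * (X + C α)) (p2 * t₁) * (a' : GWA k (X * (X + C α)))
            = az k (X * (X + C α)) (p * t₁) * (a' : GWA k (X * (X + C α))) := by
          rw [← h2]
          exact h1.symm
        rw [ha'] at h3
        have h3' : az k (X * (X + C α)) (p2 * t₁)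
              * (az k (X * (X + C α)) q * gwaMon k (X * (X + C α)) n)
            = az k (X * (X + C α)) (p * t₁)
              * (az k (X * (X + C α)) q * gwaMon k (X * (X + C α)) n) := h3
        have h4 : p2 * t₁ * q = p * t₁ * q := by
          apply az_mon_cancel hf (c := n)
          rw [az_mul (p2 * t₁) q, az_mul (p * t₁) q,
            mul_assoc (az k (X * (X + C α)) (p2 * t₁)),
            mul_assoc (az k (X * (X + C α)) (p * t₁))]
          exact h3'
        exact mul_right_cancel₀ (mul_ne_zero ht₁ hq)
          (by rw [mul_assoc, mul_assoc] at h4; exact h4)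

end
end

section
/- Let P and Q be finitely generated graded rank one projective A(f)-modules embedded in Q_gr(A(f)), and let f: P → Q be a maximal embedding. Then the finite-length module Q/f(P) is supported, as a left k[z]-module, only at points of ℤ ∪ (ℤ − α). -/
open Polynomial

noncomputable section

set_option maxHeartbeats 1000000

namespace GWAP

variable {k : Type} [Field k] (f : Polynomial k)

/-- `za f p` is `p(z)` inside the GWA. -/
def za (p : Polynomial k) : GWA k f := aeval (gwaZ k f) p

@[simp] lemma za_mul (p q : Polynomial k) : za f (p * q) = za f p * za f q := map_mul _ _ _
@[simp] lemma za_add (p q : Polynomial k) : za f (p + q) = za f p + za f q := map_add _ _ _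
@[simp] lemma za_sub (p q : Polynomial k) : za f (p - q) = za f p - za f q := map_sub _ _ _
@[simp] lemma za_one : za f 1 = 1 := map_one _
@[simp] lemma za_zero : za f 0 = 0 := map_zero _
@[simp] lemma za_X : za f X = gwaZ k f := aeval_X _

lemma mk_aeval (p : Polynomial k) :
    RingQuot.mkAlgHom k (gwaRel k f) (aeval (FreeAlgebra.ι k 2) p) = za f p := by
  rw [za, ← Polynomial.aeval_algHom_apply]
  rfl

lemma rel_xz : gwaX k f * gwaZ k f = (gwaZ k f + 1) * gwaX k f := by
  have h := RingQuot.mkAlgHom_rel k (gwaRel.xz (k := k) (f := f))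
  simpa [gwaX, gwaZ, map_mul, map_add, map_one] using h

lemma rel_yz : gwaY k f * gwaZ k f = (gwaZ k f - 1) * gwaY k f := by
  have h := RingQuot.mkAlgHom_rel k (gwaRel.yz (k := k) (f := f))
  simpa [gwaY, gwaZ, map_mul, map_sub, map_one] using h

lemma rel_xy : gwaX k f * gwaY k f = za f f := by
  have h := RingQuot.mkAlgHom_rel k (gwaRel.xy (k := k) (f := f))
  rw [map_mul] at h
  rw [gwaX, gwaY, h, mk_aeval]

lemma rel_yx : gwaY k f * gwaX k f = za f (f.comp (X - 1)) := by
  have h := RingQuot.mkAlgHom_rel k (gwaRel.yx (k := k) (f := f))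
  rw [map_mul] at h
  rw [gwaY, gwaX, h, mk_aeval]


lemma x_za (p : Polynomial k) : gwaX k f * za f p = za f (p.comp (X + 1)) * gwaX k f := by
  induction p using Polynomial.induction_on with
  | C a =>
      simp only [comp_C, za]
      simp [aeval_C, Algebra.commutes]
  | add p q hp hq =>
      simp only [add_comp, za_add, mul_add, add_mul, hp, hq]
  | monomial n a hn =>
      have h1 : (C a : Polynomial k) * X ^ (n + 1) = (C a * X ^ n) * X := by ring
      rw [h1, mul_comp, X_comp, za_mul, ← mul_assoc, hn, za_X, mul_assoc, rel_xz,
        za_mul, ← mul_assoc]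
      congr 2
      simp [za]

lemma y_za (p : Polynomial k) : gwaY k f * za f p = za f (p.comp (X - 1)) * gwaY k f := by
  induction p using Polynomial.induction_on with
  | C a =>
      simp only [comp_C, za]
      simp [aeval_C, Algebra.commutes]
  | add p q hp hq =>
      simp only [add_comp, za_add, mul_add, add_mul, hp, hq]
  | monomial n a hn =>
      have h1 : (C a : Polynomial k) * X ^ (n + 1) = (C a * X ^ n) * X := by ring
      rw [h1, mul_comp, X_comp, za_mul, ← mul_assoc, hn, za_X, mul_assoc, rel_yz,
        za_mul, ← mul_assoc]
      congr 2
      simp [za]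

lemma xpow_za (j : ℕ) (p : Polynomial k) :
    gwaX k f ^ j * za f p = za f (p.comp (X + C (j : k))) * gwaX k f ^ j := by
  induction j generalizing p with
  | zero => simp
  | succ j hj =>
      rw [pow_succ, mul_assoc, x_za, ← mul_assoc, hj (p.comp (X + 1)), mul_assoc,
        ← pow_succ]
      congr 2
      rw [comp_assoc]
      congr 1
      simp only [add_comp, X_comp, one_comp]
      push_cast
      simp only [map_add, map_one]
      ring

lemma ypow_za (j : ℕ) (p : Polynomial k) :
    gwaY k f ^ j * za f p = za f (p.comp (X - C (j : k))) * gwaY k f ^ j := by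
  induction j generalizing p with
  | zero => simp
  | succ j hj =>
      rw [pow_succ, mul_assoc, y_za, ← mul_assoc, hj (p.comp (X - 1)), mul_assoc,
        ← pow_succ]
      congr 2
      rw [comp_assoc]
      congr 1
      simp only [sub_comp, X_comp, one_comp]
      push_cast
      simp only [map_add, map_one]
      ring

lemma mon_za (n : ℤ) (p : Polynomial k) :
    gwaMon k f n * za f p = za f (p.comp (X + C (n : k))) * gwaMon k f n := by
  by_cases h : 0 ≤ n
  · rw [gwaMon, if_pos h, xpow_za]
    have hc : ((n.toNat : ℕ) : k) = (n : k) := by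
      exact_mod_cast congrArg (fun m : ℤ => (m : k)) (Int.toNat_of_nonneg h)
    rw [hc]
  · rw [gwaMon, if_neg h, ypow_za]
    have hc : (((-n).toNat : ℕ) : k) = -(n : k) := by
      exact_mod_cast congrArg (fun m : ℤ => (m : k)) (Int.toNat_of_nonneg (by omega : (0:ℤ) ≤ -n))
    rw [hc, map_neg, sub_neg_eq_add]

def cX (n : ℤ) : Polynomial k := if 0 ≤ n then 1 else f.comp (X + C (n : k))
def cY (n : ℤ) : Polynomial k := if n ≤ 0 then 1 else f.comp (X + C ((n : k) - 1))

lemma mon_nonneg {n : ℤ} (h : 0 ≤ n) : gwaMon k f n = gwaX k f ^ n.toNat := if_pos h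

lemma mon_nonpos {n : ℤ} (h : n ≤ 0) : gwaMon k f n = gwaY k f ^ (-n).toNat := by
  rcases eq_or_lt_of_le h with h0 | h0
  · subst h0; simp [gwaMon]
  · exact if_neg (by omega)

lemma mon_zero : gwaMon k f 0 = 1 := by simp [gwaMon]

lemma mon_mul_x (n : ℤ) :
    gwaMon k f n * gwaX k f = za f (cX f n) * gwaMon k f (n + 1) := by
  by_cases h : 0 ≤ n
  · rw [cX, if_pos h, za_one, one_mul, mon_nonneg f h, mon_nonneg f (by omega : (0:ℤ) ≤ n + 1),
      show (n+1).toNat = n.toNat + 1 by omega, pow_succ]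
  · have hm : 1 ≤ (-n).toNat := by omega
    have h1 : gwaMon k f n = gwaY k f ^ ((-n).toNat - 1) * gwaY k f := by
      rw [mon_nonpos f (by omega : n ≤ 0), ← pow_succ]
      congr 1; omega
    have h2 : gwaMon k f (n + 1) = gwaY k f ^ ((-n).toNat - 1) := by
      rw [mon_nonpos f (by omega : n + 1 ≤ 0)]
      congr 1; omega
    rw [h1, mul_assoc, rel_yx, ypow_za, h2, cX, if_neg h]
    congr 2
    rw [comp_assoc]
    congr 1
    have hc : (((-n).toNat - 1 : ℕ) : k) = -(n : k) - 1 := by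
      have : (((-n).toNat - 1 : ℕ) : ℤ) = -n - 1 := by omega
      exact_mod_cast congrArg (fun m : ℤ => (m : k)) this
    simp only [sub_comp, X_comp, one_comp, hc]
    simp only [map_sub, map_neg, map_one]
    ring

lemma mon_mul_y (n : ℤ) :
    gwaMon k f n * gwaY k f = za f (cY f n) * gwaMon k f (n - 1) := by
  by_cases h : n ≤ 0
  · rw [cY, if_pos h, za_one, one_mul, mon_nonpos f h, mon_nonpos f (by omega : n - 1 ≤ 0),
      show (-(n-1)).toNat = (-n).toNat + 1 by omega, pow_succ]
  · have hm : 1 ≤ n.toNat := by omega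
    have h1 : gwaMon k f n = gwaX k f ^ (n.toNat - 1) * gwaX k f := by
      rw [mon_nonneg f (by omega : (0:ℤ) ≤ n), ← pow_succ]
      congr 1; omega
    have h2 : gwaMon k f (n - 1) = gwaX k f ^ (n.toNat - 1) := by
      rw [mon_nonneg f (by omega : (0:ℤ) ≤ n - 1)]
      congr 1; omega
    rw [h1, mul_assoc, rel_xy, xpow_za, h2, cY, if_neg h]
    congr 2
    have hc : ((n.toNat - 1 : ℕ) : k) = (n : k) - 1 := by
      have : ((n.toNat - 1 : ℕ) : ℤ) = n - 1 := by omega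
      exact_mod_cast congrArg (fun m : ℤ => (m : k)) this
    rw [hc]

lemma x_mul_mon (n : ℤ) :
    gwaX k f * gwaMon k f n = za f (if 0 ≤ n then 1 else f) * gwaMon k f (n + 1) := by
  by_cases h : 0 ≤ n
  · rw [if_pos h, za_one, one_mul, mon_nonneg f h, mon_nonneg f (by omega : (0:ℤ) ≤ n + 1),
      show (n+1).toNat = n.toNat + 1 by omega, pow_succ']
  · have hm : 1 ≤ (-n).toNat := by omega
    have h1 : gwaMon k f n = gwaY k f * gwaY k f ^ ((-n).toNat - 1) := by
      rw [mon_nonpos f (by omega : n ≤ 0), ← pow_succ']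
      congr 1; omega
    have h2 : gwaMon k f (n + 1) = gwaY k f ^ ((-n).toNat - 1) := by
      rw [mon_nonpos f (by omega : n + 1 ≤ 0)]
      congr 1; omega
    rw [h1, ← mul_assoc, rel_xy, h2, if_neg h]

lemma y_mul_mon (n : ℤ) :
    gwaY k f * gwaMon k f n
      = za f (if n ≤ 0 then 1 else f.comp (X - 1)) * gwaMon k f (n - 1) := by
  by_cases h : n ≤ 0
  · rw [if_pos h, za_one, one_mul, mon_nonpos f h, mon_nonpos f (by omega : n - 1 ≤ 0),
      show (-(n-1)).toNat = (-n).toNat + 1 by omega, pow_succ']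
  · have hm : 1 ≤ n.toNat := by omega
    have h1 : gwaMon k f n = gwaX k f * gwaX k f ^ (n.toNat - 1) := by
      rw [mon_nonneg f (by omega : (0:ℤ) ≤ n), ← pow_succ']
      congr 1; omega
    have h2 : gwaMon k f (n - 1) = gwaX k f ^ (n.toNat - 1) := by
      rw [mon_nonneg f (by omega : (0:ℤ) ≤ n - 1)]
      congr 1; omega
    rw [h1, ← mul_assoc, rel_yx, h2, if_neg h]

lemma mon_mul_mon (m n : ℤ) :
    ∃ c : Polynomial k, gwaMon k f m * gwaMon k f n = za f c * gwaMon k f (m + n) := by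
  induction m using Int.induction_on with
  | zero => exact ⟨1, by rw [mon_zero, one_mul, za_one, one_mul, zero_add]⟩
  | succ i hi =>
      obtain ⟨c, hc⟩ := hi
      have hx : gwaMon k f ((i : ℤ) + 1) = gwaX k f * gwaMon k f i := by
        rw [x_mul_mon, if_pos (by positivity), za_one, one_mul]
      obtain ⟨e, he⟩ : ∃ e : Polynomial k,
          gwaX k f * gwaMon k f ((i : ℤ) + n) = za f e * gwaMon k f ((i : ℤ) + n + 1) :=
        ⟨_, x_mul_mon f _⟩
      refine ⟨c.comp (X + 1) * e, ?_⟩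
      rw [hx, mul_assoc, hc, ← mul_assoc]
      rw [show gwaX k f * za f c = za f (c.comp (X + 1)) * gwaX k f from x_za f c]
      rw [mul_assoc, he, ← mul_assoc, ← za_mul]
      congr 2
      omega
  | pred i hi =>
      obtain ⟨c, hc⟩ := hi
      have hy : gwaMon k f (-(i : ℤ) - 1) = gwaY k f * gwaMon k f (-(i : ℤ)) := by
        rw [y_mul_mon, if_pos (by omega), za_one, one_mul]
      obtain ⟨e, he⟩ : ∃ e : Polynomial k,
          gwaY k f * gwaMon k f (-(i : ℤ) + n) = za f e * gwaMon k f (-(i : ℤ) + n - 1) :=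
        ⟨_, y_mul_mon f _⟩
      refine ⟨c.comp (X - 1) * e, ?_⟩
      rw [hy, mul_assoc, hc, ← mul_assoc]
      rw [show gwaY k f * za f c = za f (c.comp (X - 1)) * gwaY k f from y_za f c]
      rw [mul_assoc, he, ← mul_assoc, ← za_mul]
      congr 2
      omega

lemma cX_mul_cY (n : ℤ) : cX f n * cY f (n + 1) = f.comp (X + C (n : k)) := by
  by_cases h : 0 ≤ n
  · rw [cX, if_pos h, cY, if_neg (by omega), one_mul]
    congr 2
    push_cast
    ring
  · rw [cX, if_neg h, cY, if_pos (by omega), mul_one]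

/-- The degree-`n` component, as an honest submodule with explicit membership. -/
def compSub (n : ℤ) : Submodule k (GWA k f) where
  carrier := {w | ∃ q : Polynomial k, w = aeval (gwaZ k f) q * gwaMon k f n}
  add_mem' := by
    rintro a b ⟨p, rfl⟩ ⟨q, rfl⟩
    exact ⟨p + q, by rw [map_add, add_mul]⟩
  zero_mem' := ⟨0, by simp⟩
  smul_mem' := by
    rintro c a ⟨p, rfl⟩
    refine ⟨C c * p, ?_⟩
    rw [map_mul, aeval_C, mul_assoc, ← Algebra.smul_def]

lemma gwaComp_eq (n : ℤ) : gwaComp k f n = compSub f n := by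
  apply le_antisymm
  · rw [gwaComp]
    exact Submodule.span_le.2 (fun w hw => hw)
  · intro w hw
    exact Submodule.subset_span hw

lemma mem_comp_iff {w : GWA k f} {n : ℤ} :
    w ∈ gwaComp k f n ↔ ∃ q : Polynomial k, w = za f q * gwaMon k f n := by
  rw [gwaComp_eq]; rfl

/-! ### A representation of the GWA, used to separate graded components -/

section Rep

abbrev KK (k : Type) [Field k] := RatFunc k
abbrev MM (k : Type) [Field k] := ℤ →₀ RatFunc k

/-- Shift `p(X) ↦ p(X+c)` as a map to rational functions. -/
def shiftPoly (c : k) : Polynomial k →ₐ[k] RatFunc k :=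
  aeval (algebraMap (Polynomial k) (RatFunc k) (X + C c))

lemma comp_linear_ne_zero {p : Polynomial k} (c : k) (hp : p ≠ 0) :
    p.comp (X + C c) ≠ 0 := by
  intro h
  apply hp
  have := congrArg (fun q => q.comp (X - C c)) h
  simpa [comp_assoc] using this

lemma shiftPoly_apply (c : k) (p : Polynomial k) :
    shiftPoly c p = algebraMap (Polynomial k) (RatFunc k) (p.comp (X + C c)) := by
  rw [shiftPoly, Polynomial.aeval_algebraMap_apply, comp_eq_aeval]

lemma shiftPoly_cond (c : k) :
    nonZeroDivisors (Polynomial k) ≤ Submonoid.comap (shiftPoly c) (nonZeroDivisors (RatFunc k)) := by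
  intro p hp
  rw [mem_nonZeroDivisors_iff_ne_zero] at hp
  rw [Submonoid.mem_comap, mem_nonZeroDivisors_iff_ne_zero, shiftPoly_apply]
  exact (map_ne_zero_iff _ (RatFunc.algebraMap_injective k)).2 (comp_linear_ne_zero c hp)

/-- Shift automorphism-ish of the rational function field. -/
def tau (c : k) : RatFunc k →ₐ[k] RatFunc k :=
  RatFunc.liftAlgHom (shiftPoly c) (shiftPoly_cond c)

lemma tau_algebraMap (c : k) (p : Polynomial k) :
    tau c (algebraMap (Polynomial k) (RatFunc k) p)
      = algebraMap (Polynomial k) (RatFunc k) (p.comp (X + C c)) := by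
  have h := RatFunc.liftAlgHom_apply_div (shiftPoly c) (shiftPoly_cond c) p 1
  simpa [shiftPoly_apply, tau] using h

lemma tau_tau (c c' : k) (g : RatFunc k) : tau c (tau c' g) = tau (c + c') g := by
  rw [← RatFunc.num_div_denom g, map_div₀, map_div₀, map_div₀]
  congr 1 <;>
  · rw [tau_algebraMap, tau_algebraMap, tau_algebraMap, comp_assoc]
    congr 2
    simp only [add_comp, X_comp, C_comp, map_add]
    ring

lemma tau_zero_apply (g : RatFunc k) : tau (0 : k) g = g := by
  rw [← RatFunc.num_div_denom g, map_div₀]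
  congr 1 <;> simp [tau_algebraMap]

lemma tau_neg_tau (g : RatFunc k) : tau (1 : k) (tau (-1 : k) g) = g := by
  rw [tau_tau]
  simpa using tau_zero_apply g

lemma tau_tau_neg (g : RatFunc k) : tau (-1 : k) (tau (1 : k) g) = g := by
  rw [tau_tau]
  simpa using tau_zero_apply g

/-- Scalar multiplication by a rational function, as an algebra map to endomorphisms. -/
def zscale : RatFunc k →ₐ[k] Module.End k (MM k) := Algebra.lsmul k k (MM k)

lemma zscale_single (g h : RatFunc k) (n : ℤ) :
    zscale g (Finsupp.single n h) = Finsupp.single n (g * h) := by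
  show g • Finsupp.single n h = _
  rw [Finsupp.smul_single, smul_eq_mul]

def aCoef (n : ℤ) : RatFunc k := if 0 ≤ n then 1 else algebraMap (Polynomial k) _ f
def bCoef (n : ℤ) : RatFunc k :=
  if n ≤ 0 then 1 else algebraMap (Polynomial k) _ (f.comp (X - 1))

def SxE : Module.End k (MM k) :=
  Finsupp.lsum k fun n => (Finsupp.lsingle (n + 1)).comp
    ((LinearMap.mulLeft k (aCoef f n)).comp (tau (1 : k)).toLinearMap)

def SyE : Module.End k (MM k) :=
  Finsupp.lsum k fun n => (Finsupp.lsingle (n - 1)).comp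
    ((LinearMap.mulLeft k (bCoef f n)).comp (tau (-1 : k)).toLinearMap)

def SzE : Module.End k (MM k) := zscale (RatFunc.X)

lemma SxE_single (n : ℤ) (g : RatFunc k) :
    SxE f (Finsupp.single n g) = Finsupp.single (n + 1) (aCoef f n * tau 1 g) := by
  rw [SxE, Finsupp.lsum_single]
  rfl

lemma SyE_single (n : ℤ) (g : RatFunc k) :
    SyE f (Finsupp.single n g) = Finsupp.single (n - 1) (bCoef f n * tau (-1) g) := by
  rw [SyE, Finsupp.lsum_single]
  rfl

lemma SzE_single (n : ℤ) (g : RatFunc k) :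
    SzE (Finsupp.single n g) = Finsupp.single n (RatFunc.X * g) := zscale_single _ _ _

end Rep

section Rep2

lemma tau_one_X : tau (1 : k) RatFunc.X = RatFunc.X + 1 := by
  rw [← RatFunc.algebraMap_X (K := k), tau_algebraMap]
  simp

lemma tau_neg_one_X : tau (-1 : k) RatFunc.X = RatFunc.X - 1 := by
  rw [← RatFunc.algebraMap_X (K := k), tau_algebraMap]
  simp [sub_eq_add_neg]

lemma endo_xz : SxE f * SzE = (SzE + (1 : Module.End k (MM k))) * SxE f := by
  apply Finsupp.lhom_ext
  intro n g
  simp only [Module.End.mul_apply, LinearMap.add_apply, Module.End.one_apply,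
    SxE_single, SzE_single, map_mul, tau_one_X, Finsupp.add_apply]
  rw [← Finsupp.single_add]
  ring_nf

lemma endo_yz : SyE f * SzE = (SzE - (1 : Module.End k (MM k))) * SyE f := by
  apply Finsupp.lhom_ext
  intro n g
  simp only [Module.End.mul_apply, LinearMap.sub_apply, Module.End.one_apply,
    SyE_single, SzE_single, map_mul, tau_neg_one_X]
  rw [← Finsupp.single_sub]
  ring_nf

lemma endo_xy : SxE f * SyE f = zscale (algebraMap (Polynomial k) (RatFunc k) f) := by
  apply Finsupp.lhom_ext
  intro n g
  simp only [Module.End.mul_apply, SxE_single, SyE_single, SzE_single, zscale_single,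
    map_mul, tau_neg_tau]
  congr 1
  · omega
  simp only [aCoef, bCoef]
  by_cases h : 0 ≤ n - 1
  · rw [if_pos h, if_neg (by omega : ¬ n ≤ 0), tau_algebraMap, comp_assoc]
    have h5 : ((X : Polynomial k) - 1).comp (X + C 1) = X := by
      simp only [sub_comp, X_comp, one_comp, map_one]
      ring
    rw [h5, comp_X, one_mul]
  · rw [if_neg h, if_pos (by omega : n ≤ 0), map_one, one_mul]

lemma endo_yx : SyE f * SxE f
    = zscale (algebraMap (Polynomial k) (RatFunc k) (f.comp (X - 1))) := by
  apply Finsupp.lhom_ext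
  intro n g
  simp only [Module.End.mul_apply, SxE_single, SyE_single, zscale_single,
    map_mul, tau_tau_neg]
  congr 1
  · omega
  simp only [aCoef, bCoef]
  by_cases h : 0 ≤ n
  · rw [if_pos h, if_neg (by omega : ¬ n + 1 ≤ 0), map_one, one_mul]
  · rw [if_neg h, if_pos (by omega : n + 1 ≤ 0), tau_algebraMap, one_mul]
    have h5 : (X : Polynomial k) + C (-1) = X - 1 := by
      rw [map_neg, map_one]
      ring
    rw [h5]

def genMap : Fin 3 → Module.End k (MM k) :=
  ![SxE f, SyE f, SzE]

def phi0 : FreeAlgebra k (Fin 3) →ₐ[k] Module.End k (MM k) :=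
  FreeAlgebra.lift k (genMap f)

@[simp] lemma phi0_ι0 : phi0 f (FreeAlgebra.ι k 0) = SxE f := by
  rw [phi0, FreeAlgebra.lift_ι_apply]; rfl
@[simp] lemma phi0_ι1 : phi0 f (FreeAlgebra.ι k 1) = SyE f := by
  rw [phi0, FreeAlgebra.lift_ι_apply]; rfl
@[simp] lemma phi0_ι2 : phi0 f (FreeAlgebra.ι k 2) = SzE := by
  rw [phi0, FreeAlgebra.lift_ι_apply]; rfl

lemma aeval_SzE (p : Polynomial k) :
    aeval (SzE : Module.End k (MM k)) p = zscale (algebraMap (Polynomial k) (RatFunc k) p) := by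
  rw [SzE, Polynomial.aeval_algHom_apply]
  congr 1
  rw [← RatFunc.algebraMap_X (K := k), Polynomial.aeval_algebraMap_apply,
    Polynomial.aeval_X_left_apply]

lemma phi0_rel : ∀ ⦃a b : FreeAlgebra k (Fin 3)⦄, gwaRel k f a b → phi0 f a = phi0 f b := by
  intro a b h
  cases h with
  | xz => simp only [map_mul, map_add, map_one, phi0_ι0, phi0_ι2]; exact endo_xz f
  | yz => simp only [map_mul, map_sub, map_one, phi0_ι1, phi0_ι2]; exact endo_yz f
  | xy =>
      rw [map_mul, phi0_ι0, phi0_ι1, ← Polynomial.aeval_algHom_apply, phi0_ι2,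
        aeval_SzE]
      exact endo_xy f
  | yx =>
      rw [map_mul, phi0_ι1, phi0_ι0, ← Polynomial.aeval_algHom_apply, phi0_ι2,
        aeval_SzE]
      exact endo_yx f

def rho : GWA k f →ₐ[k] Module.End k (MM k) :=
  RingQuot.liftAlgHom k ⟨phi0 f, phi0_rel f⟩

@[simp] lemma rho_x : rho f (gwaX k f) = SxE f := by
  rw [gwaX, rho, RingQuot.liftAlgHom_mkAlgHom_apply, phi0_ι0]
@[simp] lemma rho_y : rho f (gwaY k f) = SyE f := by
  rw [gwaY, rho, RingQuot.liftAlgHom_mkAlgHom_apply, phi0_ι1]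
@[simp] lemma rho_z : rho f (gwaZ k f) = SzE := by
  rw [gwaZ, rho, RingQuot.liftAlgHom_mkAlgHom_apply, phi0_ι2]

lemma rho_za (p : Polynomial k) :
    rho f (za f p) = zscale (algebraMap (Polynomial k) (RatFunc k) p) := by
  rw [za, ← Polynomial.aeval_algHom_apply, rho_z, aeval_SzE]

def e0 : MM k := Finsupp.single 0 1

lemma rho_mon_e0 (n : ℤ) : rho f (gwaMon k f n) (e0 (k := k)) = Finsupp.single n 1 := by
  have hx : ∀ j : ℕ, (SxE f ^ j) (e0 (k := k)) = Finsupp.single (j : ℤ) 1 := by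
    intro j
    induction j with
    | zero => rfl
    | succ j hj =>
        rw [pow_succ', Module.End.mul_apply, hj, SxE_single, map_one, aCoef,
          if_pos (by positivity), one_mul]
        congr 1
        all_goals omega
  have hy : ∀ j : ℕ, (SyE f ^ j) (e0 (k := k)) = Finsupp.single (-(j : ℤ)) 1 := by
    intro j
    induction j with
    | zero => rfl
    | succ j hj =>
        rw [pow_succ', Module.End.mul_apply, hj, SyE_single, map_one, bCoef,
          if_pos (by omega), one_mul]
        congr 1
        all_goals omega
  by_cases h : 0 ≤ n
  · rw [gwaMon, if_pos h, map_pow, rho_x, hx]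
    congr 1
    omega
  · rw [gwaMon, if_neg h, map_pow, rho_y, hy]
    congr 1
    omega

lemma rho_za_mon_e0 (p : Polynomial k) (n : ℤ) :
    rho f (za f p * gwaMon k f n) (e0 (k := k))
      = Finsupp.single n (algebraMap (Polynomial k) (RatFunc k) p) := by
  rw [map_mul, Module.End.mul_apply, rho_mon_e0, rho_za, zscale_single, mul_one]

lemma sum_za_mon_eq_zero {s : Finset ℤ} {p : ℤ → Polynomial k}
    (h : ∑ n ∈ s, za f (p n) * gwaMon k f n = 0) : ∀ n ∈ s, p n = 0 := by
  intro j hj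
  have h2 : (rho f (∑ n ∈ s, za f (p n) * gwaMon k f n)) (e0 (k := k)) = 0 := by
    rw [h, map_zero]; rfl
  rw [map_sum, LinearMap.sum_apply] at h2
  simp only [rho_za_mon_e0] at h2
  have h3 := congrArg (fun v : MM k => v j) h2
  simp only [Finsupp.finset_sum_apply, Finsupp.coe_zero, Pi.zero_apply] at h3
  rw [Finset.sum_eq_single_of_mem j hj (fun b _ hb => Finsupp.single_eq_of_ne' hb),
    Finsupp.single_eq_same] at h3
  exact (map_eq_zero_iff _ (RatFunc.algebraMap_injective k)).1 h3

lemma sum_eq_sum_unique {s t : Finset ℤ} {p q : ℤ → Polynomial k}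
    (hp : ∀ n ∉ s, p n = 0) (hq : ∀ n ∉ t, q n = 0)
    (h : ∑ n ∈ s, za f (p n) * gwaMon k f n = ∑ n ∈ t, za f (q n) * gwaMon k f n) :
    ∀ n, p n = q n := by
  have h1 : ∑ n ∈ s ∪ t, za f (p n) * gwaMon k f n
      = ∑ n ∈ s, za f (p n) * gwaMon k f n := by
    refine (Finset.sum_subset Finset.subset_union_left ?_).symm
    intro n _ hn
    rw [hp n hn, za_zero, zero_mul]
  have h2 : ∑ n ∈ s ∪ t, za f (q n) * gwaMon k f n
      = ∑ n ∈ t, za f (q n) * gwaMon k f n := by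
    refine (Finset.sum_subset Finset.subset_union_right ?_).symm
    intro n _ hn
    rw [hq n hn, za_zero, zero_mul]
  have h0 : ∑ n ∈ s ∪ t, za f (p n - q n) * gwaMon k f n = 0 := by
    simp only [za_sub, sub_mul, Finset.sum_sub_distrib]
    rw [h1, h2, h, sub_self]
  intro n
  by_cases hn : n ∈ s ∪ t
  · have := sum_za_mon_eq_zero f h0 n hn
    exact sub_eq_zero.1 this
  · rw [hp n (fun c => hn (Finset.mem_union_left _ c)),
      hq n (fun c => hn (Finset.mem_union_right _ c))]

end Rep2

section Graded

lemma op_smul_eq (b w : GWA k f) : (MulOpposite.op b) • w = w * b := rfl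

/-- The ideal of `k[z]`-coefficients of degree-`n` elements of a right submodule `S`. -/
def JS (S : Submodule (GWA k f)ᵐᵒᵖ (GWA k f)) (n : ℤ) : Ideal (Polynomial k) where
  carrier := {p | za f p * gwaMon k f n ∈ S}
  add_mem' := by
    intro a b ha hb
    have := S.add_mem ha hb
    simpa [za_add, add_mul] using this
  zero_mem' := by
    have : za f (0 : Polynomial k) * gwaMon k f n = 0 := by simp
    simp only [Set.mem_setOf_eq, this]
    exact S.zero_mem
  smul_mem' := by
    intro c p hp
    have hs := S.smul_mem (MulOpposite.op (za f (c.comp (X - C (n : k))))) hp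
    rw [op_smul_eq, mul_assoc, mon_za] at hs
    simp only [Set.mem_setOf_eq, smul_eq_mul]
    have hc : ((c.comp (X - C (n : k))).comp (X + C (n : k))) = c := by
      rw [comp_assoc]
      have : ((X : Polynomial k) - C (n : k)).comp (X + C (n : k)) = X := by
        simp only [sub_comp, X_comp, C_comp]
        ring
      rw [this, comp_X]
    rw [hc, ← mul_assoc, ← za_mul, mul_comm p c] at hs
    exact hs

lemma mem_JS {S : Submodule (GWA k f)ᵐᵒᵖ (GWA k f)} {n : ℤ} {p : Polynomial k} :
    p ∈ JS f S n ↔ za f p * gwaMon k f n ∈ S := Iff.rfl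

/-- Degree-`n` homogeneous elements of `S`, as a `k`-submodule. -/
def Vn (S : Submodule (GWA k f)ᵐᵒᵖ (GWA k f)) (n : ℤ) : Submodule k (GWA k f) where
  carrier := {w | ∃ p ∈ JS f S n, w = za f p * gwaMon k f n}
  add_mem' := by
    rintro a b ⟨p, hp, rfl⟩ ⟨q, hq, rfl⟩
    exact ⟨p + q, (JS f S n).add_mem hp hq, by rw [za_add, add_mul]⟩
  zero_mem' := ⟨0, (JS f S n).zero_mem, by simp⟩
  smul_mem' := by
    rintro c a ⟨p, hp, rfl⟩
    refine ⟨C c * p, (JS f S n).mul_mem_left _ hp, ?_⟩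
    rw [za_mul, mul_assoc]
    have h5 : za f (C c) = algebraMap k (GWA k f) c := aeval_C _ _
    rw [h5, ← Algebra.smul_def]

def WS (S : Submodule (GWA k f)ᵐᵒᵖ (GWA k f)) : Submodule k (GWA k f) :=
  ⨆ n : ℤ, Vn f S n

lemma Vn_le_WS (S : Submodule (GWA k f)ᵐᵒᵖ (GWA k f)) (n : ℤ) : Vn f S n ≤ WS f S :=
  le_iSup (fun n => Vn f S n) n

lemma WS_mul (S : Submodule (GWA k f)ᵐᵒᵖ (GWA k f)) :
    ∀ a ∈ WS f S, ∀ b ∈ WS f (⊤ : Submodule (GWA k f)ᵐᵒᵖ (GWA k f)), a * b ∈ WS f S := by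
  intro a ha b hb
  refine Submodule.iSup_induction (motive := fun a => a * b ∈ WS f S) _ ha ?_ (by simp) ?_
  · intro n w hw
    refine Submodule.iSup_induction
      (motive := fun b => w * b ∈ WS f S) _ hb ?_ (by simp) ?_
    · rintro m v ⟨q, _, rfl⟩
      obtain ⟨p, hp, rfl⟩ := hw
      obtain ⟨c, hc⟩ := mon_mul_mon f n m
      have key : (za f p * gwaMon k f n) * (za f q * gwaMon k f m)
          = za f (p * (q.comp (X + C (n : k)) * c)) * gwaMon k f (n + m) := by
        rw [mul_assoc, ← mul_assoc (gwaMon k f n), mon_za, mul_assoc, hc,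
          ← mul_assoc, ← mul_assoc, ← za_mul, ← za_mul, mul_assoc p]
      have hmem : (za f p * gwaMon k f n) * (za f q * gwaMon k f m) ∈ S := by
        have := S.smul_mem (MulOpposite.op (za f q * gwaMon k f m)) hp
        rwa [op_smul_eq] at this
      rw [key] at hmem ⊢
      exact Vn_le_WS f S (n + m) ⟨_, hmem, rfl⟩
    · intro v₁ v₂ h₁ h₂
      rw [mul_add]
      exact (WS f S).add_mem h₁ h₂
  · intro a₁ a₂ h₁ h₂
    rw [add_mul]
    exact (WS f S).add_mem h₁ h₂

lemma mem_WS_top (b : GWA k f) : b ∈ WS f (⊤ : Submodule (GWA k f)ᵐᵒᵖ (GWA k f)) := by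
  obtain ⟨w, rfl⟩ := RingQuot.mkAlgHom_surjective k (gwaRel k f) b
  induction w using FreeAlgebra.induction with
  | grade0 r =>
      apply Vn_le_WS f _ 0
      refine ⟨C r, trivial, ?_⟩
      rw [mon_zero, mul_one, za, aeval_C]
      simp [Algebra.algebraMap_eq_smul_one]
  | grade1 i =>
      match i with
      | 0 => exact Vn_le_WS f _ 1 ⟨1, trivial, by
          rw [za_one, one_mul]
          show gwaX k f = gwaMon k f 1
          rw [gwaMon, if_pos (by omega)]
          norm_num⟩
      | 1 => exact Vn_le_WS f _ (-1) ⟨1, trivial, by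
          rw [za_one, one_mul]
          show gwaY k f = gwaMon k f (-1)
          rw [gwaMon, if_neg (by omega)]
          norm_num⟩
      | 2 => exact Vn_le_WS f _ 0 ⟨X, trivial, by rw [mon_zero, mul_one, za_X]; rfl⟩
  | mul w₁ w₂ h₁ h₂ =>
      rw [map_mul]
      exact WS_mul f ⊤ _ h₁ _ h₂
  | add w₁ w₂ h₁ h₂ =>
      rw [map_add]
      exact (WS f ⊤).add_mem h₁ h₂

lemma WS_mul_right (S : Submodule (GWA k f)ᵐᵒᵖ (GWA k f)) {a : GWA k f}
    (ha : a ∈ WS f S) (b : GWA k f) : a * b ∈ WS f S :=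
  WS_mul f S a ha b (mem_WS_top f b)

/-- A right submodule generated by homogeneous elements decomposes into components. -/
lemma graded_le_WS {S : Submodule (GWA k f)ᵐᵒᵖ (GWA k f)} {T : Set (GWA k f)}
    (hT : T ⊆ {m | m ∈ S ∧ ∃ n : ℤ, m ∈ gwaComp k f n})
    (hS : S = Submodule.span (GWA k f)ᵐᵒᵖ T) :
    ∀ a ∈ S, a ∈ WS f S := by
  intro a ha
  rw [hS] at ha
  refine Submodule.span_induction ?_ (by simp) ?_ ?_ ha
  · intro t ht
    obtain ⟨htS, n, htc⟩ := hT ht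
    rw [gwaComp_eq] at htc
    obtain ⟨q, rfl⟩ := htc
    exact Vn_le_WS f S n ⟨q, mem_JS f |>.2 htS, rfl⟩
  · intro w₁ w₂ _ _ h₁ h₂
    exact (WS f S).add_mem h₁ h₂
  · intro c w _ hw
    have hcw : c • w = w * c.unop := rfl
    rw [hcw]
    exact WS_mul_right f S hw _
  
lemma WS_rep {S : Submodule (GWA k f)ᵐᵒᵖ (GWA k f)} {a : GWA k f} (ha : a ∈ WS f S) :
    ∃ (s : Finset ℤ) (p : ℤ → Polynomial k), (∀ n, p n ∈ JS f S n) ∧ (∀ n ∉ s, p n = 0) ∧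
      a = ∑ n ∈ s, za f (p n) * gwaMon k f n := by
  refine Submodule.iSup_induction (motive := fun a => ∃ (s : Finset ℤ) (p : ℤ → Polynomial k),
    (∀ n, p n ∈ JS f S n) ∧ (∀ n ∉ s, p n = 0) ∧
      a = ∑ n ∈ s, za f (p n) * gwaMon k f n) _ ha ?_ ?_ ?_
  · rintro n w ⟨p0, hp0, rfl⟩
    refine ⟨{n}, fun m => if m = n then p0 else 0, ?_, ?_, ?_⟩
    · intro m
      by_cases h : m = n
      · subst h; simpa using hp0
      · simpa [h] using (JS f S m).zero_mem
    · intro m hm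
      have : m ≠ n := by simpa using hm
      simp [this]
    · simp
  · exact ⟨∅, 0, fun n => (JS f S n).zero_mem, fun _ _ => rfl, by simp⟩
  · rintro a₁ a₂ ⟨s₁, p₁, hJ₁, hz₁, rfl⟩ ⟨s₂, p₂, hJ₂, hz₂, rfl⟩
    refine ⟨s₁ ∪ s₂, p₁ + p₂, fun n => (JS f S n).add_mem (hJ₁ n) (hJ₂ n), ?_, ?_⟩
    · intro n hn
      simp only [Pi.add_apply,
        hz₁ n (fun c => hn (Finset.mem_union_left _ c)),
        hz₂ n (fun c => hn (Finset.mem_union_right _ c)), add_zero]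
    · have e₁ : ∑ n ∈ s₁ ∪ s₂, za f (p₁ n) * gwaMon k f n
          = ∑ n ∈ s₁, za f (p₁ n) * gwaMon k f n := by
        refine (Finset.sum_subset Finset.subset_union_left ?_).symm
        intro n _ hn
        rw [hz₁ n hn, za_zero, zero_mul]
      have e₂ : ∑ n ∈ s₁ ∪ s₂, za f (p₂ n) * gwaMon k f n
          = ∑ n ∈ s₂, za f (p₂ n) * gwaMon k f n := by
        refine (Finset.sum_subset Finset.subset_union_right ?_).symm
        intro n _ hn
        rw [hz₂ n hn, za_zero, zero_mul]
      rw [← e₁, ← e₂, ← Finset.sum_add_distrib]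
      congr 1
      ext n
      rw [Pi.add_apply, za_add, add_mul]

end Graded

section Helpers

lemma za_comm (a b : Polynomial k) : za f a * za f b = za f b * za f a := by
  rw [← za_mul, ← za_mul, mul_comm]

lemma comp_linear_cancel (p : Polynomial k) (c : k) :
    (p.comp (X - C c)).comp (X + C c) = p := by
  rw [comp_assoc]
  have h5 : ((X : Polynomial k) - C c).comp (X + C c) = X := by
    simp only [sub_comp, X_comp, C_comp]
    ring
  rw [h5, comp_X]

lemma left_mul_lam (lam : k) (q : Polynomial k) (n : ℤ) :
    (za f q * gwaMon k f n) * za f ((X - C lam).comp (X - C (n : k)))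
      = za f (X - C lam) * (za f q * gwaMon k f n) := by
  rw [mul_assoc, mon_za, comp_linear_cancel, ← mul_assoc, ← mul_assoc, za_comm, mul_assoc]

lemma mul_sum_za (g : Polynomial k) (s : Finset ℤ) (p : ℤ → Polynomial k) :
    za f g * (∑ n ∈ s, za f (p n) * gwaMon k f n)
      = ∑ n ∈ s, za f (g * p n) * gwaMon k f n := by
  rw [Finset.mul_sum]
  refine Finset.sum_congr rfl fun n _ => ?_
  rw [← mul_assoc, ← za_mul]

/-- Every element decomposes as a finite sum of graded pieces. -/
lemma top_rep (a : GWA k f) :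
    ∃ (s : Finset ℤ) (p : ℤ → Polynomial k), (∀ n ∉ s, p n = 0) ∧
      a = ∑ n ∈ s, za f (p n) * gwaMon k f n := by
  obtain ⟨s, p, _, hz, he⟩ := WS_rep f (mem_WS_top f a)
  exact ⟨s, p, hz, he⟩

lemma zla_cancel (lam : k) {u u' : GWA k f}
    (h : za f (X - C lam) * u = za f (X - C lam) * u') : u = u' := by
  obtain ⟨s, p, hz, rfl⟩ := top_rep f u
  obtain ⟨t, q, hz', rfl⟩ := top_rep f u'
  rw [mul_sum_za, mul_sum_za] at h
  have hpq : ∀ n, (X - C lam) * p n = (X - C lam) * q n :=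
    sum_eq_sum_unique f (fun n hn => by rw [hz n hn, mul_zero])
      (fun n hn => by rw [hz' n hn, mul_zero]) h
  have hpq' : ∀ n, p n = q n := fun n =>
    mul_left_cancel₀ (Polynomial.X_sub_C_ne_zero lam) (hpq n)
  have e1 : ∑ n ∈ s, za f (p n) * gwaMon k f n
      = ∑ n ∈ s ∪ t, za f (p n) * gwaMon k f n :=
    Finset.sum_subset Finset.subset_union_left
      (fun n _ hn => by rw [hz n hn, za_zero, zero_mul])
  have e2 : ∑ n ∈ t, za f (q n) * gwaMon k f n
      = ∑ n ∈ s ∪ t, za f (q n) * gwaMon k f n :=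
    Finset.sum_subset Finset.subset_union_right
      (fun n _ hn => by rw [hz' n hn, za_zero, zero_mul])
  rw [e1, e2]
  exact Finset.sum_congr rfl fun n _ => by rw [hpq' n]

/-- If `(z-λ)·u` is homogeneous of degree `n`, then `u` is, with exactly divided
coefficient. -/
lemma div_single (lam : k) {u : GWA k f} {w : Polynomial k} {n : ℤ}
    (h : za f (X - C lam) * u = za f w * gwaMon k f n) :
    ∃ t : Polynomial k, u = za f t * gwaMon k f n ∧ (X - C lam) * t = w := by
  obtain ⟨s, p, hz, rfl⟩ := top_rep f u
  rw [mul_sum_za] at h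
  have h2 : za f w * gwaMon k f n = ∑ m ∈ {n}, za f (if m = n then w else 0) * gwaMon k f m := by
    simp
  rw [h2] at h
  have hpq : ∀ m, (X - C lam) * p m = (if m = n then w else 0) :=
    sum_eq_sum_unique f (fun m hm => by rw [hz m hm, mul_zero])
      (fun m hm => by rw [if_neg (by simpa using hm)]) h
  refine ⟨p n, ?_, by simpa using hpq n⟩
  rw [Finset.sum_eq_single n]
  · intro b _ hb
    have : p b = 0 := by
      have := hpq b
      rw [if_neg hb] at this
      exact (mul_eq_zero.1 this).resolve_left (Polynomial.X_sub_C_ne_zero lam)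
    rw [this, za_zero, zero_mul]
  · intro hn
    rw [hz n hn, za_zero, zero_mul]

lemma cX_ne_zero (hf : f ≠ 0) (n : ℤ) : cX f n ≠ 0 := by
  rw [cX]
  split
  · exact one_ne_zero
  · exact comp_linear_ne_zero _ hf

lemma cY_ne_zero (hf : f ≠ 0) (n : ℤ) : cY f n ≠ 0 := by
  rw [cY]
  split
  · exact one_ne_zero
  · exact comp_linear_ne_zero _ hf

lemma JS_step_up {S : Submodule (GWA k f)ᵐᵒᵖ (GWA k f)} {n : ℤ} {p : Polynomial k}
    (hp : p ∈ JS f S n) : p * cX f n ∈ JS f S (n + 1) := by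
  have hs := S.smul_mem (MulOpposite.op (gwaX k f)) hp
  rw [op_smul_eq, mul_assoc, mon_mul_x, ← mul_assoc, ← za_mul] at hs
  exact hs

lemma JS_step_down {S : Submodule (GWA k f)ᵐᵒᵖ (GWA k f)} {n : ℤ} {p : Polynomial k}
    (hp : p ∈ JS f S n) : p * cY f n ∈ JS f S (n - 1) := by
  have hs := S.smul_mem (MulOpposite.op (gwaY k f)) hp
  rw [op_smul_eq, mul_assoc, mon_mul_y, ← mul_assoc, ← za_mul] at hs
  exact hs

lemma JS_ne_bot_all (hf : f ≠ 0) {S : Submodule (GWA k f)ᵐᵒᵖ (GWA k f)} {n₀ : ℤ}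
    (h : JS f S n₀ ≠ ⊥) : ∀ n, JS f S n ≠ ⊥ := by
  have key : ∀ (j : ℕ), JS f S (n₀ + j) ≠ ⊥ ∧ JS f S (n₀ - j) ≠ ⊥ := by
    intro j
    induction j with
    | zero => exact ⟨by simpa using h, by simpa using h⟩
    | succ j hj =>
        obtain ⟨h1, h2⟩ := hj
        constructor
        · obtain ⟨p, hp, hpne⟩ := Submodule.exists_mem_ne_zero_of_ne_bot h1
          have := JS_step_up f hp
          have hne : p * cX f (n₀ + j) ≠ 0 := mul_ne_zero hpne (cX_ne_zero f hf _)
          intro hbot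
          rw [show (n₀ : ℤ) + (j + 1 : ℕ) = n₀ + j + 1 by push_cast; ring] at hbot
          rw [hbot] at this
          exact hne (by simpa using this)
        · obtain ⟨p, hp, hpne⟩ := Submodule.exists_mem_ne_zero_of_ne_bot h2
          have := JS_step_down f hp
          have hne : p * cY f (n₀ - j) ≠ 0 := mul_ne_zero hpne (cY_ne_zero f hf _)
          intro hbot
          rw [show (n₀ : ℤ) - (j + 1 : ℕ) = n₀ - j - 1 by push_cast; ring] at hbot
          rw [hbot] at this
          exact hne (by simpa using this)
  intro n
  rcases le_or_gt n₀ n with h' | h'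
  · have := (key (n - n₀).toNat).1
    rwa [show n₀ + ((n - n₀).toNat : ℤ) = n by omega] at this
  · have := (key (n₀ - n).toNat).2
    rwa [show n₀ - ((n₀ - n).toNat : ℤ) = n by omega] at this

/-- Generator of the coefficient ideal. -/
def genJ (S : Submodule (GWA k f)ᵐᵒᵖ (GWA k f)) (n : ℤ) : Polynomial k :=
  haveI := IsPrincipalIdealRing.principal (JS f S n)
  Submodule.IsPrincipal.generator (JS f S n)

lemma genJ_mem (S : Submodule (GWA k f)ᵐᵒᵖ (GWA k f)) (n : ℤ) : genJ f S n ∈ JS f S n := by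
  haveI := IsPrincipalIdealRing.principal (JS f S n)
  exact Submodule.IsPrincipal.generator_mem _

lemma genJ_dvd {S : Submodule (GWA k f)ᵐᵒᵖ (GWA k f)} {n : ℤ} {p : Polynomial k}
    (hp : p ∈ JS f S n) : genJ f S n ∣ p := by
  haveI := IsPrincipalIdealRing.principal (JS f S n)
  exact (Submodule.IsPrincipal.mem_iff_generator_dvd _).1 hp

lemma genJ_dvd_mem {S : Submodule (GWA k f)ᵐᵒᵖ (GWA k f)} {n : ℤ} {p : Polynomial k}
    (hp : genJ f S n ∣ p) : p ∈ JS f S n := by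
  haveI := IsPrincipalIdealRing.principal (JS f S n)
  exact (Submodule.IsPrincipal.mem_iff_generator_dvd _).2 hp

lemma genJ_ne_zero {S : Submodule (GWA k f)ᵐᵒᵖ (GWA k f)} {n : ℤ}
    (h : JS f S n ≠ ⊥) : genJ f S n ≠ 0 := by
  haveI := IsPrincipalIdealRing.principal (JS f S n)
  intro h0
  apply h
  have h1 := Submodule.IsPrincipal.span_singleton_generator (JS f S n)
  have h0' : Submodule.IsPrincipal.generator (JS f S n) = 0 := h0
  rw [← h1, h0']
  simp

lemma rootMult_le_of_dvd {a b : Polynomial k} (h : a ∣ b) (hb : b ≠ 0) (lam : k) :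
    rootMultiplicity lam a ≤ rootMultiplicity lam b := by
  obtain ⟨c, rfl⟩ := h
  rw [Polynomial.rootMultiplicity_mul hb]
  omega

lemma const_of_step (g : ℤ → ℕ) (h : ∀ n, g (n + 1) = g n) : ∀ n m, g n = g m := by
  have key : ∀ n : ℤ, g n = g 0 := by
    intro n
    induction n using Int.induction_on with
    | zero => rfl
    | succ i hi => rw [h i, hi]
    | pred i hi =>
        have h2 := h (-(i:ℤ) - 1)
        rw [show (-(i:ℤ) - 1 + 1) = -(i:ℤ) by ring] at h2
        rw [← h2]
        exact hi
  intro n m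
  rw [key n, key m]

end Helpers

section ImageWS

lemma image_le_WS (P Q : Submodule (GWA k f)ᵐᵒᵖ (GWA k f))
    (hPgr : P = Submodule.span (GWA k f)ᵐᵒᵖ
      {m | m ∈ P ∧ ∃ n : ℤ, m ∈ gwaComp k f n})
    (ψ : ↥P →ₗ[(GWA k f)ᵐᵒᵖ] ↥Q)
    (hψgr : IsGradedHom k f P Q ψ) :
    ∀ m : ↥P, (ψ m : GWA k f) ∈ WS f (LinearMap.range (Q.subtype.comp ψ)) := by
  set R := LinearMap.range (Q.subtype.comp ψ) with hR
  have key : ∀ a, a ∈ Submodule.span (GWA k f)ᵐᵒᵖ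
      {m | m ∈ P ∧ ∃ n : ℤ, m ∈ gwaComp k f n} →
      ∀ ha : a ∈ P, (ψ ⟨a, ha⟩ : GWA k f) ∈ WS f R := by
    intro a ha'
    refine Submodule.span_induction ?_ ?_ ?_ ?_ ha'
    · rintro x ⟨hxP, n, hxc⟩ ha
      have hc := hψgr n ⟨x, ha⟩ hxc
      rw [gwaComp_eq] at hc
      obtain ⟨q, hq⟩ := hc
      have hmemR : (ψ ⟨x, ha⟩ : GWA k f) ∈ R := ⟨⟨x, ha⟩, rfl⟩
      rw [hq] at hmemR ⊢
      exact Vn_le_WS f R n ⟨q, (mem_JS f).2 hmemR, rfl⟩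
    · intro h0
      have : (⟨0, h0⟩ : ↥P) = 0 := Subtype.ext rfl
      rw [this, map_zero]
      exact (WS f R).zero_mem
    · intro x y hx' hy' ihx ihy hxy
      have hxP : x ∈ P := by rw [hPgr]; exact hx'
      have hyP : y ∈ P := by rw [hPgr]; exact hy'
      have : (⟨x + y, hxy⟩ : ↥P) = ⟨x, hxP⟩ + ⟨y, hyP⟩ := Subtype.ext rfl
      rw [this, map_add]
      exact (WS f R).add_mem (ihx hxP) (ihy hyP)
    · intro c x hx' ih hcx
      have hxP : x ∈ P := by rw [hPgr]; exact hx'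
      have : (⟨c • x, hcx⟩ : ↥P) = c • ⟨x, hxP⟩ := Subtype.ext rfl
      rw [this, map_smul]
      have hcoe : ((c • ψ ⟨x, hxP⟩ : ↥Q) : GWA k f) = (ψ ⟨x, hxP⟩ : GWA k f) * c.unop := rfl
      rw [hcoe]
      exact WS_mul_right f R (ih hxP) _
  intro m
  have h := key (↑m) (by rw [← hPgr]; exact m.2) m.2
  have : (⟨↑m, m.2⟩ : ↥P) = m := Subtype.ext rfl
  rwa [this] at h

end ImageWS

section VChain

variable (lam : k)

lemma vchain
    (hf : f ≠ 0)
    (R' Q' : Submodule (GWA k f)ᵐᵒᵖ (GWA k f)) (hRQ : R' ≤ Q')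
    (hRbot : ∀ n, JS f R' n ≠ ⊥) (hQbot : ∀ n, JS f Q' n ≠ ⊥)
    (hcx : ∀ n, ¬ (cX f n).IsRoot lam) (hcy : ∀ n, ¬ (cY f n).IsRoot lam)
    (n₀ : ℤ)
    (h1 : rootMultiplicity lam (genJ f Q' n₀) + 1 ≤ rootMultiplicity lam (genJ f R' n₀)) :
    ∀ n, rootMultiplicity lam (genJ f Q' n) + 1 ≤ rootMultiplicity lam (genJ f R' n) := by
  set vR : ℤ → ℕ := fun n => rootMultiplicity lam (genJ f R' n) with hvR
  set vQ : ℤ → ℕ := fun n => rootMultiplicity lam (genJ f Q' n) with hvQ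
  have hRne : ∀ n, genJ f R' n ≠ 0 := fun n => genJ_ne_zero f (hRbot n)
  have hQne : ∀ n, genJ f Q' n ≠ 0 := fun n => genJ_ne_zero f (hQbot n)
  have hvcx : ∀ n, rootMultiplicity lam (cX f n) = 0 :=
    fun n => Polynomial.rootMultiplicity_eq_zero (hcx n)
  have hvcy : ∀ n, rootMultiplicity lam (cY f n) = 0 :=
    fun n => Polynomial.rootMultiplicity_eq_zero (hcy n)
  have vmul : ∀ (a : Polynomial k) (n : ℤ) (S : Submodule (GWA k f)ᵐᵒᵖ (GWA k f)),
      ∀ hS : ∀ m, genJ f S m ≠ 0, ∀ c ∈ ({cX f n, cY f n} : Set (Polynomial k)),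
      True := fun _ _ _ _ _ _ => trivial
  -- step inequalities
  have s1 : ∀ n, vR (n + 1) ≤ vR n := by
    intro n
    have hd := genJ_dvd f (JS_step_up f (genJ_mem f R' n))
    have := rootMult_le_of_dvd hd
      (mul_ne_zero (hRne n) (cX_ne_zero f hf n)) lam
    rwa [Polynomial.rootMultiplicity_mul
      (mul_ne_zero (hRne n) (cX_ne_zero f hf n)), hvcx, add_zero] at this
  have s3 : ∀ n, vR n ≤ vR (n + 1) := by
    intro n
    have hmem := JS_step_down f (genJ_mem f R' (n + 1))
    rw [show n + 1 - 1 = n from by ring] at hmem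
    have hd := genJ_dvd f hmem
    have := rootMult_le_of_dvd hd
      (mul_ne_zero (hRne (n + 1)) (cY_ne_zero f hf (n + 1))) lam
    rwa [Polynomial.rootMultiplicity_mul
      (mul_ne_zero (hRne (n + 1)) (cY_ne_zero f hf (n + 1))), hvcy, add_zero] at this
  have s2 : ∀ n, vQ n ≤ vQ (n + 1) := by
    intro n
    have hmem := JS_step_down f (genJ_mem f Q' (n + 1))
    rw [show n + 1 - 1 = n from by ring] at hmem
    have hd := genJ_dvd f hmem
    have := rootMult_le_of_dvd hd
      (mul_ne_zero (hQne (n + 1)) (cY_ne_zero f hf (n + 1))) lam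
    rwa [Polynomial.rootMultiplicity_mul
      (mul_ne_zero (hQne (n + 1)) (cY_ne_zero f hf (n + 1))), hvcy, add_zero] at this
  have s4 : ∀ n, vQ (n + 1) ≤ vQ n := by
    intro n
    have hd := genJ_dvd f (JS_step_up f (genJ_mem f Q' n))
    have := rootMult_le_of_dvd hd
      (mul_ne_zero (hQne n) (cX_ne_zero f hf n)) lam
    rwa [Polynomial.rootMultiplicity_mul
      (mul_ne_zero (hQne n) (cX_ne_zero f hf n)), hvcx, add_zero] at this
  -- q | r, so vQ ≤ vR
  have hdvd : ∀ n, genJ f Q' n ∣ genJ f R' n := by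
    intro n
    exact genJ_dvd f (hRQ (genJ_mem f R' n))
  have hvQR : ∀ n, vQ n ≤ vR n := fun n =>
    rootMult_le_of_dvd (hdvd n) (hRne n) lam
  -- the difference is constant
  have hconst : ∀ n m, vR n - vQ n = vR m - vQ m := by
    apply const_of_step
    intro n
    have a1 := s1 n
    have a2 := s2 n
    have a3 := s3 n
    have a4 := s4 n
    have b1 := hvQR n
    have b2 := hvQR (n + 1)
    omega
  intro n
  have hcn := hconst n n₀
  have b1 := hvQR n
  have b2 := hvQR n₀
  have e1 : vR n = rootMultiplicity lam (genJ f R' n) := rfl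
  have e2 : vQ n = rootMultiplicity lam (genJ f Q' n) := rfl
  have e3 : vR n₀ = rootMultiplicity lam (genJ f R' n₀) := rfl
  have e4 : vQ n₀ = rootMultiplicity lam (genJ f Q' n₀) := rfl
  omega

end VChain

section NoBadRoot

lemma no_bad_root
    (hf : f ≠ 0)
    (P Q : Submodule (GWA k f)ᵐᵒᵖ (GWA k f))
    (hPgr : P = Submodule.span (GWA k f)ᵐᵒᵖ
      {m | m ∈ P ∧ ∃ n : ℤ, m ∈ gwaComp k f n})
    (ψ : ↥P →ₗ[(GWA k f)ᵐᵒᵖ] ↥Q)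
    (hψgr : IsGradedHom k f P Q ψ)
    (hmax : ∀ g : ↥P →ₗ[(GWA k f)ᵐᵒᵖ] ↥Q, IsGradedHom k f P Q g →
      ¬(Set.range (fun m : ↥P => (ψ m : GWA k f)) ⊂
        Set.range (fun m : ↥P => (g m : GWA k f))))
    (hRbot : ∀ n, JS f (LinearMap.range (Q.subtype.comp ψ)) n ≠ ⊥)
    (hQbot : ∀ n, JS f Q n ≠ ⊥)
    (lam : k)
    (hcx : ∀ n, ¬ (cX f n).IsRoot lam) (hcy : ∀ n, ¬ (cY f n).IsRoot lam)
    (n₀ : ℤ)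
    (h1 : rootMultiplicity lam (genJ f Q n₀) + 1
      ≤ rootMultiplicity lam (genJ f (LinearMap.range (Q.subtype.comp ψ)) n₀)) :
    False := by
  set R := LinearMap.range (Q.subtype.comp ψ) with hRdef
  have hRQ : R ≤ Q := by
    rintro a ⟨m, rfl⟩
    exact (ψ m).2
  have hkey := vchain f lam hf R Q hRQ hRbot hQbot hcx hcy n₀ h1
  have hdivn : ∀ n, (X - C lam) * genJ f Q n ∣ genJ f R n := by
    intro n
    obtain ⟨d, hd⟩ := genJ_dvd f (hRQ (genJ_mem f R n))
    have hRn := genJ_ne_zero f (hRbot n)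
    have hdne : d ≠ 0 := by
      intro h0
      rw [h0, mul_zero] at hd
      exact hRn hd
    have hQn : genJ f Q n ≠ 0 := genJ_ne_zero f (hQbot n)
    have hv : 1 ≤ rootMultiplicity lam d := by
      have hm := hkey n
      have := Polynomial.rootMultiplicity_mul (x := lam) (mul_ne_zero hQn hdne)
      rw [← hd] at this
      omega
    have hroot : (X - C lam) ∣ d :=
      Polynomial.dvd_iff_isRoot.2 ((Polynomial.rootMultiplicity_pos hdne).1 (by omega))
    obtain ⟨e, he⟩ := hroot
    exact ⟨e, by rw [hd, he]; ring⟩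
  -- existence of the divided element
  have hGex : ∀ m : ↥P, ∃ u : GWA k f, za f (X - C lam) * u = ↑(ψ m) ∧ u ∈ Q := by
    intro m
    obtain ⟨s, p, hJ, hz, heq⟩ := WS_rep f (image_le_WS f P Q hPgr ψ hψgr m)
    have hch : ∀ n, ∃ t, p n = (X - C lam) * t ∧ genJ f Q n ∣ t := by
      intro n
      obtain ⟨c, hc⟩ := genJ_dvd f (hJ n)
      obtain ⟨e, he⟩ := hdivn n
      exact ⟨genJ f Q n * e * c, by rw [hc, he]; ring, ⟨e * c, by ring⟩⟩
    choose t ht1 ht2 using hch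
    refine ⟨∑ n ∈ s, za f (t n) * gwaMon k f n, ?_, ?_⟩
    · rw [mul_sum_za, heq]
      exact Finset.sum_congr rfl fun n _ => by rw [← ht1 n]
    · exact Submodule.sum_mem _ fun n _ => (mem_JS f).1 (genJ_dvd_mem f (ht2 n))
  choose uG hG1 hG2 using hGex
  have huadd : ∀ m₁ m₂, uG (m₁ + m₂) = uG m₁ + uG m₂ := by
    intro m₁ m₂
    apply zla_cancel f lam
    rw [mul_add, hG1, hG1, hG1, map_add, Submodule.coe_add]
  have husmul : ∀ (c : (GWA k f)ᵐᵒᵖ) m, uG (c • m) = uG m * c.unop := by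
    intro c m
    apply zla_cancel f lam
    rw [← mul_assoc, hG1, hG1, map_smul]
    rfl
  let G : ↥P →ₗ[(GWA k f)ᵐᵒᵖ] ↥Q :=
    { toFun := fun m => ⟨uG m, hG2 m⟩
      map_add' := fun m₁ m₂ => Subtype.ext (huadd m₁ m₂)
      map_smul' := fun c m => Subtype.ext (husmul c m) }
  have hGcoe : ∀ m, (G m : GWA k f) = uG m := fun m => rfl
  have hGgr : IsGradedHom k f P Q G := by
    intro n m hm
    have hψm := hψgr n m hm
    rw [gwaComp_eq] at hψm
    obtain ⟨w, hw⟩ := hψm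
    have h := hG1 m
    rw [hw] at h
    obtain ⟨t0, ht0, _⟩ := div_single f lam h
    rw [gwaComp_eq]
    exact ⟨t0, by rw [hGcoe m, ht0]; rfl⟩
  -- range of ψ is contained in range of G
  have hψc : ∀ (m : ↥P) (n : ℤ), (m : GWA k f) ∈ gwaComp k f n →
      (ψ m : GWA k f) * za f ((X - C lam).comp (X - C (n : k)))
        = za f (X - C lam) * (ψ m : GWA k f) := by
    intro m n hm
    have h2 := hψgr n m hm
    rw [mem_comp_iff f] at h2
    obtain ⟨q, hq⟩ := h2
    rw [hq, left_mul_lam]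
  have hrange : Set.range (fun m : ↥P => (ψ m : GWA k f)) ⊆
      Set.range (fun m : ↥P => (G m : GWA k f)) := by
    rintro w ⟨m, rfl⟩
    obtain ⟨s, p, hJ, hz, heq⟩ :=
      WS_rep f (graded_le_WS f Set.Subset.rfl hPgr (↑m) m.2)
    set mn : ℤ → ↥P := fun n => ⟨za f (p n) * gwaMon k f n, (mem_JS f).1 (hJ n)⟩ with hmn
    have hmsum : m = ∑ n ∈ s, mn n := by
      apply Subtype.ext
      rw [AddSubmonoidClass.coe_finset_sum]
      exact heq
    have hmncomp : ∀ n, (mn n : GWA k f) ∈ gwaComp k f n := by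
      intro n
      rw [gwaComp_eq]
      exact ⟨p n, rfl⟩
    set bn : ℤ → (GWA k f)ᵐᵒᵖ :=
      fun n => MulOpposite.op (za f ((X - C lam).comp (X - C (n : k)))) with hbn
    have hbnc : ∀ n, ((bn n • mn n : ↥P) : GWA k f) = za f (X - C lam) * (mn n : GWA k f) := by
      intro n
      have e : ((bn n • mn n : ↥P) : GWA k f)
          = (za f (p n) * gwaMon k f n) * za f ((X - C lam).comp (X - C (n : k))) := rfl
      rw [e, left_mul_lam]
    have hm'P : za f (X - C lam) * (m : GWA k f) ∈ P := by
      rw [heq, mul_sum_za]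
      exact Submodule.sum_mem _ fun n _ => (mem_JS f).1 ((JS f P n).mul_mem_left _ (hJ n))
    have hsum2 : (⟨za f (X - C lam) * (m : GWA k f), hm'P⟩ : ↥P) = ∑ n ∈ s, bn n • mn n := by
      apply Subtype.ext
      rw [AddSubmonoidClass.coe_finset_sum]
      show za f (X - C lam) * (m : GWA k f) = _
      rw [heq, mul_sum_za]
      refine Finset.sum_congr rfl fun n _ => ?_
      rw [hbnc n]
      show za f ((X - C lam) * p n) * gwaMon k f n
        = za f (X - C lam) * (za f (p n) * gwaMon k f n)
      rw [za_mul, mul_assoc]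
    have hpsi : (ψ (⟨za f (X - C lam) * (m : GWA k f), hm'P⟩ : ↥P) : GWA k f)
        = za f (X - C lam) * (ψ m : GWA k f) := by
      rw [hsum2, map_sum, AddSubmonoidClass.coe_finset_sum]
      have e1 : ∀ n ∈ s, ((ψ (bn n • mn n) : ↥Q) : GWA k f)
          = za f (X - C lam) * (ψ (mn n) : GWA k f) := by
        intro n _
        rw [map_smul]
        show (ψ (mn n) : GWA k f) * (bn n).unop = _
        rw [hbn]
        exact hψc (mn n) n (hmncomp n)
      rw [Finset.sum_congr rfl e1, ← Finset.mul_sum]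
      congr 1
      rw [hmsum, map_sum, AddSubmonoidClass.coe_finset_sum]
    refine ⟨⟨za f (X - C lam) * (m : GWA k f), hm'P⟩, ?_⟩
    show (G _ : GWA k f) = (ψ m : GWA k f)
    rw [hGcoe]
    apply zla_cancel f lam
    rw [hG1, hpsi]
  -- strictness
  have hw0 : za f (genJ f R n₀) * gwaMon k f n₀ ∈ R := (mem_JS f).1 (genJ_mem f R n₀)
  obtain ⟨m₀, hm₀⟩ := hw0
  have hm₀' : (ψ m₀ : GWA k f) = za f (genJ f R n₀) * gwaMon k f n₀ := hm₀
  have h := hG1 m₀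
  rw [hm₀'] at h
  obtain ⟨t0, ht0, ht0e⟩ := div_single f lam h
  have hnotin : uG m₀ ∉ Set.range (fun m : ↥P => (ψ m : GWA k f)) := by
    rintro ⟨m₁, hm₁⟩
    have huR : uG m₀ ∈ R := ⟨m₁, hm₁⟩
    rw [ht0] at huR
    have htJ : t0 ∈ JS f R n₀ := huR
    obtain ⟨sP, hsP⟩ := genJ_dvd f htJ
    have ht0ne : t0 ≠ 0 := by
      intro h0
      rw [h0, mul_zero] at ht0e
      exact genJ_ne_zero f (hRbot n₀) ht0e.symm
    have hcontr : t0 * 1 = t0 * ((X - C lam) * sP) := by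
      conv_lhs => rw [mul_one, hsP, ← ht0e]
      ring
    have : (1 : Polynomial k) = (X - C lam) * sP := mul_left_cancel₀ ht0ne hcontr
    exact Polynomial.not_isUnit_X_sub_C lam (IsUnit.of_mul_eq_one _ this.symm)
  have hin : uG m₀ ∈ Set.range (fun m : ↥P => (G m : GWA k f)) := ⟨m₀, rfl⟩
  exact hmax G hGgr (lt_iff_le_not_ge.2
    ⟨hrange, fun hc => hnotin (hc hin)⟩)

end NoBadRoot

section MainGeneral

lemma main_general (α : k) (hfeval : ∀ c : k, f.eval c = c * (c + α)) (hf : f ≠ 0)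
    (P Q : Submodule (GWA k f)ᵐᵒᵖ (GWA k f))
    (hPne : P ≠ ⊥) (hQne : Q ≠ ⊥)
    (hPgr : P = Submodule.span (GWA k f)ᵐᵒᵖ
      {m | m ∈ P ∧ ∃ n : ℤ, m ∈ gwaComp k f n})
    (hQgr : Q = Submodule.span (GWA k f)ᵐᵒᵖ
      {m | m ∈ Q ∧ ∃ n : ℤ, m ∈ gwaComp k f n})
    (ψ : ↥P →ₗ[(GWA k f)ᵐᵒᵖ] ↥Q)
    (hψgr : IsGradedHom k f P Q ψ)
    (hψinj : Function.Injective ψ)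
    (hmax : ∀ g : ↥P →ₗ[(GWA k f)ᵐᵒᵖ] ↥Q,
      IsGradedHom k f P Q g →
      ¬(Set.range (fun m : ↥P => (ψ m : GWA k f)) ⊂
        Set.range (fun m : ↥P => (g m : GWA k f)))) :
    ∀ q : ↥Q, ∃ g : Polynomial k, g ≠ 0 ∧
      (∀ r : k, g.IsRoot r → ∃ n : ℤ, r = (n : k) ∨ r = (n : k) - α) ∧
      ∃ m : ↥P,
        (q : GWA k f) * aeval (gwaZ k f) g = (ψ m : GWA k f) := by
  set R : Submodule (GWA k f)ᵐᵒᵖ (GWA k f) := LinearMap.range (Q.subtype.comp ψ) with hRdef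
  have hRQ : R ≤ Q := by
    rintro a ⟨m, rfl⟩
    exact (ψ m).2
  -- all coefficient ideals of Q are nonzero
  have extract : ∀ (S : Submodule (GWA k f)ᵐᵒᵖ (GWA k f)) (a : GWA k f),
      a ∈ WS f S → a ≠ 0 → ∃ n, JS f S n ≠ ⊥ := by
    intro S a haW hane
    obtain ⟨s, p, hJ, hz, heq⟩ := WS_rep f haW
    obtain ⟨n1, hn1⟩ : ∃ n, p n ≠ 0 := by
      by_contra hno
      push_neg at hno
      apply hane
      rw [heq]
      exact Finset.sum_eq_zero fun n _ => by rw [hno n, za_zero, zero_mul]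
    refine ⟨n1, fun hbot => hn1 ?_⟩
    have := hJ n1
    rw [hbot] at this
    simpa using this
  have hQbot : ∀ n, JS f Q n ≠ ⊥ := by
    obtain ⟨a, haQ, hane⟩ := Submodule.exists_mem_ne_zero_of_ne_bot hQne
    obtain ⟨n1, h1⟩ := extract Q a (graded_le_WS f Set.Subset.rfl hQgr a haQ) hane
    exact JS_ne_bot_all f hf h1
  have hRbot : ∀ n, JS f R n ≠ ⊥ := by
    obtain ⟨a, haP, hane⟩ := Submodule.exists_mem_ne_zero_of_ne_bot hPne
    have hwne : (ψ ⟨a, haP⟩ : GWA k f) ≠ 0 := by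
      intro h0
      apply hane
      have h1 : ψ ⟨a, haP⟩ = 0 := by
        apply Subtype.ext
        simpa using h0
      have h2 : (⟨a, haP⟩ : ↥P) = 0 := hψinj (by rw [h1, map_zero])
      simpa using congrArg (Subtype.val) h2
    obtain ⟨n1, h1⟩ := extract R _ (image_le_WS f P Q hPgr ψ hψgr ⟨a, haP⟩) hwne
    exact JS_ne_bot_all f hf h1
  -- the gap polynomials
  have hdvdQR : ∀ n, genJ f Q n ∣ genJ f R n := fun n => genJ_dvd f (hRQ (genJ_mem f R n))
  choose dn hdn using hdvdQR
  have hRnz : ∀ n, genJ f R n ≠ 0 := fun n => genJ_ne_zero f (hRbot n)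
  have hQnz : ∀ n, genJ f Q n ≠ 0 := fun n => genJ_ne_zero f (hQbot n)
  have hdnz : ∀ n, dn n ≠ 0 := by
    intro n h0
    apply hRnz n
    rw [hdn n, h0, mul_zero]
  -- all roots of the gap polynomials are integral or integral minus α
  have hgood : ∀ (n : ℤ) (r : k), (dn n).IsRoot r → ∃ j : ℤ, r = (j : k) ∨ r = (j : k) - α := by
    intro n₀ r hroot
    by_contra hbadex
    push_neg at hbadex
    have hbad : ∀ j : ℤ, r ≠ (j : k) ∧ r ≠ (j : k) - α := hbadex
    have hFeval : ∀ c : k, c ≠ 0 → c + α ≠ 0 → ∀ b : k, ¬ (f.comp (X + C b)).IsRoot (c - b) := by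
      intro c hc hca b hr
      rw [Polynomial.IsRoot, Polynomial.eval_comp] at hr
      simp only [eval_add, eval_X, eval_C] at hr
      rw [show c - b + b = c by ring, hfeval c] at hr
      rcases mul_eq_zero.1 hr with h | h
      · exact hc h
      · exact hca h
    have hcx : ∀ n, ¬ (cX f n).IsRoot r := by
      intro n hr
      rw [cX] at hr
      split at hr
      · simpa using hr
      · have hc1 : r + (n : k) ≠ 0 := by
          intro h0
          exact (hbad (-n)).1 (by push_cast; linear_combination h0)
        have hc2 : r + (n : k) + α ≠ 0 := by
          intro h0
          exact (hbad (-n)).2 (by push_cast; linear_combination h0)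
        exact hFeval (r + (n : k)) hc1 hc2 (n : k)
          (by rw [show r + (n:k) - (n:k) = r by ring]; exact hr)
    have hcy : ∀ n, ¬ (cY f n).IsRoot r := by
      intro n hr
      rw [cY] at hr
      split at hr
      · simpa using hr
      · have hc1 : r + (n : k) - 1 ≠ 0 := by
          intro h0
          exact (hbad (1 - n)).1 (by push_cast; linear_combination h0)
        have hc2 : r + (n : k) - 1 + α ≠ 0 := by
          intro h0
          exact (hbad (1 - n)).2 (by push_cast; linear_combination h0)
        exact hFeval (r + (n : k) - 1) hc1 hc2 ((n : k) - 1)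
          (by rw [show r + (n:k) - 1 - ((n:k) - 1) = r by ring]; exact hr)
    have h1 : rootMultiplicity r (genJ f Q n₀) + 1 ≤ rootMultiplicity r (genJ f R n₀) := by
      have hv := Polynomial.rootMultiplicity_mul (x := r)
        (show genJ f Q n₀ * dn n₀ ≠ 0 from mul_ne_zero (hQnz n₀) (hdnz n₀))
      rw [← hdn n₀] at hv
      have hpos : 0 < rootMultiplicity r (dn n₀) :=
        (Polynomial.rootMultiplicity_pos (hdnz n₀)).2 hroot
      omega
    exact no_bad_root f hf P Q hPgr ψ hψgr hmax hRbot hQbot r hcx hcy n₀ h1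
  -- assemble the answer for each q
  intro q
  obtain ⟨s, p, hJ, hz, heq⟩ := WS_rep f (graded_le_WS f Set.Subset.rfl hQgr (↑q) q.2)
  refine ⟨∏ n ∈ s, (dn n).comp (X - C (n : k)), ?_, ?_, ?_⟩
  · -- nonzero
    refine Finset.prod_ne_zero_iff.2 fun n _ => ?_
    intro h0
    apply hdnz n
    have h1 : ((dn n).comp (X - C (n : k))).comp (X + C (n : k)) = dn n :=
      comp_linear_cancel _ _
    rw [h0, zero_comp] at h1
    exact h1.symm
  · -- roots
    intro r hr
    rw [Polynomial.IsRoot, Polynomial.eval_prod] at hr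
    obtain ⟨n, hns, hn0⟩ := Finset.prod_eq_zero_iff.1 hr
    rw [Polynomial.eval_comp] at hn0
    simp only [eval_sub, eval_X, eval_C] at hn0
    obtain ⟨j, hj⟩ := hgood n (r - (n : k)) hn0
    rcases hj with hj | hj
    · exact ⟨j + n, Or.inl (by push_cast; linear_combination hj)⟩
    · exact ⟨j + n, Or.inr (by push_cast; linear_combination hj)⟩
  · -- the membership
    have hterm : ∀ n ∈ s,
        za f (p n * (∏ j ∈ s, (dn j).comp (X - C (j : k))).comp (X + C (n : k)))
          * gwaMon k f n ∈ R := by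
      intro n hns
      apply (mem_JS f).1
      apply genJ_dvd_mem f
      rw [hdn n]
      have hd1 : genJ f Q n ∣ p n := genJ_dvd f (hJ n)
      have hd2 : dn n ∣ (∏ j ∈ s, (dn j).comp (X - C (j : k))).comp (X + C (n : k)) := by
        rw [Polynomial.prod_comp]
        have h5 : dn n = ((dn n).comp (X - C (n : k))).comp (X + C (n : k)) :=
          (comp_linear_cancel _ _).symm
        rw [h5]
        exact Finset.dvd_prod_of_mem _ hns
      exact mul_dvd_mul hd1 hd2
    have hmem : (q : GWA k f) * za f (∏ n ∈ s, (dn n).comp (X - C (n : k))) ∈ R := by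
      rw [heq, Finset.sum_mul]
      refine Submodule.sum_mem _ fun n hns => ?_
      rw [mul_assoc, mon_za, ← mul_assoc, ← za_mul]
      exact hterm n hns
    obtain ⟨m, hm⟩ := hmem
    exact ⟨m, hm.symm⟩

end MainGeneral

end GWAP

set_option maxHeartbeats 1000000 in
/-- Let `P` and `Q` be finitely generated graded rank one projective
`A(f)`-modules embedded in `Q_gr(A(f))` (realized as nonzero graded right ideals), and
let `ψ : P → Q` be a maximal embedding, i.e. an injective (graded) homomorphism such
that no (graded) homomorphism `g : P → Q` has image strictly containing `ψ(P)`.  Then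
the finite-length module `Q/ψ(P)` is supported, as a left `k[z]`-module, only at points
of `ℤ ∪ (ℤ − α)`: every element of `Q` is carried into `ψ(P)` by (the right action of) a
nonzero polynomial `g(z)` all of whose roots lie in `ℤ ∪ (ℤ − α)`. -/
theorem maximal_embedding_cokernel_support
    (k : Type) [Field k] [IsAlgClosed k] [CharZero k] (α : k)
    (P Q : Submodule (GWA k (X * (X + C α)))ᵐᵒᵖ (GWA k (X * (X + C α))))
    (hPne : P ≠ ⊥) (hQne : Q ≠ ⊥) (hPfg : P.FG) (hQfg : Q.FG)
    (hPgr : P = Submodule.span (GWA k (X * (X + C α)))ᵐᵒᵖ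
      {m | m ∈ P ∧ ∃ n : ℤ, m ∈ gwaComp k (X * (X + C α)) n})
    (hQgr : Q = Submodule.span (GWA k (X * (X + C α)))ᵐᵒᵖ
      {m | m ∈ Q ∧ ∃ n : ℤ, m ∈ gwaComp k (X * (X + C α)) n})
    (hPproj : Module.Projective (GWA k (X * (X + C α)))ᵐᵒᵖ ↥P)
    (hQproj : Module.Projective (GWA k (X * (X + C α)))ᵐᵒᵖ ↥Q)
    (ψ : ↥P →ₗ[(GWA k (X * (X + C α)))ᵐᵒᵖ] ↥Q)
    (hψgr : IsGradedHom k (X * (X + C α)) P Q ψ)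
    (hψinj : Function.Injective ψ)
    (hmax : ∀ g : ↥P →ₗ[(GWA k (X * (X + C α)))ᵐᵒᵖ] ↥Q,
      IsGradedHom k (X * (X + C α)) P Q g →
      ¬(Set.range (fun m : ↥P => (ψ m : GWA k (X * (X + C α)))) ⊂
        Set.range (fun m : ↥P => (g m : GWA k (X * (X + C α)))))) :
    ∀ q : ↥Q, ∃ g : Polynomial k, g ≠ 0 ∧
      (∀ r : k, g.IsRoot r → ∃ n : ℤ, r = (n : k) ∨ r = (n : k) - α) ∧
      ∃ m : ↥P,
        (q : GWA k (X * (X + C α))) * aeval (gwaZ k (X * (X + C α))) g =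
          (ψ m : GWA k (X * (X + C α))) := by
  exact GWAP.main_general (X * (X + C α)) α
    (by intro c; simp [eval_mul, eval_add, eval_X, eval_C])
    (mul_ne_zero Polynomial.X_ne_zero (Polynomial.X_add_C_ne_zero α))
    P Q hPne hQne hPgr hQgr ψ hψgr hψinj hmax


end
end
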